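/- arXiv:1505.02655 — 9 statements merged into one kernel-verified Lean document; each statement's English description precedes it below -/
import Mathlib

section
/- Let G be a stochastic matrix indexed by a finite set Q with a single bottom strongly connected component, and let y_min be its smallest nonzero entry. For a vector v, define |v|_diff = max over pairs p1, p2 in Q of |v[p1] - v[p2]|. Let r be any real vector indexed by Q and define f(n) = Σ_{i=0}^{n-1} G^i r. Then for all n, |f(n)|_diff ≤ C·|r|_diff, where C = 10·|Q| / y_min^{|Q|}. -/
open Finset Matrix

/-- Bounded reachability: `Rreach G s k p` means `s` is reachable from `p`
in at most `k` steps in the graph of `G`. -/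
def Rreach {Q : Type*} (G : Matrix Q Q ℝ) (s : Q) : ℕ → Q → Prop
  | 0 => fun p => p = s
  | k + 1 => fun p => p = s ∨ ∃ q, 0 < G p q ∧ Rreach G s k q

lemma Rreach_self {Q : Type*} (G : Matrix Q Q ℝ) (s : Q) (k : ℕ) : Rreach G s k s := by
  cases k with
  | zero => rfl
  | succ k => exact Or.inl rfl

lemma Rreach_mono {Q : Type*} {G : Matrix Q Q ℝ} {s : Q} :
    ∀ {k : ℕ} {p : Q}, Rreach G s k p → Rreach G s (k + 1) p := by
  intro k
  induction k with
  | zero => intro p h; exact Or.inl h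
  | succ k ih =>
    intro p h
    rcases h with h | ⟨q, hq, hR⟩
    · exact Or.inl h
    · exact Or.inr ⟨q, hq, ih hR⟩

lemma Rreach_le {Q : Type*} {G : Matrix Q Q ℝ} {s : Q} {k m : ℕ} (h : k ≤ m) {p : Q}
    (hk : Rreach G s k p) : Rreach G s m p := by
  induction m, h using Nat.le_induction with
  | base => exact hk
  | succ m hm ih => exact Rreach_mono ih

lemma Rreach_exists {Q : Type*} {G : Matrix Q Q ℝ} {s : Q} {p : Q}
    (h : Relation.ReflTransGen (fun a b => 0 < G a b) p s) : ∃ k, Rreach G s k p := by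
  induction h using Relation.ReflTransGen.head_induction_on with
  | refl => exact ⟨0, rfl⟩
  | head hab _ ih =>
    obtain ⟨k, hk⟩ := ih
    exact ⟨k + 1, Or.inr ⟨_, hab, hk⟩⟩

lemma Rreach_card {Q : Type*} [Fintype Q] {G : Matrix Q Q ℝ} {s : Q}
    (h : ∀ p, ∃ k, Rreach G s k p) (p : Q) : Rreach G s (Fintype.card Q) p := by
  classical
  by_cases hstab : ∃ k, k < Fintype.card Q ∧ ∀ q, Rreach G s (k + 1) q → Rreach G s k q
  · obtain ⟨k, hkc, hst⟩ := hstab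
    have hdown : ∀ (j : ℕ) (q : Q), Rreach G s (k + j) q → Rreach G s k q := by
      intro j
      induction j with
      | zero => intro q hq; exact hq
      | succ j ih =>
        intro q hq
        have hq' : q = s ∨ ∃ q', 0 < G q q' ∧ Rreach G s (k + j) q' := hq
        rcases hq' with heq | ⟨q', hq', hR⟩
        · exact heq ▸ Rreach_self G s k
        · exact hst q (Or.inr ⟨q', hq', ih q' hR⟩)
    obtain ⟨j, hj⟩ := h p
    exact Rreach_le hkc.le (hdown j p (Rreach_le (Nat.le_add_left j k) hj))
  · exfalso
    push_neg at hstab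
    have hgrow : ∀ k, k ≤ Fintype.card Q →
        k + 1 ≤ (univ.filter (fun q => Rreach G s k q)).card := by
      intro k
      induction k with
      | zero =>
        intro _
        have hsmem : s ∈ univ.filter (fun q => Rreach G s 0 q) := by
          simp [Rreach_self G s 0]
        exact Finset.card_pos.mpr ⟨s, hsmem⟩
      | succ k ih =>
        intro hk
        obtain ⟨q, hq1, hq2⟩ := hstab k (lt_of_lt_of_le (Nat.lt_succ_self k) hk)
        have hss : univ.filter (fun q => Rreach G s k q) ⊂
            univ.filter (fun q => Rreach G s (k + 1) q) := by
          constructor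
          · intro x hx
            simp only [mem_filter, mem_univ, true_and] at hx ⊢
            exact Rreach_mono hx
          · intro hsub
            have hqmem : q ∈ univ.filter (fun q => Rreach G s (k + 1) q) := by
              simp [hq1]
            have := hsub hqmem
            simp only [mem_filter, mem_univ, true_and] at this
            exact hq2 this
        have h1 := Finset.card_lt_card hss
        have h2 := ih (le_of_lt (Nat.lt_of_succ_le hk))
        omega
    have h1 := hgrow (Fintype.card Q) le_rfl
    have h2 := Finset.card_le_univ (univ.filter (fun q => Rreach G s (Fintype.card Q) q))
    omega

section TabooMatrix

variable {Q : Type*} [Fintype Q] [DecidableEq Q]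

/-- The diagonal matrix killing coordinate `s`. -/
noncomputable def Em (s : Q) : Matrix Q Q ℝ :=
  Matrix.diagonal (fun p => if p = s then 0 else 1)

/-- The taboo matrix: `Tm G s i p q = Pr_p(X_i = q, X_j ≠ s for all j ≤ i)`. -/
noncomputable def Tm (G : Matrix Q Q ℝ) (s : Q) (i : ℕ) : Matrix Q Q ℝ :=
  Em s * (G * Em s) ^ i

lemma Em_mulVec (s : Q) (v : Q → ℝ) (p : Q) :
    ((Em s) *ᵥ v) p = if p = s then 0 else v p := by
  rw [Em, Matrix.mulVec_diagonal]
  by_cases hp : p = s <;> simp [hp]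

lemma Em_nonneg (s : Q) (p q : Q) : 0 ≤ Em s p q := by
  rw [Em, Matrix.diagonal_apply]
  split_ifs <;> norm_num

lemma Em_mul_Em (s : Q) : Em s * Em s = Em s := by
  ext p q
  simp only [Em, Matrix.diagonal_mul_diagonal, Matrix.diagonal_apply]
  by_cases hp : p = q
  · subst hp
    by_cases hps : p = s <;> simp [hps]
  · simp [hp]

lemma Tm_zero (G : Matrix Q Q ℝ) (s : Q) : Tm G s 0 = Em s := by
  simp [Tm]

lemma Tm_succ (G : Matrix Q Q ℝ) (s : Q) (i : ℕ) :
    Tm G s (i + 1) = Em s * G * Tm G s i := by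
  simp only [Tm, pow_succ', mul_assoc]

lemma Tm_succ' (G : Matrix Q Q ℝ) (s : Q) (i : ℕ) :
    Tm G s (i + 1) = Tm G s i * (G * Em s) := by
  simp only [Tm, pow_succ, mul_assoc]

lemma Tm_mul_Em (G : Matrix Q Q ℝ) (s : Q) (i : ℕ) : Tm G s i * Em s = Tm G s i := by
  induction i with
  | zero => simpa [Tm_zero] using Em_mul_Em s
  | succ i ih =>
    rw [Tm_succ', mul_assoc, mul_assoc, Em_mul_Em]

lemma Tm_add (G : Matrix Q Q ℝ) (s : Q) (i j : ℕ) :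
    Tm G s (i + j) = Tm G s i * Tm G s j := by
  have h1 : Tm G s (i + j) = Tm G s i * (G * Em s) ^ j := by
    simp only [Tm, pow_add, mul_assoc]
  rw [h1, ← Tm_mul_Em G s i, mul_assoc, ← Tm]
  rw [Tm_mul_Em]

lemma Tm_nonneg (G : Matrix Q Q ℝ) (s : Q) (hG : ∀ p q, 0 ≤ G p q) (i : ℕ) (p q : Q) :
    0 ≤ Tm G s i p q := by
  induction i generalizing p q with
  | zero =>
    rw [Tm_zero]; exact Em_nonneg s p q
  | succ i ih =>
    rw [Tm_succ', Matrix.mul_apply]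
    refine Finset.sum_nonneg fun a _ => mul_nonneg (ih p a) ?_
    rw [Matrix.mul_apply]
    exact Finset.sum_nonneg fun b _ => mul_nonneg (hG a b) (Em_nonneg s b q)

lemma Tm_mulVec_s (G : Matrix Q Q ℝ) (s : Q) (i : ℕ) (v : Q → ℝ) :
    (Tm G s i *ᵥ v) s = 0 := by
  rw [Tm, ← Matrix.mulVec_mulVec, Em_mulVec]
  simp

lemma Tm_mulVec_succ (G : Matrix Q Q ℝ) (s : Q) (i : ℕ) (v : Q → ℝ) {p : Q} (hp : p ≠ s) :
    (Tm G s (i + 1) *ᵥ v) p = (G *ᵥ (Tm G s i *ᵥ v)) p := by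
  rw [Tm_succ, mul_assoc, ← Matrix.mulVec_mulVec, Em_mulVec, if_neg hp,
    ← Matrix.mulVec_mulVec]

lemma mulVec_apply' {Q : Type*} [Fintype Q] (A : Matrix Q Q ℝ) (v : Q → ℝ) (p : Q) :
    (A *ᵥ v) p = ∑ q, A p q * v q := rfl

lemma mulVec_mono' {Q : Type*} [Fintype Q] {A : Matrix Q Q ℝ} (hA : ∀ p q, 0 ≤ A p q)
    {v v' : Q → ℝ} (h : ∀ q, v q ≤ v' q) (p : Q) : (A *ᵥ v) p ≤ (A *ᵥ v') p := by
  rw [mulVec_apply', mulVec_apply']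
  exact Finset.sum_le_sum fun a _ => mul_le_mul_of_nonneg_left (h a) (hA p a)

end TabooMatrix

/-- The diff-seminorm of a vector `v : Q → ℝ`: `|v|_diff = max_{p₁,p₂} |v p₁ - v p₂|`. -/
noncomputable def diffnorm {Q : Type*} [Fintype Q] (v : Q → ℝ) : ℝ :=
  ⨆ pq : Q × Q, |v pq.1 - v pq.2|

/-- Let `G` be a stochastic matrix over a finite set `Q` with a single
BSCC (equivalently: some state `s` is reachable in the graph of `G` from every state),
with smallest nonzero entry `ymin`.  Then for every `n` and every vector `r`,
`|Σ_{i<n} Gⁱ r|_diff ≤ C · |r|_diff` where `C = 10·|Q| / ymin^|Q|`. -/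
theorem stmt2 {Q : Type*} [Fintype Q] [Nonempty Q] [DecidableEq Q]
    (G : Matrix Q Q ℝ) (ymin : ℝ) (r : Q → ℝ)
    (hnonneg : ∀ q q', 0 ≤ G q q')
    (hrow : ∀ q, ∑ q', G q q' = 1)
    (hy : 0 < ymin)
    (hymin : ∀ q q', G q q' ≠ 0 → ymin ≤ G q q')
    (hyatt : ∃ q q', G q q' = ymin)
    (hBSCC : ∃ s : Q, ∀ p : Q, Relation.ReflTransGen (fun a b => 0 < G a b) p s) :
    ∀ n : ℕ,
      diffnorm (∑ i ∈ Finset.range n, (G ^ i).mulVec r) ≤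
        (10 * Fintype.card Q / ymin ^ Fintype.card Q) * diffnorm r := by
  classical
  obtain ⟨s, hs⟩ := hBSCC
  have hQne : (univ : Finset Q).Nonempty := univ_nonempty
  -- `ymin ≤ 1`
  have hy1 : ymin ≤ 1 := by
    obtain ⟨q, q', hqq⟩ := hyatt
    have h1 : G q q' ≤ ∑ q'', G q q'' :=
      Finset.single_le_sum (fun i _ => hnonneg q i) (mem_univ q')
    rw [hrow q, hqq] at h1
    exact h1
  set c : ℕ := Fintype.card Q with hc
  have hc0 : 0 < c := Fintype.card_pos
  set β : ℝ := ymin ^ c with hβdef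
  have hβ0 : 0 < β := pow_pos hy c
  have hβ1 : β ≤ 1 := pow_le_one₀ hy.le hy1
  -- diffnorm basics
  have hdn_le : ∀ (p1 p2 : Q), |r p1 - r p2| ≤ diffnorm r := by
    intro p1 p2
    unfold diffnorm
    exact le_ciSup (f := fun pq : Q × Q => |r pq.1 - r pq.2|)
      (Set.Finite.bddAbove (Set.finite_range _)) (p1, p2)
  set D : ℝ := diffnorm r with hD
  have hD0 : 0 ≤ D := le_trans (abs_nonneg _) (hdn_le s s)
  -- shift r to be nonnegative
  obtain ⟨qm, -, hqm⟩ := Finset.exists_min_image univ r hQne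
  set r0 : Q → ℝ := fun q => r q - r qm with hr0def
  have hr0_nn : ∀ q, 0 ≤ r0 q := by
    intro q
    have := hqm q (mem_univ q)
    simp only [hr0def]
    linarith
  have hr0_le : ∀ q, r0 q ≤ D := by
    intro q
    have h := hdn_le q qm
    have h2 : r q - r qm ≤ |r q - r qm| := le_abs_self _
    simp only [hr0def]
    linarith
  -- abbreviations
  set t : ℕ → Q → ℝ := fun i => Tm G s i *ᵥ (fun _ => (1 : ℝ)) with htdef
  set w : ℕ → Q → ℝ := fun i => Tm G s i *ᵥ r0 with hwdef
  set u : ℕ → Q → ℝ := fun j => (G ^ j) *ᵥ r0 with hudef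
  set fv : ℕ → Q → ℝ := fun n p => ∑ i ∈ Finset.range n, u i p with hfvdef
  -- row sums of powers
  have hpowrow : ∀ (i : ℕ) (p : Q), ∑ q, (G ^ i) p q = 1 := by
    intro i
    induction i with
    | zero => intro p; simp [Matrix.one_apply]
    | succ i ih =>
      intro p
      rw [pow_succ]
      calc ∑ q, (G ^ i * G) p q = ∑ q, ∑ a, (G ^ i) p a * G a q := by
            simp [Matrix.mul_apply]
        _ = ∑ a, ∑ q, (G ^ i) p a * G a q := Finset.sum_comm
        _ = ∑ a, (G ^ i) p a * ∑ q, G a q := by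
            simp [Finset.mul_sum]
        _ = ∑ a, (G ^ i) p a := by simp [hrow]
        _ = 1 := ih p
  have hpow_nn : ∀ (i : ℕ) (p q : Q), 0 ≤ (G ^ i) p q := by
    intro i
    induction i with
    | zero =>
      intro p q
      rw [pow_zero, Matrix.one_apply]
      split_ifs <;> norm_num
    | succ i ih =>
      intro p q
      rw [pow_succ, Matrix.mul_apply]
      exact Finset.sum_nonneg fun a _ => mul_nonneg (ih p a) (hnonneg a q)
  -- t basics
  have htval : ∀ i p, t i p = ∑ q, Tm G s i p q := by
    intro i p
    simp only [htdef]
    rw [mulVec_apply']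
    simp
  have ht_nn : ∀ i p, 0 ≤ t i p := by
    intro i p
    rw [htval]
    exact Finset.sum_nonneg fun q _ => Tm_nonneg G s hnonneg i p q
  have hts : ∀ i, t i s = 0 := fun i => Tm_mulVec_s G s i _
  have hws : ∀ i, w i s = 0 := fun i => Tm_mulVec_s G s i _
  have hx1 : ∀ q, ((G * Em s) *ᵥ (fun _ => (1 : ℝ))) q ≤ 1 := by
    intro q
    rw [← Matrix.mulVec_mulVec, mulVec_apply']
    have hEm1 : ∀ a, ((Em s) *ᵥ (fun _ => (1 : ℝ))) a ≤ 1 := by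
      intro a
      rw [Em_mulVec]
      split_ifs <;> norm_num
    calc ∑ a, G q a * ((Em s) *ᵥ (fun _ => (1:ℝ))) a ≤ ∑ a, G q a * 1 :=
          Finset.sum_le_sum fun a _ => mul_le_mul_of_nonneg_left (hEm1 a) (hnonneg q a)
      _ = 1 := by simp [hrow]
  have htmono : ∀ i p, t (i + 1) p ≤ t i p := by
    intro i p
    have h1 : t (i + 1) p = (Tm G s i *ᵥ ((G * Em s) *ᵥ (fun _ => (1:ℝ)))) p := by
      simp only [htdef, Tm_succ', Matrix.mulVec_mulVec]
    rw [h1]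
    simp only [htdef]
    exact mulVec_mono' (Tm_nonneg G s hnonneg i) hx1 p
  have ht1 : ∀ i p, t i p ≤ 1 := by
    intro i
    induction i with
    | zero =>
      intro p
      simp only [htdef, Tm_zero]
      rw [Em_mulVec]
      split_ifs <;> norm_num
    | succ i ih => exact fun p => le_trans (htmono i p) (ih p)
  -- hitting estimate
  have hPk : ∀ (k : ℕ) (q : Q), Rreach G s k q → t k q ≤ 1 - ymin ^ k := by
    intro k
    induction k with
    | zero =>
      intro q hq
      have hq' : q = s := hq
      subst hq'
      rw [hts 0]
      simp
    | succ k ih =>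
      intro q hq
      by_cases hqs : q = s
      · subst hqs
        rw [hts]
        have hp1 : ymin ^ (k + 1) ≤ 1 := pow_le_one₀ hy.le hy1
        linarith
      · have hq' : q = s ∨ ∃ q', 0 < G q q' ∧ Rreach G s k q' := hq
        rcases hq' with heq | ⟨q', hGq', hRq'⟩
        · exact absurd heq hqs
        have hstep : t (k + 1) q = ∑ a, G q a * t k a := by
          simp only [htdef]
          rw [Tm_mulVec_succ G s k _ hqs, mulVec_apply']
        have hsplit := Finset.sum_erase_add univ (fun a => G q a * t k a) (mem_univ q')
        have hb1 : ∑ a ∈ univ.erase q', G q a * t k a ≤ ∑ a ∈ univ.erase q', G q a := by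
          refine Finset.sum_le_sum fun a _ => ?_
          have h1 := ht1 k a
          have h2 := hnonneg q a
          nlinarith
        have hb2 : G q q' * t k q' ≤ G q q' * (1 - ymin ^ k) :=
          mul_le_mul_of_nonneg_left (ih q' hRq') (hnonneg q q')
        have hb2' : G q q' * (1 - ymin ^ k) = G q q' - G q q' * ymin ^ k := by ring
        have he : ∑ a ∈ univ.erase q', G q a = 1 - G q q' := by
          have h3 := Finset.sum_erase_add univ (fun a => G q a) (mem_univ q')
          have h4 := hrow q
          beta_reduce at h3
          linarith
        have hyq : ymin ≤ G q q' := hymin q q' (ne_of_gt hGq')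
        have hpk_nn : 0 ≤ ymin ^ k := pow_nonneg hy.le k
        have hlast : ymin ^ (k + 1) ≤ G q q' * ymin ^ k := by
          rw [pow_succ']
          exact mul_le_mul_of_nonneg_right hyq hpk_nn
        rw [hstep]
        beta_reduce at hsplit
        linarith
  have hthit : ∀ q, t c q ≤ 1 - β := fun q =>
    hPk c q (Rreach_card (fun p => Rreach_exists (hs p)) q)
  have htdecay : ∀ i p, t (i + c) p ≤ (1 - β) * t i p := by
    intro i p
    have h1 : t (i + c) p = (Tm G s i *ᵥ t c) p := by
      simp only [htdef, Tm_add, Matrix.mulVec_mulVec]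
    rw [h1]
    calc (Tm G s i *ᵥ t c) p ≤ (Tm G s i *ᵥ (fun _ => 1 - β)) p :=
          mulVec_mono' (Tm_nonneg G s hnonneg i) hthit p
      _ = (1 - β) * t i p := by
          rw [mulVec_apply', ← Finset.sum_mul, htval]
          ring
  have hsum_t : ∀ (n : ℕ) (p : Q), ∑ i ∈ Finset.range n, t i p ≤ c / β := by
    intro n
    induction n using Nat.strong_induction_on with
    | _ n ih =>
      intro p
      by_cases hn : n ≤ c
      · have h1 : ∑ i ∈ range n, t i p ≤ ∑ i ∈ range n, (1 : ℝ) :=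
          Finset.sum_le_sum fun i _ => ht1 i p
        simp only [Finset.sum_const, card_range, nsmul_eq_mul, mul_one] at h1
        have h2 : (n : ℝ) ≤ (c : ℝ) := Nat.cast_le.mpr hn
        have h3 : (c : ℝ) ≤ (c : ℝ) / β := by
          rw [le_div_iff₀ hβ0]
          nlinarith [Nat.cast_nonneg (α := ℝ) c]
        linarith
      · push_neg at hn
        have hn2 : n = c + (n - c) := by omega
        rw [hn2, Finset.sum_range_add]
        have h1 : ∑ i ∈ range c, t i p ≤ (c : ℝ) := by
          calc ∑ i ∈ range c, t i p ≤ ∑ i ∈ range c, (1 : ℝ) :=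
                Finset.sum_le_sum fun i _ => ht1 i p
            _ = (c : ℝ) := by simp
        have h2 : ∑ i ∈ range (n - c), t (c + i) p
            ≤ (1 - β) * ∑ i ∈ range (n - c), t i p := by
          rw [Finset.mul_sum]
          refine Finset.sum_le_sum fun i _ => ?_
          rw [add_comm]
          exact htdecay i p
        have h3 := ih (n - c) (by omega) p
        have h4 : (0:ℝ) ≤ ∑ i ∈ range (n - c), t i p :=
          Finset.sum_nonneg fun i _ => ht_nn i p
        have hβ1' : (0:ℝ) ≤ 1 - β := by linarith
        have h5 : (1 - β) * ∑ i ∈ range (n - c), t i p ≤ (1 - β) * ((c:ℝ) / β) :=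
          mul_le_mul_of_nonneg_left h3 hβ1'
        have h6 : (c : ℝ) + (1 - β) * ((c:ℝ) / β) = (c:ℝ) / β := by
          field_simp
          ring
        linarith
  -- bounds on u and w
  have hu_bd : ∀ (j : ℕ) (q : Q), 0 ≤ u j q ∧ u j q ≤ D := by
    intro j
    induction j with
    | zero =>
      intro q
      simp only [hudef, pow_zero, Matrix.one_mulVec]
      exact ⟨hr0_nn q, hr0_le q⟩
    | succ j ih =>
      intro q
      have hstep : u (j + 1) q = ∑ a, G q a * u j a := by
        simp only [hudef, pow_succ']
        rw [← Matrix.mulVec_mulVec, mulVec_apply']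
      constructor
      · rw [hstep]
        exact Finset.sum_nonneg fun a _ => mul_nonneg (hnonneg q a) (ih a).1
      · rw [hstep]
        calc ∑ a, G q a * u j a ≤ ∑ a, G q a * D :=
              Finset.sum_le_sum fun a _ => mul_le_mul_of_nonneg_left (ih a).2 (hnonneg q a)
          _ = D := by rw [← Finset.sum_mul, hrow, one_mul]
  have hw_bd : ∀ (i : ℕ) (p : Q), 0 ≤ w i p ∧ w i p ≤ D * t i p := by
    intro i p
    have hwval : w i p = ∑ q, Tm G s i p q * r0 q := by
      simp only [hwdef]
      rw [mulVec_apply']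
    constructor
    · rw [hwval]
      exact Finset.sum_nonneg fun q _ =>
        mul_nonneg (Tm_nonneg G s hnonneg i p q) (hr0_nn q)
    · rw [hwval]
      calc ∑ q, Tm G s i p q * r0 q ≤ ∑ q, Tm G s i p q * D :=
            Finset.sum_le_sum fun q _ =>
              mul_le_mul_of_nonneg_left (hr0_le q) (Tm_nonneg G s hnonneg i p q)
        _ = (∑ q, Tm G s i p q) * D := by rw [Finset.sum_mul]
        _ = D * t i p := by rw [← htval]; ring
  -- the key identity
  have husucc : ∀ (j : ℕ) (q : Q), u (j + 1) q = (G *ᵥ u j) q := by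
    intro j q
    simp only [hudef, pow_succ']
    rw [← Matrix.mulVec_mulVec]
  have hkey : ∀ (n : ℕ) (p : Q),
      fv n p - fv n s = ∑ i ∈ Finset.range n, (w i p - t i p * u (n - 1 - i) s) := by
    intro n
    induction n with
    | zero => intro p; simp [hfvdef]
    | succ n ih =>
      intro p
      by_cases hp : p = s
      · subst hp
        simp [hts, hws]
      · have hfv_s : fv (n + 1) s = fv n s + u n s := by
          simp only [hfvdef]
          rw [Finset.sum_range_succ]
        have hGfv : (G *ᵥ fv n) p = ∑ q, G p q * fv n q := mulVec_apply' _ _ _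
        have hfv_p : fv (n + 1) p = r0 p + (G *ᵥ fv n) p := by
          have h1 : fv (n + 1) p = (∑ i ∈ range n, u (i + 1) p) + u 0 p := by
            simp only [hfvdef]
            rw [Finset.sum_range_succ']
          have h2 : u 0 p = r0 p := by
            simp only [hudef, pow_zero, Matrix.one_mulVec]
          have h3 : ∑ i ∈ range n, u (i + 1) p = (G *ᵥ fv n) p := by
            rw [hGfv]
            calc ∑ i ∈ range n, u (i + 1) p
                = ∑ i ∈ range n, ∑ q, G p q * u i q := by
                  refine Finset.sum_congr rfl fun i _ => ?_
                  rw [husucc i p, mulVec_apply']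
              _ = ∑ q, ∑ i ∈ range n, G p q * u i q := Finset.sum_comm
              _ = ∑ q, G p q * fv n q := by
                  refine Finset.sum_congr rfl fun q _ => ?_
                  rw [← Finset.mul_sum]
          linarith
        have hexp : (G *ᵥ fv n) p = fv n s +
            ∑ i ∈ range n, ((G *ᵥ w i) p - (G *ᵥ t i) p * u (n - 1 - i) s) := by
          have hfvq : ∀ q, fv n q = fv n s +
              ∑ i ∈ range n, (w i q - t i q * u (n - 1 - i) s) := by
            intro q
            have := ih q
            linarith
          rw [hGfv]
          calc ∑ q, G p q * fv n q
              = ∑ q, (G p q * fv n s +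
                  ∑ i ∈ range n, (G p q * w i q - (G p q * t i q) * u (n - 1 - i) s)) := by
                refine Finset.sum_congr rfl fun q _ => ?_
                rw [hfvq q, mul_add]
                congr 1
                rw [Finset.mul_sum]
                exact Finset.sum_congr rfl fun i _ => by ring
            _ = (∑ q, G p q * fv n s) +
                ∑ q, ∑ i ∈ range n, (G p q * w i q - (G p q * t i q) * u (n - 1 - i) s) :=
                Finset.sum_add_distrib
            _ = fv n s +
                ∑ i ∈ range n, ∑ q, (G p q * w i q - (G p q * t i q) * u (n - 1 - i) s) := by
                rw [Finset.sum_comm]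
                congr 1
                rw [← Finset.sum_mul, hrow, one_mul]
            _ = fv n s +
                ∑ i ∈ range n, ((G *ᵥ w i) p - (G *ᵥ t i) p * u (n - 1 - i) s) := by
                congr 1
                refine Finset.sum_congr rfl fun i _ => ?_
                rw [Finset.sum_sub_distrib, ← Finset.sum_mul, mulVec_apply', mulVec_apply']
        have hwstep : ∀ i, (G *ᵥ w i) p = w (i + 1) p := by
          intro i
          simp only [hwdef]
          rw [Tm_mulVec_succ G s i r0 hp]
        have htstep : ∀ i, (G *ᵥ t i) p = t (i + 1) p := by
          intro i
          simp only [htdef]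
          rw [Tm_mulVec_succ G s i _ hp]
        have hsum_eq : ∑ i ∈ range n, ((G *ᵥ w i) p - (G *ᵥ t i) p * u (n - 1 - i) s)
            = ∑ i ∈ range n, (w (i + 1) p - t (i + 1) p * u (n - 1 - i) s) :=
          Finset.sum_congr rfl fun i _ => by rw [hwstep i, htstep i]
        have hRHS : ∑ i ∈ range (n + 1), (w i p - t i p * u (n + 1 - 1 - i) s)
            = (∑ i ∈ range n, (w (i + 1) p - t (i + 1) p * u (n - 1 - i) s))
              + (w 0 p - t 0 p * u n s) := by
          rw [Finset.sum_range_succ']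
          have e2 : ∀ i ∈ range n, w (i + 1) p - t (i + 1) p * u (n + 1 - 1 - (i + 1)) s
              = w (i + 1) p - t (i + 1) p * u (n - 1 - i) s := fun i _ => by
            rw [show n + 1 - 1 - (i + 1) = n - 1 - i from by omega]
          rw [Finset.sum_congr rfl e2, show n + 1 - 1 - 0 = n from by omega]
        have hw0 : w 0 p = r0 p := by
          simp only [hwdef, Tm_zero]
          rw [Em_mulVec, if_neg hp]
        have ht0 : t 0 p = 1 := by
          simp only [htdef, Tm_zero]
          rw [Em_mulVec, if_neg hp]
        rw [hRHS, hw0, ht0, hfv_p, hfv_s, hexp, hsum_eq]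
        ring
  -- the key bound
  have hfb : ∀ (n : ℕ) (p : Q), |fv n p - fv n s| ≤ D * (c / β) := by
    intro n p
    rw [hkey n p]
    calc |∑ i ∈ range n, (w i p - t i p * u (n - 1 - i) s)|
        ≤ ∑ i ∈ range n, |w i p - t i p * u (n - 1 - i) s| :=
          Finset.abs_sum_le_sum_abs _ _
      _ ≤ ∑ i ∈ range n, D * t i p := by
          refine Finset.sum_le_sum fun i _ => ?_
          obtain ⟨hw1, hw2⟩ := hw_bd i p
          obtain ⟨hu1, hu2⟩ := hu_bd (n - 1 - i) s
          have htn := ht_nn i p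
          have h1 : t i p * u (n - 1 - i) s ≤ t i p * D :=
            mul_le_mul_of_nonneg_left hu2 htn
          have h2 : 0 ≤ t i p * u (n - 1 - i) s := mul_nonneg htn hu1
          have h3 : t i p * D = D * t i p := mul_comm _ _
          rw [abs_le]
          constructor <;> linarith
      _ = D * ∑ i ∈ range n, t i p := by rw [Finset.mul_sum]
      _ ≤ D * ((c : ℝ) / β) := mul_le_mul_of_nonneg_left (hsum_t n p) hD0
  -- assembly
  intro n
  have hshift : ∀ p, (∑ i ∈ Finset.range n, (G ^ i).mulVec r) p = fv n p + n * r qm := by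
    intro p
    rw [Finset.sum_apply]
    have hterm : ∀ i, ((G ^ i).mulVec r) p = u i p + r qm := by
      intro i
      have hr : r = fun q => r0 q + r qm := by
        funext q
        simp [hr0def]
      calc ((G ^ i).mulVec r) p = ∑ q, (G ^ i) p q * (r0 q + r qm) := by
            conv_lhs => rw [hr]
            rw [mulVec_apply']
        _ = ∑ q, (G ^ i) p q * r0 q + ∑ q, (G ^ i) p q * r qm := by
            rw [← Finset.sum_add_distrib]
            refine Finset.sum_congr rfl fun q _ => ?_
            ring
        _ = u i p + (∑ q, (G ^ i) p q) * r qm := by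
            rw [Finset.sum_mul]
            simp only [hudef]
            rw [mulVec_apply']
        _ = u i p + r qm := by rw [hpowrow i p, one_mul]
    calc ∑ i ∈ range n, ((G ^ i).mulVec r) p
        = ∑ i ∈ range n, (u i p + r qm) := Finset.sum_congr rfl fun i _ => hterm i
      _ = fv n p + n * r qm := by
          rw [Finset.sum_add_distrib, Finset.sum_const, card_range, nsmul_eq_mul]
  have hcb_nn : (0 : ℝ) ≤ (c : ℝ) / β := div_nonneg (Nat.cast_nonneg c) hβ0.le
  unfold diffnorm
  refine ciSup_le fun pq => ?_
  obtain ⟨p1, p2⟩ := pq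
  have e1 : (∑ i ∈ Finset.range n, (G ^ i).mulVec r) p1 -
      (∑ i ∈ Finset.range n, (G ^ i).mulVec r) p2 = fv n p1 - fv n p2 := by
    rw [hshift p1, hshift p2]; ring
  calc |(∑ i ∈ Finset.range n, (G ^ i).mulVec r) p1 -
      (∑ i ∈ Finset.range n, (G ^ i).mulVec r) p2|
      = |fv n p1 - fv n p2| := by rw [e1]
    _ ≤ |fv n p1 - fv n s| + |fv n s - fv n p2| := abs_sub_le _ _ _
    _ ≤ D * (c / β) + D * (c / β) := by
        have h1 := hfb n p1
        have h2 := hfb n p2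
        have h3 : |fv n s - fv n p2| = |fv n p2 - fv n s| := abs_sub_comm _ _
        linarith
    _ ≤ (10 * c / ymin ^ c) * D := by
        rw [← hβdef]
        have h10 : 10 * (c : ℝ) / β = 10 * ((c : ℝ) / β) := by ring
        rw [h10]
        nlinarith [mul_nonneg hcb_nn hD0]
end

section
/- Let G be a stochastic matrix indexed by Q with a single BSCC and smallest nonzero entry y_min, and let C = 10·|Q| / y_min^{|Q|}. Let g(0) satisfy 0 ≤ g(0) ≤ g_max·1 and let r satisfy ‖r‖ ≤ r_max. Define g(n+1) = r + G·g(n). Then for all n ≥ 0, |g(n)|_diff ≤ g_max + 2·C·r_max, where |v|_diff = max_{p,q} |v[p] - v[q]|. -/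
open Finset Matrix

set_option linter.unusedSectionVars false
namespace Stmt4Aux

variable {Q : Type*} [Fintype Q] [Nonempty Q] [DecidableEq Q]

/-- `Reach G s m p` : there is a path of length exactly `m` from `p` to `s`
through positive entries of `G`. -/
def Reach (G : Matrix Q Q ℝ) (s : Q) : ℕ → Q → Prop
  | 0, p => p = s
  | (m+1), p => ∃ q, 0 < G p q ∧ Reach G s m q

theorem reach_of_rtg {G : Matrix Q Q ℝ} {s p : Q}
    (h : Relation.ReflTransGen (fun a b => 0 < G a b) p s) : ∃ m, Reach G s m p := by
  induction h using Relation.ReflTransGen.head_induction_on with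
  | refl => exact ⟨0, rfl⟩
  | head h' _ ih => exact ⟨ih.choose + 1, _, h', ih.choose_spec⟩

theorem reach_pos {G : Matrix Q Q ℝ} {s : Q}
    (hall : ∀ p : Q, Relation.ReflTransGen (fun a b => 0 < G a b) p s)
    (hnonneg : ∀ q q', 0 ≤ G q q') (hrow : ∀ q, ∑ q', G q q' = 1) (p : Q) :
    ∃ m, 1 ≤ m ∧ Reach G s m p := by
  obtain ⟨m, hm⟩ := reach_of_rtg (hall p)
  match m, hm with
  | (m+1), hm => exact ⟨m+1, by omega, hm⟩
  | 0, hm =>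
    -- p = s ; find an outgoing edge from s
    subst hm
    have : ∃ q, 0 < G p q := by
      by_contra hcon
      push_neg at hcon
      have : ∑ q', G p q' = 0 := Finset.sum_eq_zero fun q _ => le_antisymm (hcon q) (hnonneg p q)
      rw [hrow] at this; norm_num at this
    obtain ⟨q, hq⟩ := this
    obtain ⟨m', hm'⟩ := reach_of_rtg (hall q)
    exact ⟨m' + 1, by omega, q, hq, hm'⟩

open Classical in
/-- the minimal positive path length to `s` is at most `|Q|`. -/
theorem reach_le_card {G : Matrix Q Q ℝ} {s : Q}
    (hall : ∀ p : Q, Relation.ReflTransGen (fun a b => 0 < G a b) p s)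
    (hnonneg : ∀ q q', 0 ≤ G q q') (hrow : ∀ q, ∑ q', G q q' = 1) (p : Q) :
    ∃ m, 1 ≤ m ∧ m ≤ Fintype.card Q ∧ Reach G s m p := by
  classical
  let ell : Q → ℕ := fun x => Nat.find (reach_pos hall hnonneg hrow x)
  have hellspec : ∀ x, 1 ≤ ell x ∧ Reach G s (ell x) x :=
    fun x => Nat.find_spec (reach_pos hall hnonneg hrow x)
  have hellmin : ∀ x m, m < ell x → ¬ (1 ≤ m ∧ Reach G s m x) :=
    fun x m hm => Nat.find_min (reach_pos hall hnonneg hrow x) hm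
  -- descending lemma
  have descend : ∀ x, 2 ≤ ell x → ∃ y, ell y + 1 = ell x := by
    intro x hx
    obtain ⟨h1, h2⟩ := hellspec x
    obtain ⟨m, hm⟩ : ∃ m, ell x = m + 1 := ⟨ell x - 1, by omega⟩
    rw [hm] at h2
    obtain ⟨y, hGy, hy⟩ := h2
    have hm1 : 1 ≤ m := by omega
    have hley : ell y ≤ m := by
      by_contra hc
      exact hellmin y m (by omega) ⟨hm1, hy⟩
    have hgey : m ≤ ell y := by
      by_contra hc
      push_neg at hc
      have hy' : Reach G s (ell y) y := (hellspec y).2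
      have : Reach G s (ell y + 1) x := ⟨y, hGy, hy'⟩
      have h1y := (hellspec y).1
      exact hellmin x (ell y + 1) (by omega) ⟨by omega, this⟩
    exact ⟨y, by omega⟩
  -- all levels 1..ell p are attained
  have levels : ∀ d j, j + d = ell p → 1 ≤ j → ∃ y, ell y = j := by
    intro d
    induction d with
    | zero => intro j hj _; exact ⟨p, by omega⟩
    | succ d ih =>
      intro j hj hj1
      obtain ⟨y, hy⟩ := ih (j+1) (by omega) (by omega)
      obtain ⟨y', hy'⟩ := descend y (by omega)
      exact ⟨y', by omega⟩
  -- injectivity argument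
  have hM : ell p ≤ Fintype.card Q := by
    have hlev : ∀ i : Fin (ell p), ∃ y, ell y = i.1 + 1 := by
      intro i
      exact levels (ell p - (i.1+1)) (i.1+1) (by omega) (by omega)
    choose F hF using hlev
    have hinj : Function.Injective F := by
      intro i j hij
      have : i.1 + 1 = j.1 + 1 := by rw [← hF i, ← hF j, hij]
      exact Fin.ext (by omega)
    simpa using Fintype.card_le_of_injective F hinj
  exact ⟨ell p, (hellspec p).1, hM, (hellspec p).2⟩



def Bmat (G : Matrix Q Q ℝ) (s : Q) : Matrix Q Q ℝ :=
  Matrix.of fun p q => if q = s then 0 else G p q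

section Bfacts

variable {G : Matrix Q Q ℝ} {s : Q} {ymin : ℝ}

theorem Bmat_nonneg (hnonneg : ∀ q q', 0 ≤ G q q') (p q : Q) : 0 ≤ Bmat G s p q := by
  unfold Bmat; dsimp only [Matrix.of_apply]
  split <;> [exact le_refl 0; exact hnonneg p q]

theorem Bpow_nonneg (hnonneg : ∀ q q', 0 ≤ G q q') :
    ∀ m (p q : Q), 0 ≤ (Bmat G s ^ m) p q := by
  intro m
  induction m with
  | zero => intro p q; by_cases h : p = q <;> simp [Matrix.one_apply, h]
  | succ m ih =>
    intro p q
    rw [pow_succ, Matrix.mul_apply]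
    exact Finset.sum_nonneg fun x _ => mul_nonneg (ih p x) (Bmat_nonneg hnonneg x q)

theorem mulVec_mono {M : Matrix Q Q ℝ} (hM : ∀ p q, 0 ≤ M p q) {v w : Q → ℝ}
    (h : ∀ q, v q ≤ w q) (p : Q) : M.mulVec v p ≤ M.mulVec w p :=
  Finset.sum_le_sum fun q _ => mul_le_mul_of_nonneg_left (h q) (hM p q)

theorem mulVec_nonneg {M : Matrix Q Q ℝ} (hM : ∀ p q, 0 ≤ M p q) {v : Q → ℝ}
    (hv : ∀ q, 0 ≤ v q) (p : Q) : 0 ≤ M.mulVec v p :=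
  Finset.sum_nonneg fun q _ => mul_nonneg (hM p q) (hv q)

theorem Bone_le (hnonneg : ∀ q q', 0 ≤ G q q') (hrow : ∀ q, ∑ q', G q q' = 1) (p : Q) :
    (Bmat G s).mulVec (fun _ => (1:ℝ)) p ≤ 1 := by
  have : (Bmat G s).mulVec (fun _ => (1:ℝ)) p = ∑ q, Bmat G s p q := by
    simp [Matrix.mulVec, dotProduct]
  rw [this, ← hrow p]
  exact Finset.sum_le_sum fun q _ => by
    unfold Bmat; dsimp only [Matrix.of_apply]; split <;> [exact hnonneg p q; exact le_refl _]

theorem Bpow_one_le (hnonneg : ∀ q q', 0 ≤ G q q') (hrow : ∀ q, ∑ q', G q q' = 1) :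
    ∀ m (p : Q), (Bmat G s ^ m).mulVec (fun _ => (1:ℝ)) p ≤ 1 := by
  intro m
  induction m with
  | zero => intro p; simp [Matrix.one_mulVec]
  | succ m ih =>
    intro p
    have h1 : (Bmat G s ^ (m+1)).mulVec (fun _ => (1:ℝ)) p
        = (Bmat G s).mulVec ((Bmat G s ^ m).mulVec (fun _ => (1:ℝ))) p := by
      rw [Matrix.mulVec_mulVec, ← pow_succ']
    rw [h1]
    calc (Bmat G s).mulVec ((Bmat G s ^ m).mulVec (fun _ => (1:ℝ))) p
        ≤ (Bmat G s).mulVec (fun _ => (1:ℝ)) p :=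
          mulVec_mono (Bmat_nonneg hnonneg) ih p
      _ ≤ 1 := Bone_le hnonneg hrow p

theorem Bpow_one_nonneg (hnonneg : ∀ q q', 0 ≤ G q q') :
    ∀ m (p : Q), 0 ≤ (Bmat G s ^ m).mulVec (fun _ => (1:ℝ)) p := by
  intro m p
  exact mulVec_nonneg (Bpow_nonneg hnonneg m) (fun _ => zero_le_one) p

/-- path bound : if `Reach (m+1) p` then `(B^(m+1) 1) p ≤ 1 - y^(m+1)` -/
theorem Bpow_reach (hnonneg : ∀ q q', 0 ≤ G q q') (hrow : ∀ q, ∑ q', G q q' = 1)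
    (hy : 0 < ymin) (hy1 : ymin ≤ 1) (hymin : ∀ q q', G q q' ≠ 0 → ymin ≤ G q q') :
    ∀ m (p : Q), Reach G s (m+1) p →
      (Bmat G s ^ (m+1)).mulVec (fun _ => (1:ℝ)) p ≤ 1 - ymin ^ (m+1) := by
  intro m
  induction m with
  | zero =>
    intro p hp
    obtain ⟨q, hGq, hq⟩ := hp
    rw [show q = s from hq] at hGq
    have hys : ymin ≤ G p s := hymin p s (ne_of_gt hGq)
    have h1 : (Bmat G s ^ 1).mulVec (fun _ => (1:ℝ)) p = ∑ x, Bmat G s p x := by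
      simp [Matrix.mulVec, dotProduct]
    rw [h1]
    have hsplit : ∑ x, Bmat G s p x = ∑ x, G p x - G p s := by
      rw [Finset.sum_eq_add_sum_sdiff_singleton_of_mem (Finset.mem_univ s) (fun x => Bmat G s p x),
          Finset.sum_eq_add_sum_sdiff_singleton_of_mem (Finset.mem_univ s) (fun x => G p x)]
      have h0 : Bmat G s p s = 0 := by unfold Bmat; simp
      have heq : ∑ x ∈ Finset.univ \ {s}, Bmat G s p x = ∑ x ∈ Finset.univ \ {s}, G p x := by
        refine Finset.sum_congr rfl fun x hx => ?_
        rcases Finset.mem_sdiff.mp hx with ⟨_, hxs⟩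
        have hxs' : x ≠ s := by simpa using hxs
        unfold Bmat; simp [hxs']
      rw [h0, heq]; ring
    rw [hsplit, hrow p, pow_one]
    linarith
  | succ m ih =>
    intro p hp
    obtain ⟨q, hGq, hq⟩ := hp
    have hys : ymin ≤ G p q := hymin p q (ne_of_gt hGq)
    have hrw : (Bmat G s ^ (m+2)).mulVec (fun _ => (1:ℝ)) p
        = (Bmat G s).mulVec ((Bmat G s ^ (m+1)).mulVec (fun _ => (1:ℝ))) p := by
      rw [Matrix.mulVec_mulVec, ← pow_succ']
    rw [hrw]
    set w := (Bmat G s ^ (m+1)).mulVec (fun _ => (1:ℝ)) with hw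
    by_cases hqs : q = s
    · -- next step is s itself; then B p · already loses mass ≥ ymin
      have hle : (Bmat G s).mulVec w p ≤ (Bmat G s).mulVec (fun _ => (1:ℝ)) p :=
        mulVec_mono (Bmat_nonneg hnonneg) (Bpow_one_le hnonneg hrow (m+1)) p
      rw [hqs] at hGq
      have hys' : ymin ≤ G p s := hymin p s (ne_of_gt hGq)
      have h2 : (Bmat G s).mulVec (fun _ => (1:ℝ)) p ≤ 1 - ymin := by
        have hrw2 : (Bmat G s).mulVec (fun _ => (1:ℝ)) p = ∑ x, Bmat G s p x := by
          simp [Matrix.mulVec, dotProduct]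
        rw [hrw2]
        have hsplit : ∑ x, Bmat G s p x = ∑ x, G p x - G p s := by
          rw [Finset.sum_eq_add_sum_sdiff_singleton_of_mem (Finset.mem_univ s) (fun x => Bmat G s p x),
              Finset.sum_eq_add_sum_sdiff_singleton_of_mem (Finset.mem_univ s) (fun x => G p x)]
          have h0 : Bmat G s p s = 0 := by unfold Bmat; simp
          have heq : ∑ x ∈ Finset.univ \ {s}, Bmat G s p x = ∑ x ∈ Finset.univ \ {s}, G p x := by
            refine Finset.sum_congr rfl fun x hx => ?_
            rcases Finset.mem_sdiff.mp hx with ⟨_, hxs⟩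
            have hxs' : x ≠ s := by simpa using hxs
            unfold Bmat; simp [hxs']
          rw [h0, heq]; ring
        rw [hsplit, hrow p]
        linarith
      have hpow : ymin ^ (m+2) ≤ ymin := by
        calc ymin ^ (m+2) ≤ ymin ^ 1 := pow_le_pow_of_le_one (le_of_lt hy) hy1 (by omega)
          _ = ymin := pow_one ymin
      linarith
    · -- q ≠ s, apply IH at q
      have hwq : w q ≤ 1 - ymin ^ (m+1) := ih q hq
      have hBpq : Bmat G s p q = G p q := by unfold Bmat; simp [hqs]
      have hcalc : (Bmat G s).mulVec w p
          = Bmat G s p q * w q + ∑ x ∈ Finset.univ \ {q}, Bmat G s p x * w x := by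
        rw [show (Bmat G s).mulVec w p = ∑ x, Bmat G s p x * w x from rfl,
          Finset.sum_eq_add_sum_sdiff_singleton_of_mem (Finset.mem_univ q) (fun x => Bmat G s p x * w x)]
      have hrest : ∑ x ∈ Finset.univ \ {q}, Bmat G s p x * w x
          ≤ ∑ x ∈ Finset.univ \ {q}, Bmat G s p x := by
        refine Finset.sum_le_sum fun x _ => ?_
        have h1 : w x ≤ 1 := Bpow_one_le hnonneg hrow (m+1) x
        nlinarith [Bmat_nonneg (s := s) hnonneg p x]
      have hBsum : Bmat G s p q + ∑ x ∈ Finset.univ \ {q}, Bmat G s p x ≤ 1 := by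
        rw [← Finset.sum_eq_add_sum_sdiff_singleton_of_mem (Finset.mem_univ q) (fun x => Bmat G s p x)]
        calc ∑ x, Bmat G s p x = (Bmat G s).mulVec (fun _ => (1:ℝ)) p := by
              simp [Matrix.mulVec, dotProduct]
          _ ≤ 1 := Bone_le hnonneg hrow p
      have hwq0 : 0 ≤ ymin ^ (m+1) := pow_nonneg (le_of_lt hy) _
      have hmain : Bmat G s p q * w q ≤ Bmat G s p q - Bmat G s p q * ymin ^ (m+1) := by
        have hB0 : 0 ≤ Bmat G s p q := Bmat_nonneg hnonneg p q
        nlinarith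
      have hstep : Bmat G s p q * ymin ^ (m+1) ≥ ymin ^ (m+2) := by
        rw [hBpq]
        calc ymin ^ (m+2) = ymin * ymin ^ (m+1) := by ring
          _ ≤ G p q * ymin ^ (m+1) := mul_le_mul_of_nonneg_right hys hwq0
      rw [hcalc]
      linarith

theorem Bk_bound (hnonneg : ∀ q q', 0 ≤ G q q') (hrow : ∀ q, ∑ q', G q q' = 1)
    (hy : 0 < ymin) (hy1 : ymin ≤ 1) (hymin : ∀ q q', G q q' ≠ 0 → ymin ≤ G q q')
    (hall : ∀ p : Q, Relation.ReflTransGen (fun a b => 0 < G a b) p s) (p : Q) :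
    (Bmat G s ^ Fintype.card Q).mulVec (fun _ => (1:ℝ)) p ≤ 1 - ymin ^ Fintype.card Q := by
  obtain ⟨m, h1, hk, hR⟩ := reach_le_card hall hnonneg hrow p
  obtain ⟨m', rfl⟩ : ∃ m', m = m' + 1 := ⟨m - 1, by omega⟩
  have hm : (Bmat G s ^ (m'+1)).mulVec (fun _ => (1:ℝ)) p ≤ 1 - ymin ^ (m'+1) :=
    Bpow_reach hnonneg hrow hy hy1 hymin m' p hR
  have hanti : (Bmat G s ^ Fintype.card Q).mulVec (fun _ => (1:ℝ)) p
      ≤ (Bmat G s ^ (m'+1)).mulVec (fun _ => (1:ℝ)) p := by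
    have hsplit : Bmat G s ^ Fintype.card Q = Bmat G s ^ (m'+1) * Bmat G s ^ (Fintype.card Q - (m'+1)) := by
      rw [← pow_add]; congr 1; omega
    rw [hsplit, ← Matrix.mulVec_mulVec]
    exact mulVec_mono (Bpow_nonneg hnonneg (m'+1))
      (Bpow_one_le hnonneg hrow (Fintype.card Q - (m'+1))) p
  have hpow : ymin ^ Fintype.card Q ≤ ymin ^ (m'+1) :=
    pow_le_pow_of_le_one (le_of_lt hy) hy1 hk
  linarith

theorem Bpow_geom (hnonneg : ∀ q q', 0 ≤ G q q') (hrow : ∀ q, ∑ q', G q q' = 1)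
    (hy : 0 < ymin) (hy1 : ymin ≤ 1) (hymin : ∀ q q', G q q' ≠ 0 → ymin ≤ G q q')
    (hall : ∀ p : Q, Relation.ReflTransGen (fun a b => 0 < G a b) p s) :
    ∀ m (p : Q), (Bmat G s ^ m).mulVec (fun _ => (1:ℝ)) p
      ≤ (1 - ymin ^ Fintype.card Q) ^ (m / Fintype.card Q) := by
  set k := Fintype.card Q with hk
  have hk1 : 1 ≤ k := Fintype.card_pos
  have ha0 : 0 ≤ 1 - ymin ^ k := by
    have : ymin ^ k ≤ 1 := pow_le_one₀ (le_of_lt hy) hy1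
    linarith
  have hblock : ∀ j (p : Q), (Bmat G s ^ (k*j)).mulVec (fun _ => (1:ℝ)) p
      ≤ (1 - ymin ^ k) ^ j := by
    intro j
    induction j with
    | zero => intro p; simp [Matrix.one_mulVec]
    | succ j ih =>
      intro p
      have hsplit : Bmat G s ^ (k*(j+1)) = Bmat G s ^ (k*j) * Bmat G s ^ k := by
        rw [Nat.mul_succ, pow_add]
      rw [hsplit, ← Matrix.mulVec_mulVec]
      calc (Bmat G s ^ (k*j)).mulVec ((Bmat G s ^ k).mulVec (fun _ => (1:ℝ))) p
          ≤ (Bmat G s ^ (k*j)).mulVec (fun _ => 1 - ymin ^ k) p := by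
            exact mulVec_mono (Bpow_nonneg hnonneg (k*j))
              (fun q => Bk_bound hnonneg hrow hy hy1 hymin hall q) p
        _ = (1 - ymin ^ k) * (Bmat G s ^ (k*j)).mulVec (fun _ => (1:ℝ)) p := by
            have : (fun (_:Q) => 1 - ymin ^ k) = (1 - ymin ^ k) • (fun (_:Q) => (1:ℝ)) := by
              funext x; simp
            rw [this, Matrix.mulVec_smul, Pi.smul_apply, smul_eq_mul]
        _ ≤ (1 - ymin ^ k) * (1 - ymin ^ k) ^ j := by
            exact mul_le_mul_of_nonneg_left (ih p) ha0
        _ = (1 - ymin ^ k) ^ (j+1) := by ring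
  intro m p
  have hsplit : Bmat G s ^ m = Bmat G s ^ (k * (m / k)) * Bmat G s ^ (m % k) := by
    rw [← pow_add]; congr 1; exact (Nat.div_add_mod m k).symm
  calc (Bmat G s ^ m).mulVec (fun _ => (1:ℝ)) p
      = (Bmat G s ^ (k * (m/k))).mulVec ((Bmat G s ^ (m % k)).mulVec (fun _ => (1:ℝ))) p := by
        rw [Matrix.mulVec_mulVec, ← hsplit]
    _ ≤ (Bmat G s ^ (k * (m/k))).mulVec (fun _ => (1:ℝ)) p :=
        mulVec_mono (Bpow_nonneg hnonneg _) (Bpow_one_le hnonneg hrow (m % k)) p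
    _ ≤ (1 - ymin ^ k) ^ (m / k) := hblock (m/k) p

theorem sum_geom_div {a : ℝ} (ha0 : 0 < a) (ha1 : a ≤ 1) {k : ℕ} (hk : 1 ≤ k) (n : ℕ) :
    ∑ m ∈ Finset.range n, (1 - a) ^ (m / k) ≤ k / a := by
  have hx0 : (0:ℝ) ≤ 1 - a := by linarith
  have hterm : ∀ m : ℕ, (0:ℝ) ≤ (1-a) ^ (m / k) := fun m => pow_nonneg hx0 _
  set M := n / k + 1 with hM
  have hnle : n ≤ k * M := by
    have h1 := Nat.div_add_mod n k
    have h2 : n % k < k := Nat.mod_lt n (by omega)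
    have h3 : k * M = k * (n / k) + k := by rw [hM]; ring
    omega
  have hsub : Finset.range n ⊆ Finset.range (k * M) := Finset.range_subset_range.mpr hnle
  have hstep : ∀ M' : ℕ, ∑ m ∈ Finset.range (k * M'), (1-a:ℝ) ^ (m / k)
      = (k:ℝ) * ∑ j ∈ Finset.range M', (1-a) ^ j := by
    intro M'
    induction M' with
    | zero => simp
    | succ M' ih =>
      have hr : k * (M' + 1) = k * M' + k := by ring
      rw [hr]
      have hconsec : ∑ m ∈ Finset.range (k * M' + k), (1-a:ℝ) ^ (m / k)
          = ∑ m ∈ Finset.range (k * M'), (1-a:ℝ) ^ (m / k)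
            + ∑ m ∈ Finset.Ico (k * M') (k * M' + k), (1-a:ℝ) ^ (m / k) := by
        simp only [Finset.range_eq_Ico]
        exact (Finset.sum_Ico_consecutive (fun m => (1-a:ℝ) ^ (m / k)) (m := 0) (n := k * M') (k := k * M' + k) (by omega) (by omega)).symm
      rw [hconsec, ih]
      have hico : ∑ m ∈ Finset.Ico (k * M') (k * M' + k), (1-a:ℝ) ^ (m / k)
          = (k:ℝ) * (1-a) ^ M' := by
        rw [Finset.sum_Ico_eq_sum_range]
        have : ∀ i ∈ Finset.range (k * M' + k - k * M'), (1-a:ℝ) ^ ((k * M' + i) / k) = (1-a) ^ M' := by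
          intro i hi
          rw [Finset.mem_range] at hi
          congr 1
          rw [Nat.mul_add_div (by omega)]
          have : i / k = 0 := Nat.div_eq_of_lt (by omega)
          omega
        rw [Finset.sum_congr rfl this, Finset.sum_const]
        have hcc : k * M' + k - k * M' = k := by omega
        rw [hcc, Finset.card_range, nsmul_eq_mul]
      rw [hico, Finset.sum_range_succ]
      ring
  calc ∑ m ∈ Finset.range n, (1-a:ℝ) ^ (m / k)
      ≤ ∑ m ∈ Finset.range (k * M), (1-a:ℝ) ^ (m / k) :=
        Finset.sum_le_sum_of_subset_of_nonneg hsub (fun i _ _ => hterm i)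
    _ = (k:ℝ) * ∑ j ∈ Finset.range M, (1-a) ^ j := hstep M
    _ ≤ (k:ℝ) * (1 / a) := by
        refine mul_le_mul_of_nonneg_left ?_ (by positivity)
        have hne : (1-a:ℝ) ≠ 1 := by intro h; apply ha0.ne'; linarith
        rw [geom_sum_eq hne]
        have hp0 : (0:ℝ) ≤ (1-a) ^ M := pow_nonneg hx0 _
        rw [show (1-a-1 : ℝ) = -a by ring]
        have h1 : ((1-a:ℝ)^M - 1)/(-a) = (1 - (1-a)^M)/a := by
          rw [div_neg, ← neg_div]; congr 1; ring
        rw [h1, div_le_div_iff₀ ha0 ha0]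
        nlinarith
    _ = (k:ℝ) / a := by ring

end Bfacts

theorem mulVec_sum_fun (M : Matrix Q Q ℝ) {n : ℕ} (v : ℕ → Q → ℝ) (p : Q) :
    M.mulVec (fun x => ∑ j ∈ Finset.range n, v j x) p
      = ∑ j ∈ Finset.range n, M.mulVec (v j) p := by
  simp only [Matrix.mulVec, dotProduct, Finset.mul_sum]
  exact Finset.sum_comm

theorem mulVec_comb (M : Matrix Q Q ℝ) (w1 w2 : Q → ℝ) (c : ℝ) (p : Q) :
    M.mulVec (fun x => w1 x + c * w2 x) p = M.mulVec w1 p + c * M.mulVec w2 p := by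
  simp only [Matrix.mulVec, dotProduct]
  rw [Finset.mul_sum, ← Finset.sum_add_distrib]
  exact Finset.sum_congr rfl fun x _ => by ring

theorem sum_exchange (A : ℕ → ℕ → ℝ) (n : ℕ) :
    ∑ i ∈ Finset.range n, ∑ t ∈ Finset.range i, A t i
      = ∑ t ∈ Finset.range n, ∑ i ∈ Finset.Ico (t+1) n, A t i := by
  induction n with
  | zero => simp
  | succ n ih =>
    rw [Finset.sum_range_succ, ih]
    have h1 : ∑ t ∈ Finset.range (n+1), ∑ i ∈ Finset.Ico (t+1) (n+1), A t i
        = ∑ t ∈ Finset.range n, (∑ i ∈ Finset.Ico (t+1) n, A t i + A t n) := by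
      rw [Finset.sum_range_succ, Finset.Ico_self, Finset.sum_empty, add_zero]
      refine Finset.sum_congr rfl fun t ht => ?_
      rw [Finset.mem_range] at ht
      exact Finset.sum_Ico_succ_top (by omega) _
    rw [h1, Finset.sum_add_distrib]


end Stmt4Aux



/-- Let `G` be a stochastic matrix over a finite set `Q` with a single
BSCC (some state `s` is reachable from every state in the graph of `G`) and smallest
nonzero entry `ymin`, and let `C = 10·|Q| / ymin^|Q|`.  Let `0 ≤ g 0 ≤ gmax·1` and
`‖r‖_∞ ≤ rmax`, and `g (n+1) = r + G · g n`.  Then for all `n` and all states `p q`,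
`|g n p - g n q| ≤ gmax + 2·C·rmax`. -/
theorem stmt4 {Q : Type*} [Fintype Q] [Nonempty Q] [DecidableEq Q]
    (G : Matrix Q Q ℝ) (ymin : ℝ) (r : Q → ℝ) (g : ℕ → Q → ℝ) (gmax rmax : ℝ)
    (hnonneg : ∀ q q', 0 ≤ G q q')
    (hrow : ∀ q, ∑ q', G q q' = 1)
    (hy : 0 < ymin)
    (hymin : ∀ q q', G q q' ≠ 0 → ymin ≤ G q q')
    (hyatt : ∃ q q', G q q' = ymin)
    (hBSCC : ∃ s : Q, ∀ p : Q, Relation.ReflTransGen (fun a b => 0 < G a b) p s)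
    (hg0 : ∀ q, 0 ≤ g 0 q ∧ g 0 q ≤ gmax)
    (hr : ∀ q, |r q| ≤ rmax)
    (hrec : ∀ n, g (n + 1) = fun q => r q + G.mulVec (g n) q) :
    ∀ n : ℕ, ∀ p q : Q,
      |g n p - g n q| ≤
        gmax + 2 * (10 * Fintype.card Q / ymin ^ Fintype.card Q) * rmax := by
  classical
  obtain ⟨s, hall⟩ := hBSCC
  set k := Fintype.card Q with hkdef
  have hk1 : 1 ≤ k := Fintype.card_pos
  have hy1 : ymin ≤ 1 := by
    obtain ⟨q0, q1, hq⟩ := hyatt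
    have h1 : G q0 q1 ≤ ∑ q', G q0 q' :=
      Finset.single_le_sum (fun i _ => hnonneg q0 i) (Finset.mem_univ q1)
    rw [hrow q0, hq] at h1; exact h1
  have hrmax : 0 ≤ rmax := le_trans (abs_nonneg _) (hr (Classical.arbitrary Q))
  have hgmax : 0 ≤ gmax :=
    le_trans (hg0 (Classical.arbitrary Q)).1 (hg0 (Classical.arbitrary Q)).2
  set a : ℝ := ymin ^ k with hadef
  have ha0 : 0 < a := pow_pos hy k
  have ha1 : a ≤ 1 := pow_le_one₀ hy.le hy1
  set B := Stmt4Aux.Bmat G s with hBdef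
  set one : Q → ℝ := fun _ => 1 with honedef
  set β : ℕ → ℝ := fun m => (1 - a) ^ (m / k) with hβdef
  have hβub : ∀ m (x : Q), (B ^ m).mulVec one x ≤ β m := fun m x =>
    Stmt4Aux.Bpow_geom hnonneg hrow hy hy1 hymin hall m x
  have hβlb : ∀ m (x : Q), 0 ≤ (B ^ m).mulVec one x := fun m x =>
    Stmt4Aux.Bpow_one_nonneg hnonneg m x
  have hβ0 : ∀ m, 0 ≤ β m := fun m => pow_nonneg (by linarith) _
  have hβsum : ∀ n, ∑ m ∈ Finset.range n, β m ≤ k / a := fun n =>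
    Stmt4Aux.sum_geom_div ha0 ha1 hk1 n
  -- the pure part h
  set h : ℕ → Q → ℝ := fun n x => g n x - (G ^ n).mulVec (g 0) x with hhdef
  have hGpow : ∀ n (x : Q), 0 ≤ (G ^ n).mulVec (g 0) x ∧ (G ^ n).mulVec (g 0) x ≤ gmax := by
    intro n
    induction n with
    | zero => intro x; rw [pow_zero, Matrix.one_mulVec]; exact hg0 x
    | succ n ih =>
      intro x
      have hrw : (G ^ (n+1)).mulVec (g 0) = G.mulVec ((G ^ n).mulVec (g 0)) := by
        rw [Matrix.mulVec_mulVec, ← pow_succ']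
      rw [hrw]
      constructor
      · exact Stmt4Aux.mulVec_nonneg hnonneg (fun y => (ih y).1) x
      · calc G.mulVec ((G ^ n).mulVec (g 0)) x ≤ G.mulVec (fun _ => gmax) x :=
            Stmt4Aux.mulVec_mono hnonneg (fun y => (ih y).2) x
          _ = gmax := by
            have hc : G.mulVec (fun _ => gmax) x = (∑ q', G x q') * gmax := by
              simp [Matrix.mulVec, dotProduct, Finset.sum_mul]
            rw [hc, hrow x, one_mul]
  have hh0 : ∀ x, h 0 x = 0 := by
    intro x; simp only [hhdef]; rw [pow_zero, Matrix.one_mulVec]; ring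
  have hhrec : ∀ n (x : Q), h (n+1) x = r x + G.mulVec (h n) x := by
    intro n x
    have h2 : G.mulVec (h n) x = G.mulVec (g n) x - G.mulVec ((G ^ n).mulVec (g 0)) x := by
      have h1 : h n = g n - (G ^ n).mulVec (g 0) := rfl
      rw [h1, Matrix.mulVec_sub]; rfl
    have h3 : (G ^ (n+1)).mulVec (g 0) x = G.mulVec ((G ^ n).mulVec (g 0)) x := by
      rw [Matrix.mulVec_mulVec, ← pow_succ']
    have h4 : g (n+1) x = r x + G.mulVec (g n) x := by rw [hrec n]
    simp only [hhdef]
    rw [h4, h3, h2]; ring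
  have hLip : ∀ t, |h (t+1) s - h t s| ≤ rmax := by
    have main : ∀ t (x : Q), |h (t+1) x - h t x| ≤ rmax := by
      intro t
      induction t with
      | zero =>
        intro x
        have h1 : h 1 x = r x := by
          rw [hhrec 0 x]
          have hz : h 0 = 0 := funext hh0
          rw [hz, Matrix.mulVec_zero]; simp
        rw [h1, hh0 x, sub_zero]; exact hr x
      | succ t ih =>
        intro x
        have hd : h (t+2) x - h (t+1) x = G.mulVec (fun y => h (t+1) y - h t y) x := by
          rw [hhrec (t+1) x, hhrec t x]
          have hfun : (fun y => h (t+1) y - h t y) = h (t+1) - h t := rfl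
          rw [hfun, Matrix.mulVec_sub, Pi.sub_apply]; ring
        rw [hd]
        have habs : |∑ q', G x q' * (h (t+1) q' - h t q')| ≤ ∑ q', G x q' * rmax := by
          calc |∑ q', G x q' * (h (t+1) q' - h t q')|
              ≤ ∑ q', |G x q' * (h (t+1) q' - h t q')| := Finset.abs_sum_le_sum_abs _ _
            _ ≤ ∑ q', G x q' * rmax := Finset.sum_le_sum fun y _ => by
                rw [abs_mul, abs_of_nonneg (hnonneg x y)]
                exact mul_le_mul_of_nonneg_left (ih y) (hnonneg x y)
        have hsum : ∑ q', G x q' * rmax = rmax := by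
          rw [← Finset.sum_mul, hrow x, one_mul]
        rw [hsum] at habs
        exact habs
    exact fun t => main t s
  set e : Q → ℝ := fun x => G x s with hedef
  have hsplitvec : ∀ (v : Q → ℝ) (x : Q), G.mulVec v x = B.mulVec v x + e x * v s := by
    intro v x
    show ∑ q', G x q' * v q' = ∑ q', B x q' * v q' + e x * v s
    rw [Finset.sum_eq_add_sum_sdiff_singleton_of_mem (Finset.mem_univ s) (fun z => G x z * v z),
        Finset.sum_eq_add_sum_sdiff_singleton_of_mem (Finset.mem_univ s) (fun z => B x z * v z)]
    have h0 : B x s = 0 := by rw [hBdef]; simp [Stmt4Aux.Bmat]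
    have heq : ∑ z ∈ Finset.univ \ {s}, B x z * v z
        = ∑ z ∈ Finset.univ \ {s}, G x z * v z := by
      refine Finset.sum_congr rfl fun z hz => ?_
      rcases Finset.mem_sdiff.mp hz with ⟨_, hzs⟩
      have hzs' : z ≠ s := by simpa using hzs
      rw [hBdef]; simp [Stmt4Aux.Bmat, hzs']
    have hes : e x = G x s := rfl
    rw [h0, heq, hes]; ring
  -- key identity
  have KI : ∀ n (x : Q), h n x = (∑ j ∈ Finset.range n, (B ^ j).mulVec r x)
      + ∑ j ∈ Finset.range n, h (n-1-j) s * (B ^ j).mulVec e x := by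
    intro n
    induction n with
    | zero => intro x; simp [hh0 x]
    | succ n ih =>
      intro x
      have hfun : h n = fun z => ∑ j ∈ Finset.range n,
          ((B ^ j).mulVec r z + h (n-1-j) s * (B ^ j).mulVec e z) := by
        funext z; rw [ih z, Finset.sum_add_distrib]
      have hterm : ∀ j ∈ Finset.range n,
          B.mulVec (fun z => (B ^ j).mulVec r z + h (n-1-j) s * (B ^ j).mulVec e z) x
          = (B ^ (j+1)).mulVec r x + h (n-1-j) s * (B ^ (j+1)).mulVec e x := by
        intro j _
        rw [Stmt4Aux.mulVec_comb]
        rw [Matrix.mulVec_mulVec, ← pow_succ', Matrix.mulVec_mulVec, ← pow_succ']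
      have hBh : B.mulVec (h n) x = (∑ j ∈ Finset.range n, (B ^ (j+1)).mulVec r x)
          + ∑ j ∈ Finset.range n, h (n-1-j) s * (B ^ (j+1)).mulVec e x := by
        conv_lhs => rw [hfun]
        rw [Stmt4Aux.mulVec_sum_fun, Finset.sum_congr rfl hterm, Finset.sum_add_distrib]
      rw [hhrec n x, hsplitvec (h n) x, hBh]
      rw [Finset.sum_range_succ' (fun j => (B ^ j).mulVec r x) n]
      rw [Finset.sum_range_succ' (fun j => h (n+1-1-j) s * (B ^ j).mulVec e x) n]
      have hs2 : ∑ j ∈ Finset.range n, h (n+1-1-(j+1)) s * (B ^ (j+1)).mulVec e x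
          = ∑ j ∈ Finset.range n, h (n-1-j) s * (B ^ (j+1)).mulVec e x := by
        refine Finset.sum_congr rfl fun j _ => ?_
        congr 2
        omega
      rw [hs2]
      have hz1 : (B ^ 0).mulVec r x = r x := by rw [pow_zero, Matrix.one_mulVec]
      have hz2 : (B ^ 0).mulVec e x = e x := by rw [pow_zero, Matrix.one_mulVec]
      have hz3 : n + 1 - 1 - 0 = n := by omega
      rw [hz1, hz2, hz3]
      ring
  -- telescoping
  have TS : ∀ m (x : Q), ∑ j ∈ Finset.range m, (B ^ j).mulVec e x
      = 1 - (B ^ m).mulVec one x := by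
    intro m x
    have he1 : e = fun z => one z - B.mulVec one z := by
      funext z
      have h1 := hsplitvec one z
      have h2 : G.mulVec one z = 1 := by
        have hc : G.mulVec one z = ∑ q', G z q' := by
          simp [Matrix.mulVec, dotProduct, honedef]
        rw [hc, hrow z]
      have h3 : one s = 1 := rfl
      rw [h3, mul_one] at h1
      have h4 : one z = 1 := rfl
      rw [h4]
      linarith [h1, h2]
    have hterm : ∀ j, (B ^ j).mulVec e x
        = (B ^ j).mulVec one x - (B ^ (j+1)).mulVec one x := by
      intro j
      have hf : e = one - B.mulVec one := by rw [he1]; rfl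
      rw [hf, Matrix.mulVec_sub, Pi.sub_apply, Matrix.mulVec_mulVec, ← pow_succ]
    calc ∑ j ∈ Finset.range m, (B ^ j).mulVec e x
        = ∑ j ∈ Finset.range m, ((B ^ j).mulVec one x - (B ^ (j+1)).mulVec one x) :=
          Finset.sum_congr rfl fun j _ => hterm j
      _ = (B ^ 0).mulVec one x - (B ^ m).mulVec one x :=
          Finset.sum_range_sub' (fun t => (B ^ t).mulVec one x) m
      _ = 1 - (B ^ m).mulVec one x := by rw [pow_zero, Matrix.one_mulVec]
  -- the main estimate
  intro n p q
  have hBj_bound : ∀ j (x : Q), |(B ^ j).mulVec r x| ≤ rmax * β j := by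
    intro j x
    have h1 : |∑ q', (B ^ j) x q' * r q'| ≤ ∑ q', (B ^ j) x q' * rmax := by
      calc |∑ q', (B ^ j) x q' * r q'| ≤ ∑ q', |(B ^ j) x q' * r q'| :=
            Finset.abs_sum_le_sum_abs _ _
        _ ≤ ∑ q', (B ^ j) x q' * rmax := Finset.sum_le_sum fun y _ => by
            rw [abs_mul, abs_of_nonneg (Stmt4Aux.Bpow_nonneg hnonneg j x y)]
            exact mul_le_mul_of_nonneg_left (hr y) (Stmt4Aux.Bpow_nonneg hnonneg j x y)
    have h2 : ∑ q', (B ^ j) x q' * rmax = (B ^ j).mulVec one x * rmax := by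
      simp [Matrix.mulVec, dotProduct, honedef, Finset.sum_mul]
    have h3 : (B ^ j).mulVec one x * rmax ≤ β j * rmax :=
      mul_le_mul_of_nonneg_right (hβub j x) hrmax
    calc |(B ^ j).mulVec r x| = |∑ q', (B ^ j) x q' * r q'| := rfl
      _ ≤ ∑ q', (B ^ j) x q' * rmax := h1
      _ = (B ^ j).mulVec one x * rmax := h2
      _ ≤ β j * rmax := h3
      _ = rmax * β j := by ring
  have hE1 : |∑ j ∈ Finset.range n, ((B ^ j).mulVec r p - (B ^ j).mulVec r q)|
      ≤ 2 * rmax * (k / a) := by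
    calc |∑ j ∈ Finset.range n, ((B ^ j).mulVec r p - (B ^ j).mulVec r q)|
        ≤ ∑ j ∈ Finset.range n, |(B ^ j).mulVec r p - (B ^ j).mulVec r q| :=
          Finset.abs_sum_le_sum_abs _ _
      _ ≤ ∑ j ∈ Finset.range n, 2 * rmax * β j := Finset.sum_le_sum fun j _ => by
          have := hBj_bound j p
          have := hBj_bound j q
          have h1 := abs_sub (((B ^ j).mulVec r) p) (((B ^ j).mulVec r) q)
          calc |(B ^ j).mulVec r p - (B ^ j).mulVec r q|
              ≤ |(B ^ j).mulVec r p| + |(B ^ j).mulVec r q| := abs_sub _ _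
            _ ≤ rmax * β j + rmax * β j := add_le_add (hBj_bound j p) (hBj_bound j q)
            _ = 2 * rmax * β j := by ring
      _ = 2 * rmax * ∑ j ∈ Finset.range n, β j := by rw [Finset.mul_sum]
      _ ≤ 2 * rmax * (k / a) := by
          apply mul_le_mul_of_nonneg_left (hβsum n) (by positivity)
  -- second part
  have hW : ∀ m, |∑ j ∈ Finset.range m, ((B ^ j).mulVec e p - (B ^ j).mulVec e q)| ≤ β m := by
    intro m
    have h1 : ∑ j ∈ Finset.range m, ((B ^ j).mulVec e p - (B ^ j).mulVec e q)
        = (B ^ m).mulVec one q - (B ^ m).mulVec one p := by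
      rw [Finset.sum_sub_distrib, TS m p, TS m q]; ring
    rw [h1]
    rw [abs_le]
    constructor
    · have := hβub m p; have := hβlb m q; linarith
    · have := hβub m q; have := hβlb m p; linarith
  have hE2 : |∑ j ∈ Finset.range n, h (n-1-j) s * ((B ^ j).mulVec e p - (B ^ j).mulVec e q)|
      ≤ rmax * (k / a) := by
    set w : ℕ → ℝ := fun j => (B ^ j).mulVec e p - (B ^ j).mulVec e q with hwdef
    have s1 : ∑ j ∈ Finset.range n, h (n-1-j) s * w j
        = ∑ i ∈ Finset.range n, h i s * w (n-1-i) := by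
      have hre := Finset.sum_range_reflect (fun i => h i s * w (n-1-i)) n
      rw [← hre]
      refine Finset.sum_congr rfl fun j hj => ?_
      rw [Finset.mem_range] at hj
      congr 2
      omega
    have s2 : ∀ i, h i s = ∑ t ∈ Finset.range i, (h (t+1) s - h t s) := by
      intro i
      rw [Finset.sum_range_sub (fun t => h t s) i, hh0 s, sub_zero]
    have s3 : ∑ i ∈ Finset.range n, h i s * w (n-1-i)
        = ∑ t ∈ Finset.range n, (h (t+1) s - h t s)
            * ∑ i ∈ Finset.Ico (t+1) n, w (n-1-i) := by
      calc ∑ i ∈ Finset.range n, h i s * w (n-1-i)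
          = ∑ i ∈ Finset.range n, ∑ t ∈ Finset.range i,
              (h (t+1) s - h t s) * w (n-1-i) := by
            refine Finset.sum_congr rfl fun i _ => ?_
            rw [s2 i, Finset.sum_mul]
        _ = ∑ t ∈ Finset.range n, ∑ i ∈ Finset.Ico (t+1) n,
              (h (t+1) s - h t s) * w (n-1-i) :=
            Stmt4Aux.sum_exchange (fun t i => (h (t+1) s - h t s) * w (n-1-i)) n
        _ = ∑ t ∈ Finset.range n, (h (t+1) s - h t s)
              * ∑ i ∈ Finset.Ico (t+1) n, w (n-1-i) := by
            refine Finset.sum_congr rfl fun t _ => ?_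
            rw [Finset.mul_sum]
    have s4 : ∀ t, t < n → ∑ i ∈ Finset.Ico (t+1) n, w (n-1-i)
        = ∑ j ∈ Finset.range (n-1-t), w j := by
      intro t ht
      rw [Finset.sum_Ico_eq_sum_range]
      have hm : n - (t+1) = n - 1 - t := by omega
      rw [hm]
      have hcong : ∀ u ∈ Finset.range (n-1-t), w (n-1-(t+1+u)) = w ((n-1-t) - 1 - u) := by
        intro u hu
        rw [Finset.mem_range] at hu
        congr 1
        omega
      rw [Finset.sum_congr rfl hcong]
      exact Finset.sum_range_reflect w (n-1-t)
    rw [s1, s3]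
    calc |∑ t ∈ Finset.range n, (h (t+1) s - h t s) * ∑ i ∈ Finset.Ico (t+1) n, w (n-1-i)|
        ≤ ∑ t ∈ Finset.range n, |(h (t+1) s - h t s) * ∑ i ∈ Finset.Ico (t+1) n, w (n-1-i)| :=
          Finset.abs_sum_le_sum_abs _ _
      _ ≤ ∑ t ∈ Finset.range n, rmax * β (n-1-t) := by
          refine Finset.sum_le_sum fun t ht => ?_
          rw [Finset.mem_range] at ht
          rw [abs_mul, s4 t ht]
          exact mul_le_mul (hLip t) (hW (n-1-t)) (abs_nonneg _) hrmax
      _ = rmax * ∑ t ∈ Finset.range n, β (n-1-t) := by rw [Finset.mul_sum]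
      _ = rmax * ∑ m ∈ Finset.range n, β m := by rw [Finset.sum_range_reflect β n]
      _ ≤ rmax * (k / a) := mul_le_mul_of_nonneg_left (hβsum n) hrmax
  -- assemble
  have hdiff : g n p - g n q = ((G ^ n).mulVec (g 0) p - (G ^ n).mulVec (g 0) q)
      + (h n p - h n q) := by
    simp only [hhdef]; ring
  have hE : h n p - h n q
      = (∑ j ∈ Finset.range n, ((B ^ j).mulVec r p - (B ^ j).mulVec r q))
        + ∑ j ∈ Finset.range n, h (n-1-j) s * ((B ^ j).mulVec e p - (B ^ j).mulVec e q) := by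
    have hc : ∑ j ∈ Finset.range n, h (n-1-j) s * ((B ^ j).mulVec e p - (B ^ j).mulVec e q)
        = ∑ j ∈ Finset.range n, h (n-1-j) s * (B ^ j).mulVec e p
            - ∑ j ∈ Finset.range n, h (n-1-j) s * (B ^ j).mulVec e q := by
      rw [← Finset.sum_sub_distrib]
      exact Finset.sum_congr rfl fun j _ => by ring
    rw [KI n p, KI n q, Finset.sum_sub_distrib, hc]
    ring
  have hG0 : |(G ^ n).mulVec (g 0) p - (G ^ n).mulVec (g 0) q| ≤ gmax := by
    rw [abs_le]
    constructor
    · have := (hGpow n p).1; have := (hGpow n q).2; linarith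
    · have := (hGpow n q).1; have := (hGpow n p).2; linarith
  have hka : (0:ℝ) ≤ (k:ℝ) / a := by positivity
  have hfinal : |g n p - g n q| ≤ gmax + 2 * rmax * ((k:ℝ)/a) + rmax * ((k:ℝ)/a) := by
    rw [hdiff]
    calc |((G ^ n).mulVec (g 0) p - (G ^ n).mulVec (g 0) q) + (h n p - h n q)|
        ≤ |(G ^ n).mulVec (g 0) p - (G ^ n).mulVec (g 0) q| + |h n p - h n q| := abs_add_le _ _
      _ ≤ gmax + (2 * rmax * ((k:ℝ)/a) + rmax * ((k:ℝ)/a)) := by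
          refine add_le_add hG0 ?_
          rw [hE]
          calc |_ + _| ≤ _ := abs_add_le _ _
            _ ≤ 2 * rmax * ((k:ℝ)/a) + rmax * ((k:ℝ)/a) := add_le_add hE1 hE2
      _ = gmax + 2 * rmax * ((k:ℝ)/a) + rmax * ((k:ℝ)/a) := by ring
  have hgoal : gmax + 2 * rmax * ((k:ℝ)/a) + rmax * ((k:ℝ)/a)
      ≤ gmax + 2 * (10 * (k:ℝ) / ymin ^ k) * rmax := by
    have hrw : (10 * (k:ℝ) / ymin ^ k) = 10 * ((k:ℝ) / a) := by
      rw [hadef, mul_div_assoc]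
    rw [hrw]
    nlinarith [mul_nonneg hrmax hka]
  exact le_trans hfinal hgoal
end

section
/- Let R = post*(p(0)) be an infinite set of configurations of a one-counter VASS with control states Q such that R ⊆ pre*(p(0)). For each i ∈ ℕ, let L_i = {q ∈ Q : q(i) ∈ R}. Then there exists τ with 1 ≤ τ ≤ |Q| such that L_i ⊆ L_{i+τ} for every i ∈ ℕ, and L_i = L_{i+τ} for every i ≥ |Q|². -/
/-- One step of a one-counter VASS with rules `δ` (rule `δ p κ q` moves from control
state `p` to `q` changing the counter by `κ`; decrements are only enabled at positive
counter values, which is automatic since counters live in `ℕ`). -/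
def OCStep {Q : Type*} (δ : Q → ℤ → Q → Prop) (c c' : Q × ℕ) : Prop :=
  ∃ κ : ℤ, δ c.1 κ c'.1 ∧ (c'.2 : ℤ) = (c.2 : ℤ) + κ

/-- Reachability in a one-counter VASS. -/
def OCReach {Q : Type*} (δ : Q → ℤ → Q → Prop) : Q × ℕ → Q × ℕ → Prop :=
  Relation.ReflTransGen (OCStep δ)

section Aux
variable {Q : Type*} (δ : Q → ℤ → Q → Prop)

/-- A step whose endpoints both have counter at least `d`. -/
def OCStepAbove (d : ℕ) (c c' : Q × ℕ) : Prop :=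
  OCStep δ c c' ∧ d ≤ c.2 ∧ d ≤ c'.2

lemma ocstep_shift_up (s : ℕ) {c c' : Q × ℕ} (h : OCStep δ c c') :
    OCStep δ (c.1, c.2 + s) (c'.1, c'.2 + s) := by
  obtain ⟨κ, h1, h2⟩ := h
  refine ⟨κ, h1, ?_⟩
  push_cast
  omega

lemma ocreach_shift_up (s : ℕ) {c c' : Q × ℕ} (h : OCReach δ c c') :
    OCReach δ (c.1, c.2 + s) (c'.1, c'.2 + s) := by
  induction h with
  | refl => exact Relation.ReflTransGen.refl
  | tail _ hstep ih => exact ih.tail (ocstep_shift_up δ s hstep)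

lemma ocstep_shift_down (d : ℕ) {c c' : Q × ℕ} (h : OCStepAbove δ d c c') :
    OCStep δ (c.1, c.2 - d) (c'.1, c'.2 - d) := by
  obtain ⟨⟨κ, h1, h2⟩, hd, hd'⟩ := h
  refine ⟨κ, h1, ?_⟩
  simp only [Nat.cast_sub hd, Nat.cast_sub hd']
  linarith

lemma ocreach_shift_down (d : ℕ) {c c' : Q × ℕ}
    (h : Relation.ReflTransGen (OCStepAbove δ d) c c') :
    OCReach δ (c.1, c.2 - d) (c'.1, c'.2 - d) := by
  induction h with
  | refl => exact Relation.ReflTransGen.refl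
  | tail _ hstep ih => exact ih.tail (ocstep_shift_down δ d hstep)

lemma ocstepAbove_mono {d e : ℕ} (hde : d ≤ e) {c c' : Q × ℕ}
    (h : OCStepAbove δ e c c') : OCStepAbove δ d c c' :=
  ⟨h.1, hde.trans h.2.1, hde.trans h.2.2⟩

/-- Last-visit decomposition: a path from `(s,m)` ending at counter value `≥ k` (with
`m ≤ k`) passes through level `k` one last time, after which it stays at level `≥ k`. -/
lemma lastVisit (hκ : ∀ a k b, δ a k b → k = -1 ∨ k = 0 ∨ k = 1)
    {s : Q} {m : ℕ} {c : Q × ℕ} (h : OCReach δ (s, m) c) :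
    ∀ k, m ≤ k → k ≤ c.2 →
      ∃ r : Q, OCReach δ (s, m) (r, k) ∧
        Relation.ReflTransGen (OCStepAbove δ k) (r, k) c := by
  induction h with
  | refl =>
      intro k h1 h2
      obtain rfl : k = m := le_antisymm h2 h1
      exact ⟨s, Relation.ReflTransGen.refl, Relation.ReflTransGen.refl⟩
  | @tail c' c'' hpath hstep ih =>
      intro k h1 h2
      by_cases hk : k ≤ c'.2
      · obtain ⟨r, hr1, hr2⟩ := ih k h1 hk
        exact ⟨r, hr1, hr2.tail ⟨hstep, hk, h2⟩⟩
      · have hkc : k = c''.2 := by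
          obtain ⟨κ, hδ, he⟩ := hstep
          rcases hκ _ _ _ hδ with rfl | rfl | rfl <;> omega
        subst hkc
        exact ⟨c''.1, hpath.tail hstep, Relation.ReflTransGen.refl⟩

/-- Pumping: two reachable configurations with the same state give a counter pump. -/
lemma pump {p : Q} (hback : ∀ c : Q × ℕ, OCReach δ (p, 0) c → OCReach δ c (p, 0))
    {r : Q} {a b : ℕ} (hab : a ≤ b)
    (hra : OCReach δ (p, 0) (r, a)) (hrb : OCReach δ (p, 0) (r, b)) :
    OCReach δ (p, 0) (p, b - a) := by
  have h1 : OCReach δ (r, a) (p, 0) := hback (r, a) hra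
  have h2 := ocreach_shift_up δ (b - a) h1
  simp only [Nat.add_sub_cancel' hab, Nat.zero_add] at h2
  exact hrb.trans h2

lemma mono_pump {p : Q} {τ : ℕ} (hτ : OCReach δ (p, 0) (p, τ))
    {q : Q} {i : ℕ} (h : OCReach δ (p, 0) (q, i)) :
    OCReach δ (p, 0) (q, i + τ) := by
  have h2 := ocreach_shift_up δ τ h
  simp only [Nat.zero_add] at h2
  exact hτ.trans h2

lemma pump_mul {p : Q} {τ : ℕ} (hτ : OCReach δ (p, 0) (p, τ)) (k : ℕ) :
    OCReach δ (p, 0) (p, k * τ) := by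
  induction k with
  | zero => simp only [Nat.zero_mul]; exact Relation.ReflTransGen.refl
  | succ k ih =>
      have := mono_pump δ hτ ih
      rwa [show k * τ + τ = (k + 1) * τ by ring] at this

end Aux

section Main
variable {Q : Type*} [Fintype Q]

/-- Unpumping at high counter values. -/
lemma unpump (δ : Q → ℤ → Q → Prop) (p : Q)
    (hκ : ∀ a k b, δ a k b → k = -1 ∨ k = 0 ∨ k = 1)
    {τ : ℕ} (hτ : OCReach δ (p, 0) (p, τ)) (hτ1 : 1 ≤ τ) (hτC : τ ≤ Fintype.card Q)
    {q : Q} {n : ℕ} (hn : Fintype.card Q ^ 2 ≤ n)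
    (h : OCReach δ (p, 0) (q, n)) :
    OCReach δ (p, 0) (q, n - τ) := by
  classical
  have hne : Nonempty Q := ⟨p⟩
  set C := Fintype.card Q with hC
  -- choose last-visit data for each level k ≤ C^2
  have H : ∀ k, k ≤ C ^ 2 → ∃ r : Q, OCReach δ (p, 0) (r, k) ∧
      Relation.ReflTransGen (OCStepAbove δ k) (r, k) (q, n) := by
    intro k hk
    exact lastVisit δ hκ h k (Nat.zero_le _) (hk.trans hn)
  choose! f hf1 hf2 using H
  -- pigeonhole on (state, residue mod τ)
  have hcard : (Finset.univ ×ˢ Finset.range τ : Finset (Q × ℕ)).card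
      < (Finset.range (C ^ 2 + 1)).card := by
    rw [Finset.card_product, Finset.card_univ, Finset.card_range, Finset.card_range]
    have : C * τ ≤ C * C := Nat.mul_le_mul_left C hτC
    nlinarith [sq_nonneg C]
  obtain ⟨a, ha, b, hb, hab_ne, heq⟩ :=
    Finset.exists_ne_map_eq_of_card_lt_of_maps_to (f := fun k => (f k, k % τ)) hcard
      (fun k _ => by
        simp only [Finset.mem_coe, Finset.mem_product, Finset.mem_univ, Finset.mem_range, true_and]
        exact Nat.mod_lt _ hτ1)
  simp only [Finset.mem_range] at ha hb
  -- wlog a < b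
  wlog hlt : a < b generalizing a b
  · exact this b a hab_ne.symm heq.symm hb ha (by omega)
  have hfab : f a = f b := congrArg Prod.fst heq
  have hmod : a % τ = b % τ := congrArg Prod.snd heq
  have hdvd : τ ∣ b - a := (Nat.modEq_iff_dvd' hlt.le).mp hmod
  have haC : a ≤ C ^ 2 := by omega
  have hbC : b ≤ C ^ 2 := by omega
  -- cut out the segment between the last visits of levels a and b
  have hsuf : Relation.ReflTransGen (OCStepAbove δ (b - a)) (f b, b) (q, n) :=
    Relation.ReflTransGen.mono (fun c c' hcc => ocstepAbove_mono δ (Nat.sub_le _ _) hcc) _ _ (hf2 b hbC)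
  have hdown := ocreach_shift_down δ (b - a) hsuf
  simp only at hdown
  rw [show b - (b - a) = a by omega] at hdown
  rw [← hfab] at hdown
  have hcut : OCReach δ (p, 0) (q, n - (b - a)) := (hf1 a haC).trans hdown
  -- pump back up by (b - a) - τ (a multiple of τ)
  have hτle : τ ≤ b - a := Nat.le_of_dvd (by omega) hdvd
  obtain ⟨m, hm⟩ := hdvd
  obtain ⟨j, hj⟩ : ∃ j, (b - a) - τ = j * τ := by
    refine ⟨m - 1, ?_⟩
    have hm1 : 1 ≤ m := by nlinarith [Nat.sub_pos_of_lt hlt]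
    rw [hm]
    cases m with
    | zero => omega
    | succ m' => simp [Nat.succ_mul]; ring_nf; omega
  have hup := mono_pump δ (pump_mul δ hτ j) hcut
  rwa [show n - (b - a) + j * τ = n - τ by omega] at hup

end Main


/-- Let `R = post*(p(0))` be infinite with `R ⊆ pre*(p(0))`, and let
`L i = {q | q(i) ∈ R}`.  Then there is `τ` with `1 ≤ τ ≤ |Q|` such that
`L i ⊆ L (i+τ)` for all `i`, and `L i = L (i+τ)` for all `i ≥ |Q|²`. -/
theorem stmt7 {Q : Type*} [Fintype Q] (δ : Q → ℤ → Q → Prop) (p : Q)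
    (hκ : ∀ a k b, δ a k b → k = -1 ∨ k = 0 ∨ k = 1)
    (hinf : {c : Q × ℕ | OCReach δ (p, 0) c}.Infinite)
    (hback : ∀ c : Q × ℕ, OCReach δ (p, 0) c → OCReach δ c (p, 0)) :
    ∃ τ : ℕ, 1 ≤ τ ∧ τ ≤ Fintype.card Q ∧
      (∀ i : ℕ, {q : Q | OCReach δ (p, 0) (q, i)} ⊆ {q : Q | OCReach δ (p, 0) (q, i + τ)}) ∧
      (∀ i : ℕ, Fintype.card Q ^ 2 ≤ i →
        {q : Q | OCReach δ (p, 0) (q, i)} = {q : Q | OCReach δ (p, 0) (q, i + τ)}) := by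
  classical
  set C := Fintype.card Q with hC
  -- a reachable configuration with a large counter exists
  obtain ⟨c0, hc0, hN⟩ : ∃ c : Q × ℕ, OCReach δ (p, 0) c ∧ C ≤ c.2 := by
    by_contra hcon
    push_neg at hcon
    exact hinf (((Set.finite_univ (α := Q)).prod (Set.finite_Iio C)).subset
      (fun c hc => ⟨Set.mem_univ _, hcon c hc⟩))
  have hQne : Nonempty Q := ⟨p⟩
  have H1 : ∀ k, k ≤ C → ∃ r : Q, OCReach δ (p, 0) (r, k) := by
    intro k hk
    obtain ⟨r, hr, -⟩ := lastVisit δ hκ hc0 k (Nat.zero_le _) (hk.trans hN)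
    exact ⟨r, hr⟩
  choose! f hf using H1
  obtain ⟨a, ha, b, hb, hne, heq⟩ :=
    Finset.exists_ne_map_eq_of_card_lt_of_maps_to (s := Finset.range (C + 1))
      (t := (Finset.univ : Finset Q)) (f := fun k => f k)
      (by simp [hC]) (fun k _ => Finset.mem_univ (f k))
  simp only [Finset.mem_range] at ha hb
  wlog hlt : a < b generalizing a b
  · exact this b a hne.symm heq.symm hb ha (by omega)
  -- the pump amount
  refine ⟨b - a, by omega, by omega, ?_, ?_⟩
  all_goals
    have hτ : OCReach δ (p, 0) (p, b - a) := by
      have hra : OCReach δ (p, 0) (f a, a) := hf a (by omega)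
      have hrb : OCReach δ (p, 0) (f a, b) := heq ▸ hf b (by omega)
      exact pump δ hback hlt.le hra hrb
  · intro i q hq
    exact mono_pump δ hτ hq
  · intro i hi
    apply Set.Subset.antisymm
    · intro q hq
      exact mono_pump δ hτ hq
    · intro q hq
      have := unpump δ p hκ hτ (by omega) (by rw [← hC]; omega) (n := i + (b - a))
        (by rw [← hC]; omega) hq
      rwa [Nat.add_sub_cancel] at this
end

section
/- Let R = post*(p(0)) be an infinite strongly connected set of configurations of a one-counter VASS (i.e., R ⊆ pre*(p(0))) with control state set Q. Then every configuration in pre*(R) can reach a configuration of R by a path of length at most 4|Q|³. -/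
/-- Reachability by a path of at most `n` transitions. -/
def OCReachIn {Q : Type*} (δ : Q → ℤ → Q → Prop) (n : ℕ) (c c' : Q × ℕ) : Prop :=
  ∃ m ≤ n, ∃ w : ℕ → Q × ℕ, w 0 = c ∧ w m = c' ∧ ∀ i < m, OCStep δ (w i) (w (i + 1))

set_option linter.unusedSectionVars false
set_option linter.unusedVariables false
set_option linter.unusedTactic false

namespace OCAux

section basic


variable {Q : Type*} {δ : Q → ℤ → Q → Prop}

/-- paths as indexed sequences -/
def PathN (δ : Q → ℤ → Q → Prop) (w : ℕ → Q × ℕ) (m : ℕ) : Prop :=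
  ∀ i, i < m → OCStep δ (w i) (w (i+1))

lemma step_shift_up {c c' : Q × ℕ} (x : ℕ) (h : OCStep δ c c') :
    OCStep δ (c.1, c.2 + x) (c'.1, c'.2 + x) := by
  obtain ⟨κ, h1, h2⟩ := h
  exact ⟨κ, h1, by push_cast; push_cast at h2; omega⟩

lemma step_shift_down {c c' : Q × ℕ} (x : ℕ) (h : OCStep δ c c')
    (hc : x ≤ c.2) (hc' : x ≤ c'.2) :
    OCStep δ (c.1, c.2 - x) (c'.1, c'.2 - x) := by
  obtain ⟨κ, h1, h2⟩ := h
  refine ⟨κ, h1, ?_⟩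
  have : ((c'.2 - x : ℕ) : ℤ) = (c'.2 : ℤ) - x := by omega
  have h3 : ((c.2 - x : ℕ) : ℤ) = (c.2 : ℤ) - x := by omega
  omega

lemma reach_shift_up {c d : Q × ℕ} (x : ℕ) (h : OCReach δ c d) :
    OCReach δ (c.1, c.2 + x) (d.1, d.2 + x) := by
  induction h with
  | refl => exact Relation.ReflTransGen.refl
  | tail _ hstep ih => exact ih.tail (step_shift_up x hstep)

lemma path_reach {w : ℕ → Q × ℕ} {m : ℕ} (hw : PathN δ w m) {a b : ℕ}
    (hab : a ≤ b) (hbm : b ≤ m) : OCReach δ (w a) (w b) := by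
  induction b with
  | zero => cases Nat.le_zero.mp hab; exact Relation.ReflTransGen.refl
  | succ b ih =>
    rcases Nat.lt_or_ge a (b+1) with hlt | hge
    · exact (ih (Nat.lt_succ_iff.mp hlt) (le_trans (Nat.le_succ b) hbm)).tail
        (hw b (by omega))
    · have : a = b + 1 := le_antisymm hab hge
      subst this; exact Relation.ReflTransGen.refl

lemma reach_path {c d : Q × ℕ} (h : OCReach δ c d) :
    ∃ m w, PathN δ w m ∧ w 0 = c ∧ w m = d := by
  induction h with
  | refl => exact ⟨0, fun _ => c, fun i hi => absurd hi (Nat.not_lt_zero i), rfl, rfl⟩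
  | @tail b e _ hstep ih =>
    obtain ⟨m, w, hw, h0, hm⟩ := ih
    refine ⟨m+1, fun i => if i ≤ m then w i else e, ?_, by simp [h0], by simp⟩
    intro i hi
    rcases Nat.lt_or_ge i m with h1 | h1
    · simpa [Nat.le_of_lt h1, Nat.succ_le_of_lt h1] using hw i h1
    · have : i = m := by omega
      subst this
      simpa [hm] using hstep

lemma path_append {w1 w2 : ℕ → Q × ℕ} {m1 m2 : ℕ} (h1 : PathN δ w1 m1)
    (h2 : PathN δ w2 m2) (hglue : w1 m1 = w2 0) :
    ∃ w, PathN δ w (m1 + m2) ∧ w 0 = w1 0 ∧ w (m1 + m2) = w2 m2 := by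
  refine ⟨fun i => if i ≤ m1 then w1 i else w2 (i - m1), ?_, by simp, ?_⟩
  · intro i hi
    rcases Nat.lt_or_ge i m1 with hc | hc
    · simpa [Nat.le_of_lt hc, Nat.succ_le_of_lt hc] using h1 i hc
    · rcases Nat.eq_or_lt_of_le hc with hc2 | hc2
      · rcases Nat.eq_zero_or_pos m2 with h0 | h0
        · omega
        · have e0 : i = m1 := hc2.symm
          subst e0
          have : ¬ (i + 1 ≤ i) := by omega
          simpa [this, hglue] using h2 0 h0
      · have e1 : ¬ (i ≤ m1) := by omega
        have e2 : ¬ (i + 1 ≤ m1) := by omega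
        have e3 : i + 1 - m1 = (i - m1) + 1 := by omega
        simp only [e1, e2, if_false, e3]
        exact h2 (i - m1) (by omega)
  · rcases Nat.eq_zero_or_pos m2 with h0 | h0
    · simp [h0, hglue]
    · have : ¬ (m1 + m2 ≤ m1) := by omega
      simp [this]

lemma path_shift_up {w : ℕ → Q × ℕ} {m : ℕ} (x : ℕ) (hw : PathN δ w m) :
    PathN δ (fun i => ((w i).1, (w i).2 + x)) m :=
  fun i hi => step_shift_up x (hw i hi)

lemma path_shift_down {w : ℕ → Q × ℕ} {m : ℕ} (x : ℕ) (hw : PathN δ w m)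
    (hx : ∀ i, i ≤ m → x ≤ (w i).2) :
    PathN δ (fun i => ((w i).1, (w i).2 - x)) m :=
  fun i hi => step_shift_down x (hw i hi) (hx i (by omega)) (hx (i+1) (by omega))

lemma path_drop {w : ℕ → Q × ℕ} {m : ℕ} (a : ℕ) (hw : PathN δ w m) :
    PathN δ (fun i => w (a + i)) (m - a) := by
  intro i hi
  have e : a + (i+1) = (a + i) + 1 := by omega
  show OCStep δ (w (a+i)) (w (a+(i+1)))
  rw [e]
  exact hw (a + i) (by omega)

lemma path_take {w : ℕ → Q × ℕ} {m b : ℕ} (hb : b ≤ m) (hw : PathN δ w m) :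
    PathN δ w b := fun i hi => hw i (by omega)

lemma step_counter {c c' : Q × ℕ} (hκ : ∀ a k b, δ a k b → k = -1 ∨ k = 0 ∨ k = 1)
    (h : OCStep δ c c') : c'.2 ≤ c.2 + 1 ∧ c.2 ≤ c'.2 + 1 := by
  obtain ⟨κ, h1, h2⟩ := h
  rcases hκ _ _ _ h1 with h3 | h3 | h3 <;> subst h3 <;> omega


end basic

section main
variable {Q : Type*} [Fintype Q] {δ : Q → ℤ → Q → Prop} {p : Q}


lemma levels (hκ : ∀ a k b, δ a k b → k = -1 ∨ k = 0 ∨ k = 1) {c : Q × ℕ} (h : OCReach δ (p,0) c) :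
    ∀ y ≤ c.2, ∃ s, OCReach δ (p,0) (s, y) := by
  induction h with
  | refl => intro y hy; exact ⟨p, by simpa using (Nat.le_zero.mp hy ▸ Relation.ReflTransGen.refl)⟩
  | @tail b e hb hstep ih =>
    intro y hy
    have hc := step_counter hκ hstep
    rcases Nat.lt_or_ge y e.2 with h1 | h1
    · exact ih y (by omega)
    · have : y = e.2 := by omega
      subst this
      exact ⟨e.1, by simpa using (show OCReach δ (p,0) e from hb.tail hstep)⟩

lemma unbounded (hinf : {c : Q × ℕ | OCReach δ (p, 0) c}.Infinite) (B : ℕ) :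
    ∃ c : Q × ℕ, OCReach δ (p,0) c ∧ B ≤ c.2 := by
  by_contra hcon
  push_neg at hcon
  apply hinf
  apply Set.Finite.subset (Set.Finite.prod (Set.finite_univ (α := Q)) (Set.finite_Iio B))
  intro c hc
  exact ⟨Set.mem_univ _, hcon c hc⟩

lemma exists_h (hκ : ∀ a k b, δ a k b → k = -1 ∨ k = 0 ∨ k = 1) (hinf : {c : Q × ℕ | OCReach δ (p, 0) c}.Infinite)
    (hback : ∀ c : Q × ℕ, OCReach δ (p, 0) c → OCReach δ c (p, 0)) :
    ∃ h, 1 ≤ h ∧ h ≤ Fintype.card Q ∧ OCReach δ (p,0) (p, h) := by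
  obtain ⟨c, hc, hcB⟩ := unbounded hinf (Fintype.card Q)
  have hlev := levels hκ hc
  have hch : ∀ y : Fin (Fintype.card Q + 1), ∃ s, OCReach δ (p,0) (s, (y:ℕ)) :=
    fun y => hlev y (by omega)
  choose f hf using hch
  obtain ⟨y, y', hne, hfe⟩ := Fintype.exists_ne_map_eq_of_card_lt f (by simp)
  wlog hlt : (y:ℕ) < (y':ℕ) generalizing y y'
  · exact this y' y hne.symm hfe.symm (by omega)
  refine ⟨(y':ℕ) - (y:ℕ), by omega, by omega, ?_⟩
  have h1 : OCReach δ (f y, (y:ℕ)) (p, 0) := hback _ (hf y)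
  have h2 := reach_shift_up ((y':ℕ) - (y:ℕ)) h1
  simp only at h2
  have e : (y:ℕ) + ((y':ℕ) - (y:ℕ)) = (y':ℕ) := by omega
  rw [e] at h2
  have e2 : (0 : ℕ) + ((y':ℕ) - (y:ℕ)) = (y':ℕ) - (y:ℕ) := by omega
  rw [e2] at h2
  rw [hfe] at h2
  exact (hf y').trans h2


lemma radd {h : ℕ} (hph : OCReach δ (p,0) (p, h)) {d : Q × ℕ} (hd : OCReach δ (p,0) d) :
    OCReach δ (p,0) (d.1, d.2 + h) := by
  have h2 := reach_shift_up h hd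
  simp only [Nat.zero_add] at h2
  exact hph.trans h2

lemma radd_mul {h : ℕ} (hph : OCReach δ (p,0) (p, h)) {d : Q × ℕ} (hd : OCReach δ (p,0) d) (k : ℕ) :
    OCReach δ (p,0) (d.1, d.2 + k * h) := by
  induction k with
  | zero => simpa using hd
  | succ k ih =>
    have := radd hph ih
    simp only at this
    have e : d.2 + k * h + h = d.2 + (k+1) * h := by ring
    rwa [e] at this

lemma mod_cancel {h y d : ℕ} (hh : 1 ≤ h) (he : (y + d) % h = y % h) : d % h = 0 := by
  have h1 := Nat.add_mod y d h
  have h2 : y % h < h := Nat.mod_lt _ hh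
  have h3 : d % h < h := Nat.mod_lt _ hh
  rcases Nat.lt_or_ge (y % h + d % h) h with hc | hc
  · rw [Nat.mod_eq_of_lt hc] at h1; omega
  · have h4 : (y % h + d % h) % h = y % h + d % h - h := by
      rw [Nat.mod_eq_sub_mod hc, Nat.mod_eq_of_lt (by omega)]
    omega

/-- Every configuration of `R` whose counter is at least `|Q|·h` has a class-mate
in `R` strictly below it. -/
lemma class_descent (hκ : ∀ a k b, δ a k b → k = -1 ∨ k = 0 ∨ k = 1)
    {h : ℕ} (hh : 1 ≤ h) {q : Q} {n : ℕ}
    (hq : OCReach δ (p,0) (q,n)) (hn : Fintype.card Q * h ≤ n) :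
    ∃ x, x < n ∧ x % h = n % h ∧ OCReach δ (p,0) (q,x) := by
  classical
  obtain ⟨m, w, hw, h0, hm⟩ := reach_path hq
  set W := Fintype.card Q * h with hW
  have hW1 : 1 ≤ W := by
    have : 0 < Fintype.card Q := Fintype.card_pos_iff.mpr ⟨q⟩
    have : 0 < W := by rw [hW]; positivity
    omega
  set v : ℕ → ℕ := fun i => (w i).2 with hv
  have hv0 : v 0 = 0 := by rw [hv]; simp [h0]
  have hvm : v m = n := by rw [hv]; simp [hm]
  set l : ℕ → ℕ := fun y => Nat.findGreatest (fun i => v i ≤ y) m with hl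
  have hlm : ∀ y, l y ≤ m := fun y => Nat.findGreatest_le m
  have hlle : ∀ y, v (l y) ≤ y := by
    intro y
    have := Nat.findGreatest_spec (P := fun i => v i ≤ y) (Nat.zero_le m)
      (show v 0 ≤ y by omega)
    exact this
  have hlgt : ∀ y b, l y < b → b ≤ m → y < v b := by
    intro y b h1 h2
    have := Nat.findGreatest_is_greatest (P := fun i => v i ≤ y) (n := m) h1 h2
    omega
  have hlval : ∀ y, y ≤ n → v (l y) = y := by
    intro y hy
    have hspec := hlle y
    rcases Nat.eq_or_lt_of_le (hlm y) with he | hlt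
    · rw [he] at hspec ⊢; omega
    · have hgt : y < v (l y + 1) := hlgt y (l y + 1) (Nat.lt_succ_self _) (by omega)
      have hstep := step_counter hκ (hw (l y) hlt)
      have h1 : v (l y + 1) ≤ v (l y) + 1 := hstep.1
      omega
  have hlmono : ∀ y y', y < y' → y' ≤ n → l y < l y' := by
    intro y y' h1 h2
    have hle : l y ≤ l y' :=
      Nat.findGreatest_mono (P := fun i => v i ≤ y) (Q := fun i => v i ≤ y')
        (fun i hi => by omega) (le_refl m)
    rcases Nat.eq_or_lt_of_le hle with he | hlt
    · exfalso
      have e1 : v (l y) = y := hlval y (by omega)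
      have e2 : v (l y') = y' := hlval y' h2
      rw [he] at e1; omega
    · exact hlt
  have hcard : Fintype.card (Q × Fin h) < Fintype.card (Fin (W+1)) := by
    simp [hW]
  obtain ⟨t, t', htne, hteq⟩ := Fintype.exists_ne_map_eq_of_card_lt
    (fun t : Fin (W+1) => ((w (l (n - W + (t:ℕ)))).1,
      (⟨v (l (n - W + (t:ℕ))) % h, Nat.mod_lt _ hh⟩ : Fin h))) hcard
  wlog hlt : (t:ℕ) < (t':ℕ) generalizing t t'
  · exact this t' t htne.symm hteq.symm (by omega)
  have ht2 := t.2
  have ht2' := t'.2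
  set y : ℕ := n - W + (t:ℕ) with hy
  set y' : ℕ := n - W + (t':ℕ) with hy'
  have hyn : y ≤ n := by omega
  have hy'n : y' ≤ n := by omega
  have hyy' : y < y' := by omega
  have hstate := congrArg Prod.fst hteq
  simp only at hstate
  have hres : v (l y) % h = v (l y') % h := by
    have h2 := congrArg (fun z : Q × Fin h => (z.2 : ℕ)) hteq
    simpa using h2
  have hvy : v (l y) = y := hlval y hyn
  have hvy' : v (l y') = y' := hlval y' hy'n
  set d : ℕ := y' - y with hd
  have hd1 : 1 ≤ d := by omega
  have hdW : d ≤ W := by omega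
  have hdmod : d % h = 0 := by
    apply mod_cancel hh (y := y)
    have e : y + d = y' := by omega
    rw [e, ← hvy, ← hvy']
    exact hres.symm
  have hij : l y < l y' := hlmono y y' hyy' hy'n
  have hdown : ∀ i, i ≤ m - l y' → d ≤ (w (l y' + i)).2 := by
    intro i hi
    show d ≤ v (l y' + i)
    rcases Nat.eq_zero_or_pos i with h1 | h1
    · subst h1; simp only [Nat.add_zero]; omega
    · have h2 := hlgt y' (l y' + i) (by omega) (by have := hlm y'; omega)
      omega
  have hpre : PathN δ w (l y) := path_take (hlm y) hw
  have hsuf : PathN δ (fun i => ((w (l y' + i)).1, (w (l y' + i)).2 - d)) (m - l y') :=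
    path_shift_down d (path_drop (l y') hw) hdown
  have hglue : w (l y) = ((fun i => ((w (l y' + i)).1, (w (l y' + i)).2 - d)) 0) := by
    simp only [Nat.add_zero]
    refine Prod.ext hstate ?_
    show v (l y) = v (l y') - d
    omega
  obtain ⟨w3, hw3, h30, h3e⟩ := path_append hpre hsuf hglue
  have e3 : l y' + (m - l y') = m := by have := hlm y'; omega
  rw [e3, hm] at h3e
  refine ⟨n - d, by omega, ?_, ?_⟩
  · obtain ⟨k, hk⟩ := Nat.dvd_of_mod_eq_zero hdmod
    have hk2 : d = k * h := by rw [hk]; ring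
    have e4 : n = (n - d) + k * h := by omega
    conv_rhs => rw [e4]
    rw [Nat.add_mul_mod_self_right]
  · have hre := path_reach hw3 (Nat.zero_le _) (le_refl _)
    rw [h30, h3e, h0] at hre
    have e5 : (q, n).2 - d = n - d := rfl
    simpa [e5] using hre

/-- downward closure of R in each residue class, above `|Q|·h` -/
lemma class_down (hκ : ∀ a k b, δ a k b → k = -1 ∨ k = 0 ∨ k = 1)
    {h : ℕ} (hh : 1 ≤ h) (hph : OCReach δ (p,0) (p, h)) {q : Q} {n n' : ℕ}
    (hq : OCReach δ (p,0) (q,n)) (hn' : Fintype.card Q * h ≤ n') (hle : n' ≤ n)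
    (hmod : n' % h = n % h) : OCReach δ (p,0) (q,n') := by
  classical
  have hex : ∃ x, x % h = n % h ∧ OCReach δ (p,0) (q,x) := ⟨n, rfl, hq⟩
  set n₀ := Nat.find hex with hn₀
  obtain ⟨hmod₀, hR₀⟩ := Nat.find_spec hex
  have hmin : ∀ x, x < n₀ → ¬ (x % h = n % h ∧ OCReach δ (p,0) (q,x)) :=
    fun x hx => Nat.find_min hex hx
  have hn₀n' : n₀ ≤ n' := by
    by_contra hcon
    push_neg at hcon
    obtain ⟨x, hx1, hx2, hx3⟩ := class_descent hκ hh hR₀ (by omega)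
    exact hmin x hx1 ⟨hx2.trans hmod₀, hx3⟩
  -- n' = n₀ + k * h
  have hdmod : (n' - n₀) % h = 0 := by
    apply mod_cancel hh (y := n₀)
    have e : n₀ + (n' - n₀) = n' := by omega
    rw [e, hmod₀, hmod]
  obtain ⟨k, hk⟩ := Nat.dvd_of_mod_eq_zero hdmod
  have hk2 : n' = n₀ + k * h := by
    have : n' - n₀ = h * k := hk
    have e : h * k = k * h := by ring
    omega
  have := radd_mul hph hR₀ k
  simp only at this
  rwa [← hk2] at this

/-- no big drop : a path with no "decreasing class revisit" never drops
by `|Q|·h` below an earlier value. -/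
lemma nbd (hκ : ∀ a k b, δ a k b → k = -1 ∨ k = 0 ∨ k = 1)
    {h : ℕ} (hh : 1 ≤ h) {w : ℕ → Q × ℕ} {m : ℕ} (hw : PathN δ w m)
    (hndr : ∀ i j, i < j → j ≤ m → (w i).1 = (w j).1 →
      (w i).2 % h = (w j).2 % h → (w i).2 < (w j).2) :
    ∀ a b, a ≤ b → b ≤ m → (w a).2 < (w b).2 + Fintype.card Q * h := by
  classical
  intro a b hab hbm
  by_contra hcon
  push_neg at hcon
  set W := Fintype.card Q * h with hW
  set v : ℕ → ℕ := fun i => (w i).2 with hv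
  have hcon' : v b + W ≤ v a := hcon
  have hex : ∀ y, v b ≤ y → ∃ i, a ≤ i ∧ v i ≤ y := fun y hy => ⟨b, hab, by omega⟩
  set f : ℕ → ℕ := fun y => if hy : v b ≤ y then Nat.find (hex y hy) else 0 with hf
  have hfspec : ∀ y, (hy : v b ≤ y) → a ≤ f y ∧ v (f y) ≤ y := by
    intro y hy
    have := Nat.find_spec (hex y hy)
    simp only [hf, dif_pos hy]
    exact this
  have hfb : ∀ y, (hy : v b ≤ y) → f y ≤ b := by
    intro y hy
    simp only [hf, dif_pos hy]
    exact Nat.find_min' (hex y hy) ⟨hab, by omega⟩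
  have hfval : ∀ y, v b ≤ y → y ≤ v a → v (f y) = y := by
    intro y hy hya
    obtain ⟨hfa, hfle⟩ := hfspec y hy
    rcases Nat.eq_or_lt_of_le hfa with he | hlt
    · rw [← he] at hfle ⊢; omega
    · have hprev : ¬ (a ≤ f y - 1 ∧ v (f y - 1) ≤ y) := by
        have h1 : f y - 1 < Nat.find (hex y hy) := by
          simp only [hf, dif_pos hy] at hlt ⊢
          omega
        have := Nat.find_min (hex y hy) h1
        exact this
      have hgt : y < v (f y - 1) := by
        rcases Nat.lt_or_ge y (v (f y - 1)) with hc | hc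
        · exact hc
        · exact absurd ⟨by omega, hc⟩ hprev
      have hstep := step_counter hκ (hw (f y - 1) (by have := hfb y hy; omega))
      have e : f y - 1 + 1 = f y := by omega
      rw [e] at hstep
      have hs1 : v (f y) ≤ v (f y - 1) + 1 := hstep.1
      have hs2 : v (f y - 1) ≤ v (f y) + 1 := hstep.2
      omega
  have hfmono : ∀ y y', v b ≤ y → y < y' → y' ≤ v a → f y' < f y := by
    intro y y' hy hyy' hy'a
    have h1 : f y' ≤ f y := by
      have h2 := hfspec y hy
      simp only [hf, dif_pos hy, dif_pos (show v b ≤ y' by omega)] at h2 ⊢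
      exact Nat.find_min' _ ⟨h2.1, by omega⟩
    rcases Nat.eq_or_lt_of_le h1 with he | hlt
    · exfalso
      have e1 : v (f y) = y := hfval y hy (by omega)
      have e2 : v (f y') = y' := hfval y' (by omega) hy'a
      rw [he] at e2; omega
    · exact hlt
  have hcard : Fintype.card (Q × Fin h) < Fintype.card (Fin (W+1)) := by simp [hW]
  obtain ⟨t, t', htne, hteq⟩ := Fintype.exists_ne_map_eq_of_card_lt
    (fun t : Fin (W+1) => ((w (f (v b + (t:ℕ)))).1,
      (⟨v (f (v b + (t:ℕ))) % h, Nat.mod_lt _ hh⟩ : Fin h))) hcard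
  wlog hlt : (t:ℕ) < (t':ℕ) generalizing t t'
  · exact this t' t htne.symm hteq.symm (by omega)
  have ht2 := t.2
  have ht2' := t'.2
  set y : ℕ := v b + (t:ℕ) with hy
  set y' : ℕ := v b + (t':ℕ) with hy'
  have hstate := congrArg Prod.fst hteq
  simp only at hstate
  have hres : v (f y) % h = v (f y') % h := by
    have h2 := congrArg (fun z : Q × Fin h => (z.2 : ℕ)) hteq
    simpa using h2
  have hvy : v (f y) = y := hfval y (by omega) (by omega)
  have hvy' : v (f y') = y' := hfval y' (by omega) (by omega)
  have hij : f y' < f y := hfmono y y' (by omega) (by omega) (by omega)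
  have h9 := hndr (f y') (f y) hij (by have := hfb y (by omega); omega)
    hstate.symm (show v (f y') % h = v (f y) % h from hres.symm)
  have h10 : v (f y') < v (f y) := h9
  omega

lemma shorten (hκ : ∀ a k b, δ a k b → k = -1 ∨ k = 0 ∨ k = 1)
    {h : ℕ} (hh : 1 ≤ h) (hhH : h ≤ Fintype.card Q) (hph : OCReach δ (p,0) (p,h))
    {w : ℕ → Q × ℕ} {m : ℕ} (hw : PathN δ w m) (hR : OCReach δ (p,0) (w m))
    (hm : 3 * (Fintype.card Q)^3 ≤ m) :
    ∃ m' w', m' < m ∧ PathN δ w' m' ∧ w' 0 = w 0 ∧ OCReach δ (p,0) (w' m') := by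
  classical
  set H := Fintype.card Q with hH
  have hH1 : 1 ≤ H := by
    rw [hH]; exact Fintype.card_pos_iff.mpr ⟨p⟩
  set W := H * h with hW
  have hW1 : 1 ≤ W := by
    have : 0 < W := by rw [hW]; positivity
    omega
  set v : ℕ → ℕ := fun i => (w i).2 with hv
  by_cases hdr : ∃ i j, i < j ∧ j ≤ m ∧ (w i).1 = (w j).1 ∧ v i % h = v j % h ∧ v j ≤ v i
  · -- Case A : decreasing class revisit, cut and shift the tail up
    obtain ⟨i, j, hij, hjm, hst, hmodij, hle⟩ := hdr
    set d : ℕ := v i - v j with hd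
    have hdmod : d % h = 0 := by
      apply mod_cancel hh (y := v j)
      have e : v j + d = v i := by omega
      rw [e]; exact hmodij
    have hpre : PathN δ w i := path_take (by omega) hw
    have hsuf : PathN δ (fun i2 => ((w (j + i2)).1, (w (j + i2)).2 + d)) (m - j) :=
      path_shift_up d (path_drop j hw)
    have hglue : w i = ((fun i2 => ((w (j + i2)).1, (w (j + i2)).2 + d)) 0) := by
      simp only [Nat.add_zero]
      refine Prod.ext hst ?_
      show v i = v j + d
      omega
    obtain ⟨w3, hw3, h30, h3e⟩ := path_append hpre hsuf hglue
    have e3 : j + (m - j) = m := by omega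
    rw [e3] at h3e
    refine ⟨i + (m - j), w3, by omega, hw3, h30, ?_⟩
    rw [h3e]
    obtain ⟨k, hk⟩ := Nat.dvd_of_mod_eq_zero hdmod
    have hk2 : d = k * h := by rw [hk]; ring
    rw [hk2]
    exact radd_mul hph hR k
  · push_neg at hdr
    have hndr : ∀ i j, i < j → j ≤ m → (w i).1 = (w j).1 →
        (w i).2 % h = (w j).2 % h → (w i).2 < (w j).2 := by
      intro i j h1 h2 h3 h4
      exact hdr i j h1 h2 h3 h4
    have hnbd := nbd hκ hh hw hndr
    -- max of the counter values
    set S : Finset ℕ := (Finset.range (m+1)).image v with hS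
    have hSne : S.Nonempty := ⟨v 0, Finset.mem_image.mpr ⟨0, Finset.mem_range.mpr (by omega), rfl⟩⟩
    set V : ℕ := S.max' hSne with hV
    obtain ⟨tV, htVm, htVv⟩ : ∃ i, i ≤ m ∧ v i = V := by
      have h1 := S.max'_mem hSne
      obtain ⟨i, hi, hiv⟩ := Finset.mem_image.mp h1
      exact ⟨i, by have := Finset.mem_range.mp hi; omega, hiv⟩
    have hVmax : ∀ i, i ≤ m → v i ≤ V :=
      fun i hi => S.le_max' _ (Finset.mem_image.mpr ⟨i, Finset.mem_range.mpr (by omega), rfl⟩)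
    by_cases hcl : v 0 + W ≤ V ∧ 3 * W ≤ V
    · -- Case B1 : high climb, cut a climbing segment and shift the tail down
      obtain ⟨hcl1, hcl2⟩ := hcl
      have hgex : ∀ y, y ≤ V → ∃ i, i ≤ m ∧ y ≤ v i := fun y hy => ⟨tV, htVm, by omega⟩
      set g : ℕ → ℕ := fun y => if hy : y ≤ V then Nat.find (hgex y hy) else 0 with hg
      have hgspec : ∀ y, (hy : y ≤ V) → g y ≤ m ∧ y ≤ v (g y) := by
        intro y hy
        have := Nat.find_spec (hgex y hy)
        simp only [hg, dif_pos hy]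
        exact this
      have hgval : ∀ y, v 0 ≤ y → y ≤ V → v (g y) = y := by
        intro y hy0 hy
        obtain ⟨hgm, hgle⟩ := hgspec y hy
        rcases Nat.eq_zero_or_pos (g y) with he | hpos
        · rw [he] at hgle ⊢; omega
        · have hprev : ¬ (g y - 1 ≤ m ∧ y ≤ v (g y - 1)) := by
            have h1 : g y - 1 < Nat.find (hgex y hy) := by
              simp only [hg, dif_pos hy] at hpos ⊢
              omega
            exact Nat.find_min (hgex y hy) h1
          have hgt : v (g y - 1) < y := by
            rcases Nat.lt_or_ge (v (g y - 1)) y with hc | hc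
            · exact hc
            · exact absurd ⟨by omega, hc⟩ hprev
          have hstep := step_counter hκ (hw (g y - 1) (by omega))
          have e : g y - 1 + 1 = g y := by omega
          rw [e] at hstep
          have hs1 : v (g y) ≤ v (g y - 1) + 1 := hstep.1
          omega
      have hgmono : ∀ y y', v 0 ≤ y → y < y' → y' ≤ V → g y < g y' := by
        intro y y' hy0 hyy' hy'
        have h1 : g y ≤ g y' := by
          have h2 := hgspec y' hy'
          simp only [hg, dif_pos hy', dif_pos (show y ≤ V by omega)] at h2 ⊢
          exact Nat.find_min' _ ⟨h2.1, by omega⟩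
        rcases Nat.eq_or_lt_of_le h1 with he | hlt
        · exfalso
          have e1 : v (g y) = y := hgval y hy0 (by omega)
          have e2 : v (g y') = y' := hgval y' (by omega) hy'
          rw [he] at e1; omega
        · exact hlt
      have hcard : Fintype.card (Q × Fin h) < Fintype.card (Fin (W+1)) := by simp [hW, hH]
      obtain ⟨t, t', htne, hteq⟩ := Fintype.exists_ne_map_eq_of_card_lt
        (fun t : Fin (W+1) => ((w (g (V - W + (t:ℕ)))).1,
          (⟨v (g (V - W + (t:ℕ))) % h, Nat.mod_lt _ hh⟩ : Fin h))) hcard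
      wlog hlt : (t:ℕ) < (t':ℕ) generalizing t t'
      · exact this t' t htne.symm hteq.symm (by omega)
      have ht2 := t.2
      have ht2' := t'.2
      set y : ℕ := V - W + (t:ℕ) with hy
      set y' : ℕ := V - W + (t':ℕ) with hy'
      have hyV : y ≤ V := by omega
      have hy'V : y' ≤ V := by omega
      have hy0 : v 0 ≤ y := by omega
      have hy0' : v 0 ≤ y' := by omega
      have hyy' : y < y' := by omega
      have hstate := congrArg Prod.fst hteq
      simp only at hstate
      have hres : v (g y) % h = v (g y') % h := by
        have h2 := congrArg (fun z : Q × Fin h => (z.2 : ℕ)) hteq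
        simpa using h2
      have hvy : v (g y) = y := hgval y hy0 hyV
      have hvy' : v (g y') = y' := hgval y' hy0' hy'V
      set d : ℕ := y' - y with hd
      have hd1 : 1 ≤ d := by omega
      have hdW : d ≤ W := by omega
      have hdmod : d % h = 0 := by
        apply mod_cancel hh (y := y)
        have e : y + d = y' := by omega
        rw [e, ← hvy, ← hvy']
        exact hres.symm
      set i : ℕ := g y with hi
      set j : ℕ := g y' with hj
      have hij : i < j := hgmono y y' hy0 hyy' hy'V
      have hjm : j ≤ m := (hgspec y' hy'V).1
      clear_value i j
      have hdown : ∀ i2, i2 ≤ m - j → d ≤ (w (j + i2)).2 := by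
        intro i2 hi2
        have hb := hnbd j (j + i2) (by omega) (by omega)
        have hb2 : v j < v (j + i2) + W := hb
        show d ≤ v (j + i2)
        omega
      have hpre : PathN δ w i := path_take (by omega) hw
      have hsuf : PathN δ (fun i2 => ((w (j + i2)).1, (w (j + i2)).2 - d)) (m - j) :=
        path_shift_down d (path_drop j hw) hdown
      have hglue : w i = ((fun i2 => ((w (j + i2)).1, (w (j + i2)).2 - d)) 0) := by
        simp only [Nat.add_zero]
        refine Prod.ext hstate ?_
        show v i = v j - d
        omega
      obtain ⟨w3, hw3, h30, h3e⟩ := path_append hpre hsuf hglue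
      have e3 : j + (m - j) = m := by omega
      rw [e3] at h3e
      refine ⟨i + (m - j), w3, by omega, hw3, h30, ?_⟩
      rw [h3e]
      have hRm : OCReach δ (p,0) ((w m).1, (w m).2) := by rwa [Prod.mk.eta]
      have hvm2 : v tV < v m + W := hnbd tV m htVm (le_refl m)
      apply class_down hκ hh hph hRm
      · show W ≤ v m - d
        omega
      · show v m - d ≤ v m
        omega
      · show (v m - d) % h = v m % h
        obtain ⟨k, hk⟩ := Nat.dvd_of_mod_eq_zero hdmod
        have hk2 : d = k * h := by rw [hk]; ring
        have e4 : v m = (v m - d) + k * h := by omega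
        conv_rhs => rw [e4]
        rw [Nat.add_mul_mod_self_right]
    · -- Case B2 : bounded path, counting contradiction
      exfalso
      push_neg at hcl
      set L : ℕ := S.min' hSne with hL
      obtain ⟨tL, htLm, htLv⟩ : ∃ i, i ≤ m ∧ v i = L := by
        have h1 := S.min'_mem hSne
        obtain ⟨i, hi, hiv⟩ := Finset.mem_image.mp h1
        exact ⟨i, by have := Finset.mem_range.mp hi; omega, hiv⟩
      have hLmin : ∀ i, i ≤ m → L ≤ v i :=
        fun i hi => S.min'_le _ (Finset.mem_image.mpr ⟨i, Finset.mem_range.mpr (by omega), rfl⟩)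
      have hspan : ∀ i, i ≤ m → v i ≤ L + (3 * W - 1) := by
        intro i hi
        rcases Nat.lt_or_ge V (v 0 + W) with hc | hc
        · have hb : v 0 < v tL + W := hnbd 0 tL (by omega) htLm
          have := hVmax i hi
          omega
        · have h2 : V < 3 * W := hcl hc
          have := hVmax i hi
          have := hLmin i hi
          omega
      have hmodlt : ∀ i : Fin (m+1), v (i:ℕ) % h < h := fun i => Nat.mod_lt _ hh
      have hqlt : ∀ i : Fin (m+1), (v (i:ℕ) - L) / h < 3 * H := by
        intro i
        have hi := i.2
        have h1 : v (i:ℕ) - L ≤ 3 * W - 1 := by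
          have := hspan (i:ℕ) (by omega); omega
        have h2 : (v (i:ℕ) - L) / h ≤ (3 * W - 1)/h := Nat.div_le_div_right h1
        have h3 : (3 * W - 1)/h < 3 * H := by
          rw [Nat.div_lt_iff_lt_mul (show 0 < h by omega)]
          have e : 3 * H * h = 3 * W := by rw [hW]; ring
          omega
        omega
      set F : Fin (m+1) → Q × Fin h × Fin (3*H) :=
        fun i => ((w (i:ℕ)).1, ⟨v (i:ℕ) % h, hmodlt i⟩, ⟨(v (i:ℕ) - L) / h, hqlt i⟩) with hF
      have hcore : ∀ i j : Fin (m+1), (i:ℕ) < (j:ℕ) → F i ≠ F j := by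
        intro i j hij hFeq
        have hst : (w (i:ℕ)).1 = (w (j:ℕ)).1 := congrArg (fun z => z.1) hFeq
        have hmodeq : v (i:ℕ) % h = v (j:ℕ) % h := by
          have := congrArg (fun z : Q × Fin h × Fin (3*H) => (z.2.1 : ℕ)) hFeq
          simpa using this
        have hquot : (v (i:ℕ) - L) / h = (v (j:ℕ) - L) / h := by
          have := congrArg (fun z : Q × Fin h × Fin (3*H) => (z.2.2 : ℕ)) hFeq
          simpa using this
        have hji := j.2
        have hlt : v (i:ℕ) < v (j:ℕ) := hndr (i:ℕ) (j:ℕ) hij (by omega) hst hmodeq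
        have hdvd : h ∣ (v (j:ℕ) - v (i:ℕ)) := by
          apply Nat.dvd_of_mod_eq_zero
          apply mod_cancel hh (y := v (i:ℕ))
          have e : v (i:ℕ) + (v (j:ℕ) - v (i:ℕ)) = v (j:ℕ) := by omega
          rw [e]; exact hmodeq.symm
        have hge : v (i:ℕ) + h ≤ v (j:ℕ) := by
          have := Nat.le_of_dvd (by omega) hdvd
          omega
        have hLi : L ≤ v (i:ℕ) := hLmin _ (by omega)
        have h5 : (v (i:ℕ) - L) + h ≤ v (j:ℕ) - L := by omega
        have h6 : ((v (i:ℕ) - L) + h) / h ≤ (v (j:ℕ) - L) / h := Nat.div_le_div_right h5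
        rw [Nat.add_div_right _ (show 0 < h by omega)] at h6
        omega
      have hinj : Function.Injective F := by
        intro i j hFeq
        rcases lt_trichotomy (i:ℕ) (j:ℕ) with hc | hc | hc
        · exact absurd hFeq (hcore i j hc)
        · exact Fin.ext hc
        · exact absurd hFeq.symm (hcore j i hc)
      have hcard := Fintype.card_le_of_injective F hinj
      simp only [Fintype.card_fin, Fintype.card_prod] at hcard
      have e5 : Fintype.card Q = H := rfl
      rw [e5] at hcard
      have e6 : H * (h * (3 * H)) ≤ H * (H * (3 * H)) := by
        apply Nat.mul_le_mul_left
        apply Nat.mul_le_mul_right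
        exact hhH
      have e7 : H * (H * (3 * H)) = 3 * H^3 := by ring
      omega

lemma reach_short (hκ : ∀ a k b, δ a k b → k = -1 ∨ k = 0 ∨ k = 1)
    {h : ℕ} (hh : 1 ≤ h) (hhH : h ≤ Fintype.card Q) (hph : OCReach δ (p,0) (p,h)) :
    ∀ m : ℕ, ∀ w : ℕ → Q × ℕ, PathN δ w m → OCReach δ (p,0) (w m) →
      ∃ d, OCReach δ (p,0) d ∧ OCReachIn δ (4 * Fintype.card Q ^ 3) (w 0) d := by
  intro m
  induction m using Nat.strong_induction_on with
  | _ m ih =>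
    intro w hw hR
    by_cases hb : m ≤ 4 * Fintype.card Q ^ 3
    · exact ⟨w m, hR, m, hb, w, rfl, rfl, fun i hi => hw i hi⟩
    · have h3 : 3 * Fintype.card Q ^ 3 ≤ m := by omega
      obtain ⟨m', w', hlt, hw', h0', hR'⟩ := shorten hκ hh hhH hph hw hR h3
      obtain ⟨d', hd1, hd2⟩ := ih m' hlt w' hw' hR'
      rw [h0'] at hd2
      exact ⟨d', hd1, hd2⟩

end main
end OCAux

/-- Let `R = post*(p(0))` be infinite and strongly connected
(`R ⊆ pre*(p(0))`).  Then every configuration in `pre*(R)` can reach a configuration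
of `R` by a path of length at most `4·|Q|³`. -/
theorem stmt8 {Q : Type*} [Fintype Q] (δ : Q → ℤ → Q → Prop) (p : Q)
    (hκ : ∀ a k b, δ a k b → k = -1 ∨ k = 0 ∨ k = 1)
    (hinf : {c : Q × ℕ | OCReach δ (p, 0) c}.Infinite)
    (hback : ∀ c : Q × ℕ, OCReach δ (p, 0) c → OCReach δ c (p, 0)) :
    ∀ c : Q × ℕ, (∃ d : Q × ℕ, OCReach δ (p, 0) d ∧ OCReach δ c d) →
      ∃ d : Q × ℕ, OCReach δ (p, 0) d ∧ OCReachIn δ (4 * Fintype.card Q ^ 3) c d := by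
  intro c hc
  obtain ⟨d, hd, hcd⟩ := hc
  obtain ⟨h, hh, hhH, hph⟩ := OCAux.exists_h hκ hinf hback
  obtain ⟨m, w, hw, h0, hm⟩ := OCAux.reach_path hcd
  have hR : OCReach δ (p,0) (w m) := by rw [hm]; exact hd
  obtain ⟨d', h1, h2⟩ := OCAux.reach_short hκ hh hhH hph m w hw hR
  rw [h0] at h2
  exact ⟨d', h1, h2⟩
end

section
/- In a one-counter VASS with control state set Q, if a configuration q(ℓ) can reach some configuration with zero counter, then it can reach a configuration with zero counter by a path of length at most ℓ·|Q| + |Q|². -/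
section Aux

variable {Q : Type*} (δ : Q → ℤ → Q → Prop)

/-- A finite path of length `m`. -/
def IsPath (m : ℕ) (w : ℕ → Q × ℕ) : Prop := ∀ i < m, OCStep δ (w i) (w (i + 1))

lemma reach_path {a b : Q × ℕ} (h : OCReach δ a b) :
    ∃ m w, w 0 = a ∧ w m = b ∧ IsPath δ m w := by
  induction h with
  | refl => exact ⟨0, fun _ => a, rfl, rfl, fun i hi => absurd hi (Nat.not_lt_zero i)⟩
  | @tail c d hac hcd ih =>
    obtain ⟨m, w, h0, hm, hp⟩ := ih
    refine ⟨m + 1, fun i => if i ≤ m then w i else d, by simp [h0], by simp, ?_⟩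
    intro i hi
    rcases Nat.lt_or_ge i m with hlt | hge
    · simpa [Nat.le_of_lt hlt, Nat.succ_le_of_lt hlt] using hp i hlt
    · have him : i = m := by omega
      subst him
      simpa [hm] using hcd

/-- Discrete intermediate value theorem, upward. -/
lemma ivt_up (f : ℕ → ℕ) (a b v : ℕ) (hab : a ≤ b)
    (hstep : ∀ i, i < b → f (i + 1) ≤ f i + 1)
    (hav : f a ≤ v) (hvb : v ≤ f b) : ∃ i, a ≤ i ∧ i ≤ b ∧ f i = v := by
  set i := Nat.findGreatest (fun i => f i ≤ v) b with hidef
  have h1 : a ≤ i := Nat.le_findGreatest hab hav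
  have h2 : i ≤ b := Nat.findGreatest_le b
  have h3 : f i ≤ v := Nat.findGreatest_spec (P := fun i => f i ≤ v) hab hav
  rcases eq_or_lt_of_le h2 with he | hlt
  · have h3' : v ≤ f i := by rw [he]; exact hvb
    exact ⟨i, h1, h2, by omega⟩
  · have h4 : ¬ (f (i + 1) ≤ v) :=
      Nat.findGreatest_is_greatest (P := fun i => f i ≤ v) (n := b) (by omega) (by omega)
    have h5 := hstep i hlt
    exact ⟨i, h1, h2, by omega⟩

lemma step_kappa {Q : Type*} {δ : Q → ℤ → Q → Prop}
    (hκ : ∀ a k b, δ a k b → k = -1 ∨ k = 0 ∨ k = 1) {x y : Q × ℕ}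
    (hs : OCStep δ x y) : y.2 ≤ x.2 + 1 ∧ x.2 ≤ y.2 + 1 := by
  obtain ⟨κ, hδ, har⟩ := hs
  rcases hκ _ _ _ hδ with h | h | h <;> subst h <;> constructor <;> omega

/-- Core surgery lemma: a zero-reaching path touching a high cap `C` can be
replaced by one staying strictly below `C`. -/
lemma surgery {Q : Type*} [Fintype Q] (δ : Q → ℤ → Q → Prop)
    (hκ : ∀ a k b, δ a k b → k = -1 ∨ k = 0 ∨ k = 1)
    (q : Q) (ℓ C m : ℕ) (w : ℕ → Q × ℕ) (hℓ : 1 ≤ ℓ)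
    (hC : ℓ + Fintype.card Q ≤ C)
    (h0 : w 0 = (q, ℓ)) (hend : (w m).2 = 0) (hp : IsPath δ m w)
    (hcap : ∀ i ≤ m, (w i).2 ≤ C) (hatt : ∃ i ≤ m, (w i).2 = C) :
    ∃ m' w', w' 0 = (q, ℓ) ∧ (w' m').2 = 0 ∧ IsPath δ m' w' ∧
      ∀ i ≤ m', (w' i).2 < C := by
  classical
  have hub : ∀ i, i < m → (w (i + 1)).2 ≤ (w i).2 + 1 :=
    fun i hi => (step_kappa hκ (hp i hi)).1
  have hlb : ∀ i, i < m → (w i).2 ≤ (w (i + 1)).2 + 1 :=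
    fun i hi => (step_kappa hκ (hp i hi)).2
  have h02 : (w 0).2 = ℓ := by rw [h0]
  -- first index where the cap is attained
  obtain ⟨i₀, hi₀m, hi₀⟩ := hatt
  have hTex : ∃ i, C ≤ (w i).2 := ⟨i₀, hi₀.ge⟩
  set T := Nat.find hTex with hTdef
  have hTm : T ≤ m := le_trans (Nat.find_min' hTex hi₀.ge) hi₀m
  have hTC : (w T).2 = C := le_antisymm (hcap T hTm) (Nat.find_spec hTex)
  have hlt : ∀ i, i < T → (w i).2 < C := fun i hi => lt_of_not_ge (Nat.find_min hTex hi)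
  -- choose, for every level `c ∈ [ℓ, C]`, an index `u c ≤ T` at that level
  have hu : ∀ c : ℕ, ∃ i, i ≤ T ∧ (ℓ ≤ c → c ≤ C → (w i).2 = c) := by
    intro c
    by_cases hc : ℓ ≤ c ∧ c ≤ C
    · obtain ⟨i, _, hiT, hic⟩ := ivt_up (fun i => (w i).2) 0 T c (Nat.zero_le T)
        (fun i hi => hub i (lt_of_lt_of_le hi hTm))
        (by show (w 0).2 ≤ c; omega) (by show c ≤ (w T).2; omega)
      exact ⟨i, hiT, fun _ _ => hic⟩
    · exact ⟨0, Nat.zero_le T, fun h1 h2 => absurd ⟨h1, h2⟩ hc⟩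
  choose u huT huval using hu
  -- the main splice construction, for `c < c'` with equal states
  have main : ∀ c c' : ℕ, ℓ ≤ c → c' ≤ C → c < c' → (w (u c)).1 = (w (u c')).1 →
      ∃ m' w', w' 0 = (q, ℓ) ∧ (w' m').2 = 0 ∧ IsPath δ m' w' ∧
        ∀ i ≤ m', (w' i).2 < C := by
    intro c c' hcl hc'C hcc hst
    have huc : (w (u c)).2 = c := huval c hcl (by omega)
    have huc' : (w (u c')).2 = c' := huval c' (by omega) hc'C
    set Δ := c' - c with hΔdef
    have hΔ1 : 1 ≤ Δ := by omega
    have hjex : ∃ i, u c' ≤ i ∧ (w i).2 ≤ Δ :=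
      ⟨m, le_trans (huT c') hTm, by omega⟩
    set j := Nat.find hjex with hjdef
    obtain ⟨hj1, hj2⟩ := Nat.find_spec hjex
    rw [← hjdef] at hj1 hj2
    have hjm : j ≤ m := Nat.find_min' hjex ⟨le_trans (huT c') hTm, by omega⟩
    have hjgt : ∀ i, u c' ≤ i → i < j → Δ < (w i).2 := by
      intro i hi1 hi2
      have := Nat.find_min hjex hi2
      push_neg at this
      exact this hi1
    have huc'j : u c' < j := by
      rcases eq_or_lt_of_le hj1 with he | hlt'
      · exfalso; rw [← he] at hj2; omega
      · exact hlt'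
    have hjΔ : (w j).2 = Δ := by
      have h5 := hjgt (j - 1) (by omega) (by omega)
      have h6 := hlb (j - 1) (by omega)
      have h7 : j - 1 + 1 = j := by omega
      rw [h7] at h6
      omega
    have hge : ∀ i, u c' ≤ i → i ≤ j → Δ ≤ (w i).2 := by
      intro i h1 h2
      rcases eq_or_lt_of_le h2 with he | hlt'
      · rw [he]; omega
      · exact (hjgt i h1 hlt').le
    have hucT : u c < T := by
      rcases eq_or_lt_of_le (huT c) with he | hlt'
      · exfalso; rw [he, hTC] at huc; omega
      · exact hlt'
    set m' := u c + (j - u c') with hm'def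
    set w' : ℕ → Q × ℕ :=
      fun i => if i ≤ u c then w i
        else ((w (u c' + (i - u c))).1, (w (u c' + (i - u c))).2 - Δ) with hw'def
    have halt : ∀ i, u c ≤ i →
        w' i = ((w (u c' + (i - u c))).1, (w (u c' + (i - u c))).2 - Δ) := by
      intro i hi
      rcases eq_or_lt_of_le hi with he | hlt'
      · rw [← he]
        have e1 : u c' + (u c - u c) = u c' := by omega
        rw [hw'def]
        simp only [le_refl, if_pos, e1]
        exact Prod.ext hst (by omega)
      · rw [hw'def]; simp only [if_neg (by omega : ¬ i ≤ u c)]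
    refine ⟨m', w', ?_, ?_, ?_, ?_⟩
    · rw [hw'def]; simpa using h0
    · have e2 : u c' + (m' - u c) = j := by omega
      rw [halt m' (by omega), e2, hjΔ]
      simp
    · intro i hi
      by_cases hcase : i < u c
      · have e3 : w' i = w i := by
          rw [hw'def]; simp only [if_pos hcase.le]
        have e4 : w' (i + 1) = w (i + 1) := by
          rw [hw'def]; simp only [if_pos (Nat.succ_le_of_lt hcase)]
        rw [e3, e4]
        exact hp i (by omega)
      · push_neg at hcase
        have hpj : u c' + (i - u c) < j := by omega
        have hpm : u c' + (i - u c) < m := lt_of_lt_of_le hpj hjm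
        have e5 : u c' + (i + 1 - u c) = u c' + (i - u c) + 1 := by omega
        rw [halt i hcase, halt (i + 1) (by omega), e5]
        obtain ⟨κ, hδ, har⟩ := hp (u c' + (i - u c)) hpm
        refine ⟨κ, hδ, ?_⟩
        have hg1 : Δ ≤ (w (u c' + (i - u c))).2 := hge _ (by omega) (by omega)
        have hg2 : Δ ≤ (w (u c' + (i - u c) + 1)).2 := hge _ (by omega) (by omega)
        show (((w (u c' + (i - u c) + 1)).2 - Δ : ℕ) : ℤ) =
          (((w (u c' + (i - u c))).2 - Δ : ℕ) : ℤ) + κ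
        omega
    · intro i hi
      by_cases hcase : i ≤ u c
      · have e3 : w' i = w i := by rw [hw'def]; simp only [if_pos hcase]
        rw [e3]
        exact hlt i (by omega)
      · push_neg at hcase
        rw [halt i hcase.le]
        have hpj : u c' + (i - u c) ≤ j := by omega
        have := hcap (u c' + (i - u c)) (le_trans hpj hjm)
        show (w (u c' + (i - u c))).2 - Δ < C
        omega
  -- pigeonhole: two levels in `[ℓ, C]` with the same control state
  have hcard : Fintype.card Q < (Finset.Icc ℓ C).card := by
    rw [Nat.card_Icc]; omega
  obtain ⟨c, hc, c', hc', hne, heq⟩ :=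
    Finset.exists_ne_map_eq_of_card_lt_of_maps_to hcard
      (fun c _ => Finset.mem_univ ((w (u c)).1))
  rw [Finset.mem_Icc] at hc hc'
  rcases hne.lt_or_gt with hlt' | hlt'
  · exact main c c' hc.1 hc'.2 hlt' heq
  · exact main c' c hc'.1 hc.2 hlt' heq.symm

/-- Iterating the surgery: any zero-reaching path can be replaced by one with
all counter values below `ℓ + |Q|`. -/
lemma reduce {Q : Type*} [Fintype Q] (δ : Q → ℤ → Q → Prop)
    (hκ : ∀ a k b, δ a k b → k = -1 ∨ k = 0 ∨ k = 1)
    (q : Q) (ℓ : ℕ) (hℓ : 1 ≤ ℓ) (C : ℕ)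
    (hex : ∃ m w, w 0 = (q, ℓ) ∧ (w m).2 = 0 ∧ IsPath δ m w ∧ ∀ i ≤ m, (w i).2 < C) :
    ∃ m w, w 0 = (q, ℓ) ∧ (w m).2 = 0 ∧ IsPath δ m w ∧
      ∀ i ≤ m, (w i).2 < ℓ + Fintype.card Q := by
  induction C with
  | zero =>
    obtain ⟨m, w, h0, _, _, hcap⟩ := hex
    exact absurd (hcap 0 (Nat.zero_le m)) (by omega)
  | succ C ih =>
    obtain ⟨m, w, h0, hend, hp, hcap⟩ := hex
    by_cases hCn : C + 1 ≤ ℓ + Fintype.card Q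
    · exact ⟨m, w, h0, hend, hp, fun i hi => lt_of_lt_of_le (hcap i hi) hCn⟩
    · by_cases hatt : ∃ i ≤ m, (w i).2 = C
      · obtain ⟨m', w', h0', hend', hp', hcap'⟩ :=
          surgery δ hκ q ℓ C m w hℓ (by omega) h0 hend hp
            (fun i hi => by have := hcap i hi; omega) hatt
        exact ih ⟨m', w', h0', hend', hp', hcap'⟩
      · push_neg at hatt
        exact ih ⟨m, w, h0, hend, hp, fun i hi => by
          have h1 := hcap i hi; have h2 := hatt i hi; omega⟩

/-- Shortening a capped path until all configurations are distinct. -/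
lemma dedup {Q : Type*} [Fintype Q] (δ : Q → ℤ → Q → Prop) (q : Q) (ℓ K : ℕ)
    (hex : ∃ m w, w 0 = (q, ℓ) ∧ (w m).2 = 0 ∧ IsPath δ m w ∧ ∀ i ≤ m, (w i).2 < K) :
    ∃ m w, w 0 = (q, ℓ) ∧ (w m).2 = 0 ∧ IsPath δ m w ∧
      m + 1 ≤ Fintype.card Q * K := by
  classical
  have hex' : ∃ m, ∃ w : ℕ → Q × ℕ, w 0 = (q, ℓ) ∧ (w m).2 = 0 ∧ IsPath δ m w ∧
      ∀ i ≤ m, (w i).2 < K := hex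
  set m₀ := Nat.find hex' with hm₀def
  obtain ⟨w, h0, hend, hp, hcap⟩ := Nat.find_spec hex'
  rw [← hm₀def] at hend hp hcap
  have hdist : ∀ i j, i < j → j ≤ m₀ → w i ≠ w j := by
    intro i j hij hjm heq
    have e : i + (j - i) = j := by omega
    set w'' : ℕ → Q × ℕ := fun k => if k ≤ i then w k else w (k + (j - i)) with hw''def
    have halt2 : ∀ k, i ≤ k → w'' k = w (k + (j - i)) := by
      intro k hk
      rcases eq_or_lt_of_le hk with he | hlt'
      · rw [← he, hw''def]
        simp only [if_pos (le_refl i), e]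
        exact heq
      · rw [hw''def]; simp only [if_neg (by omega : ¬ k ≤ i)]
    have hS : ∃ w₂ : ℕ → Q × ℕ, w₂ 0 = (q, ℓ) ∧ (w₂ (m₀ - (j - i))).2 = 0 ∧
        IsPath δ (m₀ - (j - i)) w₂ ∧ ∀ k ≤ m₀ - (j - i), (w₂ k).2 < K := by
      refine ⟨w'', ?_, ?_, ?_, ?_⟩
      · rw [hw''def]; simpa using h0
      · have e2 : m₀ - (j - i) + (j - i) = m₀ := by omega
        rw [halt2 _ (by omega), e2]; exact hend
      · intro k hk
        by_cases hcase : k < i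
        · have e3 : w'' k = w k := by rw [hw''def]; simp only [if_pos hcase.le]
          have e4 : w'' (k + 1) = w (k + 1) := by
            rw [hw''def]; simp only [if_pos (Nat.succ_le_of_lt hcase)]
          rw [e3, e4]
          exact hp k (by omega)
        · push_neg at hcase
          have e5 : k + 1 + (j - i) = k + (j - i) + 1 := by omega
          rw [halt2 k hcase, halt2 (k + 1) (by omega), e5]
          exact hp (k + (j - i)) (by omega)
      · intro k hk
        by_cases hcase : k ≤ i
        · have e3 : w'' k = w k := by rw [hw''def]; simp only [if_pos hcase]
          rw [e3]; exact hcap k (by omega)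
        · push_neg at hcase
          rw [halt2 k hcase.le]
          exact hcap (k + (j - i)) (by omega)
    have hlt' : m₀ - (j - i) < m₀ := by omega
    exact Nat.find_min hex' hlt' hS
  have hwne : ∀ i j : ℕ, i ≤ m₀ → j ≤ m₀ → w i = w j → i = j := by
    intro i j hi hj heq
    rcases lt_trichotomy i j with h | h | h
    · exact absurd heq (hdist i j h hj)
    · exact h
    · exact absurd heq.symm (hdist j i h hi)
  have hK : 0 < K := by
    have := hcap 0 (Nat.zero_le m₀); omega
  set g : Fin (m₀ + 1) → Q × Fin K :=
    fun i => ((w i).1, ⟨(w i).2, hcap i (by omega)⟩) with hgdef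
  have hginj : Function.Injective g := by
    intro a b hab
    rw [hgdef] at hab
    simp only [Prod.mk.injEq, Fin.mk.injEq] at hab
    have : w a = w b := Prod.ext hab.1 hab.2
    exact Fin.ext (hwne a b (by omega) (by omega) this)
  have hcard := Fintype.card_le_of_injective g hginj
  simp only [Fintype.card_fin, Fintype.card_prod] at hcard
  exact ⟨m₀, w, h0, hend, hp, hcard⟩

end Aux

/-- In a one-counter VASS, if `q(ℓ)` can reach some configuration with
zero counter, then it can do so by a path of length at most `ℓ·|Q| + |Q|²`. -/
theorem stmt9 {Q : Type*} [Fintype Q] (δ : Q → ℤ → Q → Prop)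
    (hκ : ∀ a k b, δ a k b → k = -1 ∨ k = 0 ∨ k = 1)
    (q : Q) (ℓ : ℕ) (h : ∃ r : Q, OCReach δ (q, ℓ) (r, 0)) :
    ∃ r : Q, OCReachIn δ (ℓ * Fintype.card Q + Fintype.card Q ^ 2) (q, ℓ) (r, 0) := by
  classical
  obtain ⟨r, hr⟩ := h
  have hn : 1 ≤ Fintype.card Q := Fintype.card_pos_iff.mpr ⟨q⟩
  rcases Nat.eq_zero_or_pos ℓ with hℓ0 | hℓ1
  · subst hℓ0
    exact ⟨q, 0, Nat.zero_le _, fun _ => (q, 0), rfl, rfl,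
      fun i hi => absurd hi (Nat.not_lt_zero i)⟩
  · obtain ⟨m, w, h0, hm, hp⟩ := reach_path δ hr
    have grow : ∀ i, i ≤ m → (w i).2 ≤ ℓ + i := by
      intro i
      induction i with
      | zero => intro _; simp [h0]
      | succ k ihk =>
        intro hk
        have hs := step_kappa hκ (hp k (by omega))
        have := ihk (by omega)
        omega
    have hred := reduce δ hκ q ℓ hℓ1 (ℓ + m + 1)
      ⟨m, w, h0, by rw [hm], hp, fun i hi => by have := grow i hi; omega⟩
    obtain ⟨m', w', h0', hend', hp', hlen⟩ :=
      dedup δ q ℓ (ℓ + Fintype.card Q) hred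
    refine ⟨(w' m').1, m', ?_, w', h0', ?_, hp'⟩
    · have hq : Fintype.card Q * (ℓ + Fintype.card Q) =
        ℓ * Fintype.card Q + Fintype.card Q ^ 2 := by ring
      omega
    · exact Prod.ext rfl hend'
end

section
/- In a one-counter VASS with control state set Q, if there is a path from s(0) to t(0), then there is such a path of length at most |Q|³ + |Q|. -/
/-- Discrete intermediate value theorem, upward version. -/
lemma oc_ivt_up (f : ℕ → ℕ) {k l j : ℕ} (hkl : k ≤ l)
    (hstep : ∀ i, k ≤ i → i < l → f (i + 1) ≤ f i + 1)
    (h1 : f k ≤ j) (h2 : j ≤ f l) : ∃ i, k ≤ i ∧ i ≤ l ∧ f i = j := by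
  classical
  have hex : ∃ i, k ≤ i ∧ i ≤ l ∧ j ≤ f i := ⟨l, hkl, le_rfl, h2⟩
  obtain ⟨h3, h4, h5⟩ := Nat.find_spec hex
  rcases eq_or_lt_of_le h3 with heq | hlt
  · rw [heq] at h1; exact ⟨Nat.find hex, h3, h4, by omega⟩
  · have hprev : ¬(k ≤ Nat.find hex - 1 ∧ Nat.find hex - 1 ≤ l ∧ j ≤ f (Nat.find hex - 1)) :=
      Nat.find_min hex (by omega)
    have hf : f (Nat.find hex - 1 + 1) ≤ f (Nat.find hex - 1) + 1 :=
      hstep (Nat.find hex - 1) (by omega) (by omega)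
    have he : Nat.find hex - 1 + 1 = Nat.find hex := by omega
    rw [he] at hf
    exact ⟨Nat.find hex, h3, h4, by omega⟩

/-- Discrete intermediate value theorem, downward version. -/
lemma oc_ivt_down (f : ℕ → ℕ) {k l j : ℕ} (hkl : k ≤ l)
    (hstep : ∀ i, k ≤ i → i < l → f i ≤ f (i + 1) + 1)
    (h1 : j ≤ f k) (h2 : f l ≤ j) : ∃ i, k ≤ i ∧ i ≤ l ∧ f i = j := by
  classical
  have hex : ∃ i, k ≤ i ∧ i ≤ l ∧ f i ≤ j := ⟨l, hkl, le_rfl, h2⟩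
  obtain ⟨h3, h4, h5⟩ := Nat.find_spec hex
  rcases eq_or_lt_of_le h3 with heq | hlt
  · rw [heq] at h1; exact ⟨Nat.find hex, h3, h4, by omega⟩
  · have hprev : ¬(k ≤ Nat.find hex - 1 ∧ Nat.find hex - 1 ≤ l ∧ f (Nat.find hex - 1) ≤ j) :=
      Nat.find_min hex (by omega)
    have hf : f (Nat.find hex - 1) ≤ f (Nat.find hex - 1 + 1) + 1 :=
      hstep (Nat.find hex - 1) (by omega) (by omega)
    have he : Nat.find hex - 1 + 1 = Nat.find hex := by omega
    rw [he] at hf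
    exact ⟨Nat.find hex, h3, h4, by omega⟩

/-- From reflexive-transitive reachability, extract an indexed path. -/
lemma oc_exists_path {Q : Type*} (δ : Q → ℤ → Q → Prop) {c c' : Q × ℕ}
    (h : OCReach δ c c') :
    ∃ m, ∃ w : ℕ → Q × ℕ, w 0 = c ∧ w m = c' ∧ ∀ i < m, OCStep δ (w i) (w (i + 1)) := by
  induction h with
  | refl => exact ⟨0, fun _ => c, rfl, rfl, fun i hi => absurd hi (by omega)⟩
  | @tail b c'' hab hbc ih =>
    obtain ⟨m, w, hw0, hwm, hstep⟩ := ih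
    refine ⟨m + 1, fun k => if k ≤ m then w k else c'', ?_, ?_, ?_⟩
    · simp [hw0]
    · simp
    · intro i hi
      rcases Nat.lt_or_ge i m with h1 | h1
      · simpa [Nat.le_of_lt h1, Nat.succ_le_of_lt h1] using hstep i h1
      · have : i = m := by omega
        subst this
        simpa [hwm] using hbc

/-- In a one-counter VASS, if there is a path from `s(0)` to `t(0)`,
then there is such a path of length at most `|Q|³ + |Q|`. -/
theorem stmt10 {Q : Type*} [Fintype Q] (δ : Q → ℤ → Q → Prop)
    (hκ : ∀ a k b, δ a k b → k = -1 ∨ k = 0 ∨ k = 1)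
    (s t : Q) (h : OCReach δ (s, 0) (t, 0)) :
    OCReachIn δ (Fintype.card Q ^ 3 + Fintype.card Q) (s, 0) (t, 0) := by
  classical
  set N := Fintype.card Q ^ 2 with hN
  have hex : ∃ m, ∃ w : ℕ → Q × ℕ, w 0 = (s, 0) ∧ w m = (t, 0) ∧
      ∀ i < m, OCStep δ (w i) (w (i + 1)) := oc_exists_path δ h
  set m := Nat.find hex with hm
  obtain ⟨w, hw0, hwm, hstep⟩ := Nat.find_spec hex
  rw [← hm] at hwm hstep
  -- the counter function
  set f : ℕ → ℕ := fun i => (w i).2 with hf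
  have hfv : ∀ i, f i = (w i).2 := fun _ => rfl
  have hdiff : ∀ i < m, f (i + 1) ≤ f i + 1 ∧ f i ≤ f (i + 1) + 1 := by
    intro i hi
    obtain ⟨κ, hδ, hc⟩ := hstep i hi
    have e1 := hfv (i + 1); have e2 := hfv i
    rcases hκ _ _ _ hδ with h' | h' | h' <;> subst h' <;> omega
  -- any strictly shorter path with the same endpoints contradicts minimality
  have hmin : ∀ m' < m, ∀ w' : ℕ → Q × ℕ, w' 0 = (s, 0) → w' m' = (t, 0) →
      (∀ i < m', OCStep δ (w' i) (w' (i + 1))) → False := by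
    intro m' hm' w' h0 h1 h2
    exact Nat.find_min hex (hm ▸ hm') ⟨w', h0, h1, h2⟩
  -- Step B : counters are bounded by N along the path
  have hbound : ∀ p ≤ m, f p ≤ N := by
    intro p hp
    by_contra hcon
    push_neg at hcon
    have hf0 : f 0 = 0 := by rw [hfv, hw0]
    have hfm : f m = 0 := by rw [hfv, hwm]
    -- the last visit to level j on the way up to p
    have haex : ∀ j, j ≤ N → ∃ i, (i ≤ p ∧ f i = j) ∧ ∀ i', i < i' → i' ≤ p → f i' ≠ j := by
      intro j hj
      obtain ⟨i0, -, hip, hfi⟩ := oc_ivt_up f (j := j) (Nat.zero_le p)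
        (fun i _ hi => (hdiff i (by omega)).1) (by omega) (by omega)
      exact ⟨Nat.findGreatest (fun i => f i = j) p,
        ⟨Nat.findGreatest_le p, Nat.findGreatest_spec (P := fun i => f i = j) hip hfi⟩,
        fun i' h1 h2 => Nat.findGreatest_is_greatest (P := fun i => f i = j) h1 h2⟩
    choose! a haspec hane using haex
    have ha_gt : ∀ j, j ≤ N → ∀ i, a j < i → i ≤ p → j < f i := by
      intro j hj i h1 h2
      by_contra hle
      push_neg at hle
      obtain ⟨i', h3, h4, h5⟩ := oc_ivt_up f h2
        (fun i' _ hi' => (hdiff i' (by omega)).1) hle (by omega)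
      exact hane j hj i' (by omega) h4 h5
    -- the first visit to level j on the way down from p
    have hbex : ∀ j, j ≤ N → ∃ i, (p ≤ i ∧ i ≤ m ∧ f i = j) ∧
        ∀ i' < i, ¬(p ≤ i' ∧ i' ≤ m ∧ f i' = j) := by
      intro j hj
      have hne : ∃ i, p ≤ i ∧ i ≤ m ∧ f i = j := by
        obtain ⟨i, h1, h2, h3⟩ := oc_ivt_down f (j := j) hp
          (fun i hi1 hi2 => (hdiff i (by omega)).2) (by omega) (by omega)
        exact ⟨i, h1, h2, h3⟩
      exact ⟨Nat.find hne, Nat.find_spec hne, fun i' h => Nat.find_min hne h⟩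
    choose! b hbspec hbmin using hbex
    have hb_gt : ∀ j, j ≤ N → ∀ i, p ≤ i → i < b j → j < f i := by
      intro j hj i h1 h2
      by_contra hle
      push_neg at hle
      have hbm : b j ≤ m := (hbspec j hj).2.1
      obtain ⟨i', h3, h4, h5⟩ := oc_ivt_down f h1
        (fun i' hi1 hi2 => (hdiff i' (by omega)).2) (by omega) hle
      exact hbmin j hj i' (by omega) ⟨h3, by omega, h5⟩
    -- pigeonhole on the pairs of states at each level
    have key : ∀ j j', j < j' → j' ≤ N → (w (a j)).1 = (w (a j')).1 →
        (w (b j)).1 = (w (b j')).1 → False := by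
      intro j j' hjj' hj'N hsa hsb
      have hjN : j ≤ N := by omega
      obtain ⟨hpb', hb'm, fb'⟩ := hbspec j' hj'N
      obtain ⟨hpb, hbm, fb⟩ := hbspec j hjN
      obtain ⟨hap, fa⟩ := haspec j hjN
      obtain ⟨hap', fa'⟩ := haspec j' hj'N
      have hAA' : a j < a j' := by
        rcases Nat.lt_trichotomy (a j) (a j') with h' | h' | h'
        · exact h'
        · rw [h'] at fa; omega
        · exact absurd (ha_gt j' hj'N (a j) h' hap) (by omega)
      have hA'p : a j' < p := by
        rcases Nat.eq_or_lt_of_le hap' with e | h'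
        · rw [e] at fa'; omega
        · exact h'
      have hpB' : p < b j' := by
        rcases Nat.eq_or_lt_of_le hpb' with e | h'
        · rw [← e] at fb'; omega
        · exact h'
      have hB'B : b j' < b j := by
        rcases Nat.lt_trichotomy (b j') (b j) with h' | h' | h'
        · exact h'
        · rw [h'] at fb'; omega
        · exact absurd (hb_gt j' hj'N (b j) hpb h') (by omega)
      have hmid : ∀ i, a j' ≤ i → i ≤ b j' → j' ≤ f i := by
        intro i h1 h2
        rcases Nat.eq_or_lt_of_le h1 with e | h1'
        · rw [← e]; omega
        · rcases le_or_gt i p with h3 | h3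
          · exact le_of_lt (ha_gt j' hj'N i h1' h3)
          · rcases Nat.eq_or_lt_of_le h2 with e | h4
            · rw [e]; omega
            · exact le_of_lt (hb_gt j' hj'N i (by omega) h4)
      set A := a j with hA
      set A' := a j' with hA'2
      set B := b j with hB
      set B' := b j' with hB'2
      -- the spliced, strictly shorter path
      set w' : ℕ → Q × ℕ := fun k =>
        if k ≤ A then w k
        else if k < A + (B' - A') then
          ((w (k + (A' - A))).1, f (k + (A' - A)) - (j' - j))
        else w (k + (A' - A) + (B - B')) with hw'
      have hw'1 : ∀ k, k ≤ A → w' k = w k := by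
        intro k hk; simp only [hw']; rw [if_pos hk]
      have hw'2 : ∀ k, A < k → k < A + (B' - A') →
          w' k = ((w (k + (A' - A))).1, f (k + (A' - A)) - (j' - j)) := by
        intro k h1 h2; simp only [hw']; rw [if_neg (by omega), if_pos h2]
      have hw'3 : ∀ k, A + (B' - A') ≤ k → w' k = w (k + (A' - A) + (B - B')) := by
        intro k h1; simp only [hw']; rw [if_neg (by omega), if_neg (by omega)]
      refine hmin (m - (A' - A) - (B - B')) (by omega) w' ?_ ?_ ?_
      · rw [hw'1 0 (Nat.zero_le A), hw0]
      · rw [hw'3 _ (by omega)]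
        have e : m - (A' - A) - (B - B') + (A' - A) + (B - B') = m := by omega
        rw [e, hwm]
      · intro i hi
        rcases Nat.lt_or_ge i A with h1 | h1
        · rw [hw'1 i (by omega), hw'1 (i + 1) (by omega)]
          exact hstep i (by omega)
        rcases Nat.eq_or_lt_of_le h1 with h1 | h1
        · -- i = A : step from w A into the shifted middle part
          rw [hw'1 i (by omega), hw'2 (i + 1) (by omega) (by omega)]
          obtain ⟨κ, hδ, hc⟩ := hstep A' (by omega)
          have e : i + 1 + (A' - A) = A' + 1 := by omega
          rw [e]
          have hge : j' ≤ f (A' + 1) := hmid (A' + 1) (by omega) (by omega)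
          refine ⟨κ, ?_, ?_⟩
          · show δ (w i).1 κ (w (A' + 1)).1
            rw [← h1, hsa]; exact hδ
          · show ((f (A' + 1) - (j' - j) : ℕ) : ℤ) = ((w i).2 : ℤ) + κ
            have e1 : f (A' + 1) = (w (A' + 1)).2 := rfl
            have e2 : f i = (w i).2 := rfl
            have e3 : f A' = (w A').2 := rfl
            have e4 : f i = j := by rw [← h1]; exact fa
            omega
        rcases Nat.lt_or_ge (i + 1) (A + (B' - A')) with h2 | h2
        · -- interior of the shifted middle part
          rw [hw'2 i (by omega) (by omega), hw'2 (i + 1) (by omega) h2]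
          obtain ⟨κ, hδ, hc⟩ := hstep (i + (A' - A)) (by omega)
          have e : i + 1 + (A' - A) = i + (A' - A) + 1 := by omega
          rw [e]
          have hge1 : j' ≤ f (i + (A' - A)) := hmid _ (by omega) (by omega)
          have hge2 : j' ≤ f (i + (A' - A) + 1) := hmid _ (by omega) (by omega)
          refine ⟨κ, hδ, ?_⟩
          · show ((f (i + (A' - A) + 1) - (j' - j) : ℕ) : ℤ) =
              ((f (i + (A' - A)) - (j' - j) : ℕ) : ℤ) + κ
            have e1 : f (i + (A' - A)) = (w (i + (A' - A))).2 := rfl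
            have e2 : f (i + (A' - A) + 1) = (w (i + (A' - A) + 1)).2 := rfl
            omega
        rcases Nat.eq_or_lt_of_le h2 with h2 | h2
        · -- i + 1 = A + (B' - A') : step from the middle part into the tail
          rw [hw'2 i (by omega) (by omega), hw'3 (i + 1) (by omega)]
          obtain ⟨κ, hδ, hc⟩ := hstep (i + (A' - A)) (by omega)
          have e : i + (A' - A) + 1 = B' := by omega
          have e' : i + 1 + (A' - A) + (B - B') = B := by omega
          rw [e']
          rw [e] at hc hδ
          have hge : j' ≤ f (i + (A' - A)) := hmid _ (by omega) (by omega)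
          refine ⟨κ, ?_, ?_⟩
          · show δ (w (i + (A' - A))).1 κ (w B).1
            rw [hsb]; exact hδ
          · show ((w B).2 : ℤ) = ((f (i + (A' - A)) - (j' - j) : ℕ) : ℤ) + κ
            have e1 : f B = (w B).2 := rfl
            have e2 : f B' = (w B').2 := rfl
            have e3 : f (i + (A' - A)) = (w (i + (A' - A))).2 := rfl
            omega
        · -- the tail
          rw [hw'3 i (by omega), hw'3 (i + 1) (by omega)]
          have e : i + 1 + (A' - A) + (B - B') = i + (A' - A) + (B - B') + 1 := by omega
          rw [e]
          exact hstep (i + (A' - A) + (B - B')) (by omega)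
    -- pigeonhole
    set F : ℕ → Q × Q := fun j => ((w (a j)).1, (w (b j)).1) with hF
    have hcards : (Finset.univ : Finset (Q × Q)).card < (Finset.range (N + 1)).card := by
      rw [Finset.card_univ, Fintype.card_prod, Finset.card_range, hN]
      have : Fintype.card Q * Fintype.card Q = Fintype.card Q ^ 2 := (sq (Fintype.card Q)).symm
      omega
    obtain ⟨j₁, hj₁, j₂, hj₂, hne, heq⟩ :=
      Finset.exists_ne_map_eq_of_card_lt_of_maps_to hcards
        (fun j _ => Finset.mem_univ (F j))
    have hj₁' : j₁ ≤ N := by simpa [Nat.lt_succ_iff] using Finset.mem_range.mp hj₁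
    have hj₂' : j₂ ≤ N := by simpa [Nat.lt_succ_iff] using Finset.mem_range.mp hj₂
    simp only [hF, Prod.mk.injEq] at heq
    obtain ⟨heq1, heq2⟩ := heq
    rcases hne.lt_or_gt with hlt | hlt
    · exact key j₁ j₂ hlt hj₂' heq1 heq2
    · exact key j₂ j₁ hlt hj₁' heq1.symm heq2.symm
  -- Step A : no repeated configurations
  have hinj : ∀ i ≤ m, ∀ j ≤ m, i < j → w i ≠ w j := by
    intro i hi j hj hij hweq
    refine hmin (m - (j - i)) (by omega)
      (fun k => if k ≤ i then w k else w (k + (j - i))) (by simp [hw0]) ?_ ?_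
    · rcases le_or_gt (m - (j - i)) i with h1 | h1
      · have h2 : m = j := by omega
        have h3 : m - (j - i) = i := by omega
        simp only [h3, le_refl, if_true, hweq, h2 ▸ hwm]
      · have hne : ¬ (m - (j - i) ≤ i) := by omega
        simp only [hne, if_false]
        have : m - (j - i) + (j - i) = m := by omega
        rw [this, hwm]
    · intro k hk
      rcases Nat.lt_or_ge k i with h1 | h1
      · simpa [Nat.le_of_lt h1, Nat.succ_le_of_lt h1] using hstep k (by omega)
      · rcases Nat.eq_or_lt_of_le h1 with h2 | h2
        · subst h2
          have e2 : ¬ (i + 1 ≤ i) := by omega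
          simp only [le_refl, if_true, e2, if_false, hweq]
          have he : i + 1 + (j - i) = j + 1 := by omega
          rw [he]
          exact hstep j (by omega)
        · have e1 : ¬ (k ≤ i) := by omega
          have e2 : ¬ (k + 1 ≤ i) := by omega
          simp only [e1, e2, if_false]
          have : k + 1 + (j - i) = k + (j - i) + 1 := by omega
          rw [this]
          exact hstep (k + (j - i)) (by omega)
  -- Step C : cardinality bound
  have hcard : m + 1 ≤ Fintype.card Q * (N + 1) := by
    have hinj' : Function.Injective
        (fun i : Fin (m + 1) => ((w i).1, (⟨f i, by
          have := hbound i (by omega); omega⟩ : Fin (N + 1)))) := by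
      intro i j hij
      simp only [Prod.mk.injEq, Fin.mk.injEq] at hij
      have hw : w i = w j := Prod.ext hij.1 hij.2
      rcases Nat.lt_trichotomy (i : ℕ) (j : ℕ) with h' | h' | h'
      · exact absurd hw (hinj i (by omega) j (by omega) h')
      · exact Fin.ext h'
      · exact absurd hw.symm (hinj j (by omega) i (by omega) h')
    have := Fintype.card_le_of_injective _ hinj'
    simpa using this
  have hfin : Fintype.card Q * (N + 1) = Fintype.card Q ^ 3 + Fintype.card Q := by
    rw [hN]; ring
  exact ⟨m, by omega, w, hw0, hwm, hstep⟩
end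

section
/- Let S be a BSCC of the underlying finite Markov chain of a one-counter pVASS, and suppose the type-III region determined by S is non-empty. Then for every control state q ∈ S and every ℓ ≥ |Q|, the configuration q(ℓ) belongs to the type-III region, i.e., q(ℓ) cannot reach any configuration with zero counter. -/
/-- Edges of the underlying finite-state chain. -/
def QStep {Q : Type*} (δ : Q → ℤ → Q → Prop) (a b : Q) : Prop := ∃ k : ℤ, δ a k b

/-- `S` is a bottom strongly connected component of the underlying finite chain. -/
def IsBSCC {Q : Type*} (δ : Q → ℤ → Q → Prop) (S : Set Q) : Prop :=
  S.Nonempty ∧ (∀ a ∈ S, ∀ b ∈ S, Relation.ReflTransGen (QStep δ) a b) ∧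
    (∀ a ∈ S, ∀ b : Q, QStep δ a b → b ∈ S)

/-- The type III region determined by a BSCC `S`. -/
def typeIIIReg {Q : Type*} (δ : Q → ℤ → Q → Prop) (S : Set Q) : Set (Q × ℕ) :=
  {c | c.1 ∈ S ∧ 0 < c.2 ∧ ∀ r : Q, ¬ OCReach δ c (r, 0)}

section Aux

variable {Q : Type*} (δ : Q → ℤ → Q → Prop)

/-- Extract an indexed path from a reachability proof. -/
lemma reach_exists_path {c c' : Q × ℕ} (h : OCReach δ c c') :
    ∃ (L : ℕ) (f : ℕ → Q × ℕ), f 0 = c ∧ f L = c' ∧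
      ∀ i, i < L → OCStep δ (f i) (f (i + 1)) := by
  induction h with
  | refl => exact ⟨0, fun _ => c, rfl, rfl, fun i hi => absurd hi (Nat.not_lt_zero i)⟩
  | @tail b d _ hbd ih =>
    obtain ⟨L, f, h0, hL, hstep⟩ := ih
    refine ⟨L + 1, fun i => if i ≤ L then f i else d, by simp [h0], by simp, ?_⟩
    intro i hi
    rcases Nat.lt_or_ge i L with hiL | hiL
    · simpa [Nat.le_of_lt hiL, Nat.succ_le_of_lt hiL] using hstep i hiL
    · have hiL' : i = L := by omega
      subst hiL'
      simpa [hL] using hbd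

/-- Shift a segment of a path by `-t + s` on the counter, provided the counter stays `≥ t`. -/
lemma shift_reach (f : ℕ → Q × ℕ) (L : ℕ)
    (hstep : ∀ i, i < L → OCStep δ (f i) (f (i + 1)))
    (t s a : ℕ) :
    ∀ b, a ≤ b → b ≤ L → (∀ i, a ≤ i → i ≤ b → t ≤ (f i).2) →
      OCReach δ ((f a).1, (f a).2 - t + s) ((f b).1, (f b).2 - t + s) := by
  intro b hab
  induction b, hab using Nat.le_induction with
  | base => intro _ _; exact Relation.ReflTransGen.refl
  | succ n hn ih =>
    intro hL hlow
    have hr := ih (by omega) (fun i h1 h2 => hlow i h1 (by omega))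
    refine hr.tail ?_
    obtain ⟨κ, hδ, heq⟩ := hstep n (by omega)
    have h1 : t ≤ (f n).2 := hlow n hn (by omega)
    have h2 : t ≤ (f (n + 1)).2 := hlow (n + 1) (by omega) le_rfl
    exact ⟨κ, hδ, by omega⟩

/-- States reachable from a configuration with state in a bottom component stay in it. -/
lemma reach_states_in (S : Set Q) (hbot : ∀ a ∈ S, ∀ b : Q, QStep δ a b → b ∈ S)
    {c c' : Q × ℕ} (h : OCReach δ c c') (hc : c.1 ∈ S) : c'.1 ∈ S := by
  induction h with
  | refl => exact hc
  | tail _ hstep ih =>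
    obtain ⟨κ, hδ, _⟩ := hstep
    exact hbot _ ih _ ⟨κ, hδ⟩

/-- Lift a path of the finite chain to configurations: either we hit counter zero on the
way, or we arrive at the target state with some counter value. -/
lemma lift_chain (hκ : ∀ a k b, δ a k b → k = -1 ∨ k = 0 ∨ k = 1)
    {a b : Q} (h : Relation.ReflTransGen (QStep δ) a b) :
    ∀ n : ℕ, (∃ r : Q, OCReach δ (a, n) (r, 0)) ∨ ∃ m : ℕ, OCReach δ (a, n) (b, m) := by
  induction h with
  | refl => exact fun n => Or.inr ⟨n, Relation.ReflTransGen.refl⟩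
  | @tail b' d _ hstep ih =>
    intro n
    rcases ih n with h0 | ⟨m, hm⟩
    · exact Or.inl h0
    obtain ⟨κ, hδ⟩ := hstep
    rcases hκ _ _ _ hδ with rfl | rfl | rfl
    · rcases Nat.eq_zero_or_pos m with rfl | hm0
      · exact Or.inl ⟨b', hm⟩
      · exact Or.inr ⟨m - 1, hm.tail ⟨-1, hδ, by omega⟩⟩
    · exact Or.inr ⟨m, hm.tail ⟨0, hδ, by omega⟩⟩
    · exact Or.inr ⟨m + 1, hm.tail ⟨1, hδ, by omega⟩⟩

end Aux

/-- If the type III region determined by a BSCC `S` is non-empty, then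
for every `q ∈ S` and every `ℓ ≥ |Q|`, the configuration `q(ℓ)` belongs to it, i.e.
`q(ℓ)` cannot reach any configuration with zero counter. -/
theorem stmt12 {Q : Type*} [Fintype Q] (δ : Q → ℤ → Q → Prop) (S : Set Q)
    (hκ : ∀ a k b, δ a k b → k = -1 ∨ k = 0 ∨ k = 1)
    (hS : IsBSCC δ S)
    (hne : (typeIIIReg δ S).Nonempty) :
    ∀ q ∈ S, ∀ ℓ : ℕ, Fintype.card Q ≤ ℓ → (q, ℓ) ∈ typeIIIReg δ S := by
  obtain ⟨⟨p, k⟩, hpS, hk0, hpz⟩ := hne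
  intro q hq ℓ hℓ
  have hQpos : 0 < Fintype.card Q := Fintype.card_pos_iff.mpr ⟨q⟩
  refine ⟨hq, by omega, ?_⟩
  intro r hr
  obtain ⟨L, f, hf0, hfL, hstep⟩ := reach_exists_path δ hr
  have hf02 : (f 0).2 = ℓ := by rw [hf0]
  have hfL2 : (f L).2 = 0 := by rw [hfL]
  -- first-hit indices
  have hex : ∀ v : ℕ, ∃ i, i ≤ L ∧ (f i).2 ≤ v := fun v => ⟨L, le_rfl, by omega⟩
  classical
  set h : ℕ → ℕ := fun v => Nat.find (hex v) with hdef
  have hhL : ∀ v, h v ≤ L := fun v => (Nat.find_spec (hex v)).1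
  have hhle : ∀ v, (f (h v)).2 ≤ v := fun v => (Nat.find_spec (hex v)).2
  have hmin : ∀ v j, j < h v → v < (f j).2 := by
    intro v j hj
    by_contra hc
    exact Nat.find_min (hex v) hj ⟨le_trans hj.le (hhL v), by omega⟩
  have hval : ∀ v, v ≤ ℓ → (f (h v)).2 = v := by
    intro v hv
    have hle := hhle v
    rcases Nat.eq_zero_or_pos (h v) with h0 | hpos
    · rw [h0] at hle ⊢; omega
    · obtain ⟨j, hj⟩ : ∃ j, h v = j + 1 := ⟨h v - 1, by omega⟩
      have hprev : v < (f j).2 := hmin v j (by omega)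
      have hjL : j < L := by have := hhL v; omega
      obtain ⟨κ, hδ, heq⟩ := hstep j hjL
      rcases hκ _ _ _ hδ with rfl | rfl | rfl <;> rw [hj] at hle ⊢ <;> omega
  have hanti : ∀ v w, v ≤ w → h w ≤ h v := by
    intro v w hvw
    exact Nat.find_min' (hex w) ⟨hhL v, le_trans (hhle v) hvw⟩
  -- pigeonhole: two counter values with the same first-hit state
  obtain ⟨v1, v2, hv21, hv1ℓ, hqeq⟩ :
      ∃ v1 v2 : ℕ, v2 < v1 ∧ v1 ≤ ℓ ∧ (f (h v1)).1 = (f (h v2)).1 := by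
    have hlt : Fintype.card Q < Fintype.card (Fin (ℓ + 1)) := by
      simpa using Nat.lt_succ_of_le hℓ
    obtain ⟨x, y, hxy, heq⟩ :=
      Fintype.exists_ne_map_eq_of_card_lt (fun v : Fin (ℓ + 1) => (f (h v.1)).1) hlt
    rcases lt_or_gt_of_ne hxy with hlt' | hlt'
    · exact ⟨y.1, x.1, hlt', Nat.lt_succ_iff.mp y.isLt, heq.symm⟩
    · exact ⟨x.1, y.1, hlt', Nat.lt_succ_iff.mp x.isLt, heq⟩
  have hv2ℓ : v2 ≤ ℓ := by omega
  -- the state q' := (f (h v1)).1 is in S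
  have hreach01 : OCReach δ ((f 0).1, (f 0).2 - 0 + 0) ((f (h v1)).1, (f (h v1)).2 - 0 + 0) :=
    shift_reach δ f L hstep 0 0 0 (h v1) (Nat.zero_le _) (hhL v1) (fun i _ _ => Nat.zero_le _)
  have hq'S : (f (h v1)).1 ∈ S := by
    refine reach_states_in δ S hS.2.2 hreach01 ?_
    rw [hf0]; exact hq
  -- from state q' at any counter value, zero is reachable
  have key : ∀ m : ℕ, ∃ r' : Q, OCReach δ ((f (h v1)).1, m) (r', 0) := by
    intro m
    induction m using Nat.strong_induction_on with
    | _ m ih =>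
      rcases le_or_gt m v1 with hm1 | hm1
      · -- downshift the suffix by t = v1 - m until the first hit of t
        set t := v1 - m with ht
        have hij : h v1 ≤ h t := hanti t v1 (by omega)
        have hlow : ∀ i, h v1 ≤ i → i ≤ h t → t ≤ (f i).2 := by
          intro i _ hi2
          rcases Nat.lt_or_ge i (h t) with hlt | hge
          · exact (hmin t i hlt).le
          · have : i = h t := le_antisymm hi2 hge
            rw [this, hval t (by omega)]
        have hreach : OCReach δ ((f (h v1)).1, (f (h v1)).2 - t + 0)
            ((f (h t)).1, (f (h t)).2 - t + 0) :=
          shift_reach δ f L hstep t 0 (h v1) (h t) hij (hhL t) hlow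
        rw [hval v1 hv1ℓ, hval t (by omega)] at hreach
        have e1 : v1 - t + 0 = m := by omega
        have e2 : t - t + 0 = 0 := by omega
        rw [e1, e2] at hreach
        exact ⟨(f (h t)).1, hreach⟩
      · -- pump the decreasing cycle once
        have hij : h v1 ≤ h v2 := hanti v2 v1 hv21.le
        have hlow : ∀ i, h v1 ≤ i → i ≤ h v2 → v2 ≤ (f i).2 := by
          intro i _ hi2
          rcases Nat.lt_or_ge i (h v2) with hlt | hge
          · exact (hmin v2 i hlt).le
          · have : i = h v2 := le_antisymm hi2 hge
            rw [this, hval v2 hv2ℓ]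
        have hcyc : OCReach δ ((f (h v1)).1, (f (h v1)).2 - v2 + (m - (v1 - v2)))
            ((f (h v2)).1, (f (h v2)).2 - v2 + (m - (v1 - v2))) :=
          shift_reach δ f L hstep v2 (m - (v1 - v2)) (h v1) (h v2) hij (hhL v2) hlow
        rw [hval v1 hv1ℓ, hval v2 hv2ℓ, ← hqeq] at hcyc
        have e1 : v1 - v2 + (m - (v1 - v2)) = m := by omega
        have e2 : v2 - v2 + (m - (v1 - v2)) = m - (v1 - v2) := by omega
        rw [e1, e2] at hcyc
        obtain ⟨r', hr'⟩ := ih (m - (v1 - v2)) (by omega)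
        exact ⟨r', hcyc.trans hr'⟩
  -- lift the chain path from p to q' and conclude
  have hchain : Relation.ReflTransGen (QStep δ) p (f (h v1)).1 := hS.2.1 p hpS _ hq'S
  rcases lift_chain δ hκ hchain k with ⟨r', hr'⟩ | ⟨m, hm⟩
  · exact hpz r' hr'
  · obtain ⟨r', hr'⟩ := key m
    exact hpz r' (hm.trans hr')
end

section
/- Let (Θ_k)_{k≥0} be random times with Θ_{-1} = 0 such that P(Θ_k - Θ_{k-1} ≥ ℓ) ≤ â·ẑ^{√ℓ} for all k, ℓ (with â > 0, 0 < ẑ < 1), and let Rounds be a random variable with P(Rounds ≥ m) ≤ c̄^{m/2 - 1} for some 0 ≤ c̄ < 1. Then for every i ∈ ℕ, P(Θ_{Rounds} ≥ i) ≤ c̄^{(⌊√i⌋)/2 - 1} + √i · â · ẑ^{⌊i^{1/4}⌋}. -/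
open MeasureTheory

/-- Let `(Θ_k)` be nondecreasing random times (with `Θ_{-1} = 0`, so the
`0`-th increment is `Θ_0` itself) whose increments have sub-exponential tails
`P(Θ_k - Θ_{k-1} ≥ ℓ) ≤ â · ẑ^{√ℓ}`, and let `Rounds` satisfy
`P(Rounds ≥ m) ≤ c̄^{m/2 - 1}` for some `0 ≤ c̄ < 1`.  Then for every `i`,
`P(Θ_{Rounds} ≥ i) ≤ c̄^{⌊√i⌋/2 - 1} + √i · â · ẑ^{⌊i^{1/4}⌋}`. -/
theorem stmt18 {Ω : Type*} [MeasurableSpace Ω] (μ : Measure Ω) [IsProbabilityMeasure μ]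
    (Θ : ℕ → Ω → ℕ) (Rounds : Ω → ℕ) (ahat zhat cbar : ℝ)
    (hahat : 0 < ahat) (hz0 : 0 < zhat) (hz1 : zhat < 1)
    (hc0 : 0 ≤ cbar) (hc1 : cbar < 1)
    (hmono : ∀ (k : ℕ) (ω : Ω), Θ k ω ≤ Θ (k + 1) ω)
    (h0 : ∀ ℓ : ℕ, (μ {ω | ℓ ≤ Θ 0 ω}).toReal ≤ ahat * zhat ^ Real.sqrt ℓ)
    (hinc : ∀ k ℓ : ℕ,
      (μ {ω | Θ k ω + ℓ ≤ Θ (k + 1) ω}).toReal ≤ ahat * zhat ^ Real.sqrt ℓ)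
    (hrounds : ∀ m : ℕ, (μ {ω | m ≤ Rounds ω}).toReal ≤ cbar ^ ((m : ℝ) / 2 - 1)) :
    ∀ i : ℕ, (μ {ω | i ≤ Θ (Rounds ω) ω}).toReal ≤
      cbar ^ ((Nat.sqrt i : ℝ) / 2 - 1) +
        Real.sqrt i * ahat * zhat ^ ((⌊(i : ℝ) ^ ((1 : ℝ) / 4)⌋ : ℤ) : ℝ) := by
  intro i
  have hmonoΘ : ∀ ω : Ω, ∀ a b : ℕ, a ≤ b → Θ a ω ≤ Θ b ω := by
    intro ω a b hab
    exact monotone_nat_of_le_succ (fun k => hmono k ω) hab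
  rcases Nat.eq_zero_or_pos i with hi | hi
  · subst hi
    have h1 := hrounds 0
    have e2 : {ω | (0:ℕ) ≤ Rounds ω} = Set.univ := by ext ω; simp
    rw [e2] at h1
    have e1 : {ω | (0:ℕ) ≤ Θ (Rounds ω) ω} = Set.univ := by ext ω; simp
    rw [e1]
    simp only [Nat.cast_zero] at h1 ⊢
    have : Real.sqrt 0 * ahat * zhat ^ ((⌊(0:ℝ) ^ ((1:ℝ)/4)⌋ : ℤ) : ℝ) = 0 := by
      simp [Real.sqrt_zero]
    rw [Nat.sqrt_zero]
    push_cast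
    linarith [h1]
  -- main case i ≥ 1
  set s := Nat.sqrt i with hs
  have hs1 : 1 ≤ s := Nat.sqrt_pos.mpr hi
  set ℓ := (i-1)/s + 1 with hℓdef
  have hℓ1 : 1 ≤ ℓ := Nat.le_add_left _ _
  have hmod : (i-1) % s < s := Nat.mod_lt _ hs1
  have hdm : s * ((i-1)/s) + (i-1) % s = i - 1 := Nat.div_add_mod _ _
  have hsl : i ≤ s * ℓ := by
    rw [hℓdef, Nat.mul_add, Nat.mul_one]; omega
  have hsl' : s * (ℓ - 1) < i := by
    have h1 : ℓ - 1 = (i-1)/s := by omega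
    rw [h1]; omega
  set A := {ω : Ω | s ≤ Rounds ω} with hA
  set B : ℕ → Set Ω := fun k => match k with
    | 0 => {ω | ℓ ≤ Θ 0 ω}
    | k+1 => {ω | Θ k ω + ℓ ≤ Θ (k+1) ω} with hB
  have hsub : {ω | i ≤ Θ (Rounds ω) ω} ⊆ A ∪ ⋃ k ∈ Finset.range s, B k := by
    intro ω hω
    simp only [Set.mem_setOf_eq] at hω
    by_cases hAc : s ≤ Rounds ω
    · exact Or.inl hAc
    · right
      push_neg at hAc
      by_contra hBc
      simp only [Set.mem_iUnion, Finset.mem_range, not_exists] at hBc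
      have hbound : ∀ k, k < s → Θ k ω ≤ (k+1) * (ℓ - 1) := by
        intro k
        induction k with
        | zero =>
          intro h
          have h1 := hBc 0 h
          simp only [hB, Set.mem_setOf_eq] at h1
          omega
        | succ k ih =>
          intro h
          have h1 := ih (lt_trans (Nat.lt_succ_self k) h)
          have h2 := hBc (k+1) h
          simp only [hB, Set.mem_setOf_eq] at h2
          have h3 : (k+1+1) * (ℓ-1) = (k+1)*(ℓ-1) + (ℓ-1) := by ring
          omega
      have h4 := hbound (s-1) (by omega)
      have h5 : Θ (Rounds ω) ω ≤ Θ (s-1) ω := hmonoΘ ω _ _ (by omega)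
      have h6 : (s-1+1) = s := by omega
      rw [h6] at h4
      omega
  have key : μ {ω | i ≤ Θ (Rounds ω) ω} ≤ μ A + ∑ k ∈ Finset.range s, μ (B k) :=
    (measure_mono hsub).trans ((measure_union_le _ _).trans
      (add_le_add_right (measure_biUnion_finset_le _ _) _))
  have hfin : μ A + ∑ k ∈ Finset.range s, μ (B k) ≠ ⊤ := by
    refine ENNReal.add_ne_top.mpr ⟨measure_ne_top _ _, ?_⟩
    exact (ENNReal.sum_lt_top.mpr (fun k _ => measure_lt_top _ _)).ne
  have hle : (μ {ω | i ≤ Θ (Rounds ω) ω}).toReal ≤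
      (μ A).toReal + ∑ k ∈ Finset.range s, (μ (B k)).toReal := by
    have h := ENNReal.toReal_mono hfin key
    rwa [ENNReal.toReal_add (measure_ne_top _ _)
      (ENNReal.sum_lt_top.mpr (fun k _ => measure_lt_top _ _)).ne,
      ENNReal.toReal_sum (fun k _ => measure_ne_top _ _)] at h
  refine hle.trans (add_le_add (hrounds s) ?_)
  -- bound the sum
  have hBk : ∀ k ∈ Finset.range s, (μ (B k)).toReal ≤ ahat * zhat ^ Real.sqrt ℓ := by
    intro k _
    match k with
    | 0 => exact h0 ℓ
    | k+1 => exact hinc k ℓ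
  have hsum : ∑ k ∈ Finset.range s, (μ (B k)).toReal ≤ (s:ℝ) * (ahat * zhat ^ Real.sqrt ℓ) := by
    calc ∑ k ∈ Finset.range s, (μ (B k)).toReal
        ≤ ∑ k ∈ Finset.range s, (ahat * zhat ^ Real.sqrt ℓ) := Finset.sum_le_sum hBk
      _ = (s:ℝ) * (ahat * zhat ^ Real.sqrt ℓ) := by
          rw [Finset.sum_const, Finset.card_range, nsmul_eq_mul]
  refine hsum.trans ?_
  -- now: s * (ahat * z^√ℓ) ≤ √i * ahat * z^f
  have hi1 : (1:ℝ) ≤ (i:ℝ) := by exact_mod_cast hi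
  have hsqpos : 0 < Real.sqrt i := Real.sqrt_pos.mpr (by linarith)
  have h_s_le : (s:ℝ) ≤ Real.sqrt i := Real.nat_sqrt_le_real_sqrt
  have hℓge : Real.sqrt i ≤ (ℓ:ℝ) := by
    have h1 : (i:ℝ) ≤ (s:ℝ) * (ℓ:ℝ) := by exact_mod_cast hsl
    have h2 : (s:ℝ) * (ℓ:ℝ) ≤ Real.sqrt i * (ℓ:ℝ) :=
      mul_le_mul_of_nonneg_right h_s_le (by positivity)
    have h3 : Real.sqrt i * Real.sqrt i ≤ Real.sqrt i * (ℓ:ℝ) := by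
      rw [Real.mul_self_sqrt (by positivity)]; linarith
    exact le_of_mul_le_mul_left h3 hsqpos
  have hfourth : (i:ℝ) ^ ((1:ℝ)/4) = Real.sqrt (Real.sqrt i) := by
    rw [Real.sqrt_eq_rpow, Real.sqrt_eq_rpow, ← Real.rpow_mul (Nat.cast_nonneg i)]
    norm_num
  have hfl : ((⌊(i:ℝ) ^ ((1:ℝ)/4)⌋ : ℤ) : ℝ) ≤ Real.sqrt ℓ := by
    refine (Int.floor_le _).trans ?_
    rw [hfourth]
    exact Real.sqrt_le_sqrt hℓge
  have h_z : zhat ^ Real.sqrt ℓ ≤ zhat ^ ((⌊(i:ℝ) ^ ((1:ℝ)/4)⌋ : ℤ) : ℝ) :=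
    Real.rpow_le_rpow_of_exponent_ge hz0 hz1.le hfl
  have hfinal : (s:ℝ) * (ahat * zhat ^ Real.sqrt ℓ) ≤
      Real.sqrt i * (ahat * zhat ^ ((⌊(i:ℝ) ^ ((1:ℝ)/4)⌋ : ℤ) : ℝ)) := by
    refine mul_le_mul h_s_le (mul_le_mul_of_nonneg_left h_z hahat.le) (by positivity)
      (Real.sqrt_nonneg _)
  linarith [hfinal]
end

section
/- Let G be a stochastic matrix over a finite set S with a single BSCC, arising as the termination-distribution matrix of a one-counter system: G[p,q] > 0 iff there is a zero-to-zero path witnessing a counter decrease from p to q. Formally, write p →ᵏ q if there is a path in the one-counter system from p(n) to q(n+k) for some n ≥ 0; assume for all p, q ∈ S: (∃k < 0: p →ᵏ q) iff there is a nonempty path from p to q in the graph of G. If B ⊆ S is a BSCC of the graph of G and the relation →ᵏ is closed under composition (p →ᵏ q and q →ˡ r imply p →^{k+l} r), then every p ∈ S can reach every q ∈ B in the graph of G; hence G has exactly one BSCC when the one-counter system is strongly connected. -/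
/-- `B` is a bottom strongly connected component of the (total) graph `G`:
nonempty, strongly connected, and closed under edges. -/
def IsBSCCOf {S : Type*} (G : S → S → Prop) (B : Set S) : Prop :=
  B.Nonempty ∧ (∀ a ∈ B, ∀ b ∈ B, Relation.ReflTransGen G a b) ∧
    (∀ a ∈ B, ∀ b : S, G a b → b ∈ B)

/-- Let `G` be the graph of the termination-distribution matrix of a
strongly connected one-counter system over `S` (with every state having an outgoing
`G`-edge, since the matrix is stochastic), and write `p →ᵏ q` (`arrow p k q`) for the
existence of a path from `p(n)` to `q(n+k)` for some `n ≥ 0`.  Assume: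
`(∃ k < 0, p →ᵏ q) ↔` there is a nonempty `G`-path from `p` to `q`; `→ᵏ` composes
additively; and for all `p, q` there is some `k` with `p →ᵏ q` (strong connectivity).
Then for every BSCC `B` of `G`, every `p ∈ S` reaches every `q ∈ B` in the graph of
`G`; hence `B` is the unique BSCC of `G`. -/
theorem stmt19 {S : Type*} [Fintype S]
    (G : S → S → Prop) (arrow : S → ℤ → S → Prop) (B : Set S)
    (htotal : ∀ a : S, ∃ b : S, G a b)
    (hiff : ∀ p q : S, (∃ k : ℤ, k < 0 ∧ arrow p k q) ↔ Relation.TransGen G p q)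
    (hcomp : ∀ (p q r : S) (k l : ℤ), arrow p k q → arrow q l r → arrow p (k + l) r)
    (hconn : ∀ p q : S, ∃ k : ℤ, arrow p k q)
    (hB : IsBSCCOf G B) :
    (∀ p : S, ∀ q ∈ B, Relation.ReflTransGen G p q) ∧
      ∀ B' : Set S, IsBSCCOf G B' → B' = B := by
  obtain ⟨hne, hsc, hcl⟩ := hB
  have hreach : ∀ p : S, ∀ q ∈ B, Relation.ReflTransGen G p q := by
    intro p q hq
    -- q has a negative cycle
    obtain ⟨b, hb⟩ := htotal q
    have hbB : b ∈ B := hcl q hq b hb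
    have hqq : Relation.TransGen G q q :=
      Relation.TransGen.head' hb (hsc b hbB q hq)
    obtain ⟨l, hl, hal⟩ := (hiff q q).mpr hqq
    obtain ⟨k, hak⟩ := hconn p q
    -- pump
    have hpump : ∀ n : ℕ, arrow p (k + n * l) q := by
      intro n
      induction n with
      | zero => simpa using hak
      | succ n ih =>
        have := hcomp p q q (k + n * l) l ih hal
        have heq : k + n * l + l = k + (n + 1 : ℕ) * l := by push_cast; ring
        rwa [heq] at this
    set n : ℕ := (k + 1).toNat with hn
    have hneg : k + n * l < 0 := by
      have hl1 : l ≤ -1 := by omega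
      have h1 : (n : ℤ) * l ≤ (n : ℤ) * (-1) :=
        mul_le_mul_of_nonneg_left hl1 (Int.natCast_nonneg n)
      have h2 : k + 1 ≤ (n : ℤ) ∨ (n : ℤ) = 0 ∧ k + 1 ≤ 0 := by
        rcases le_or_gt (k + 1) 0 with h | h
        · right; exact ⟨by simp [hn, Int.toNat_eq_zero.mpr h], h⟩
        · left; simp [hn, Int.toNat_of_nonneg h.le]
      rcases h2 with h | ⟨h0, h1'⟩
      · nlinarith
      · rw [h0] at h1 ⊢; nlinarith
    have : Relation.TransGen G p q := (hiff p q).mp ⟨k + n * l, hneg, hpump n⟩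
    exact this.to_reflTransGen
  refine ⟨hreach, ?_⟩
  intro B' ⟨hne', hsc', hcl'⟩
  obtain ⟨b', hb'⟩ := hne'
  obtain ⟨q0, hq0⟩ := hne
  have key : ∀ y : S, Relation.ReflTransGen G b' y → y ∈ B' := by
    intro y h
    induction h with
    | refl => exact hb'
    | tail _ hstep ih => exact hcl' _ ih _ hstep
  have hq0B' : q0 ∈ B' := key q0 (hreach b' q0 hq0)
  ext x
  constructor
  · intro hx
    have h := hsc' q0 hq0B' x hx
    clear hx
    induction h with
    | refl => exact hq0
    | tail _ hstep ih => exact hcl _ ih _ hstep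
  · intro hx
    exact key x (hreach b' x hx)
end
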